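/- arXiv:0903.4764 — 7 statements merged into one kernel-verified Lean document; each statement's English description precedes it below -/
import Mathlib

section
/- The additive subgroup of V generated by a locally finite irreducible root system is a free abelian group; that is, if (Δ, V) is a locally finite irreducible root system over ℚ, then the subgroup ⟨Δ⟩ of (V, +) generated by Δ is free. -/
open Submodule

/-- The reflection `σ_α(x) = x - ⟨x,α⟩α` where `⟨x,α⟩ = 2(x,α)/(α,α)`. -/
def rroot {V : Type*} [AddCommGroup V] [Module ℚ V]
    (B : LinearMap.BilinForm ℚ V) (α x : V) : V :=
  x - (2 * B x α / B α α) • α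

/-- A locally extended affine root system (axioms (A1)–(A4)). -/
def IsLEARS {V : Type*} [AddCommGroup V] [Module ℚ V]
    (B : LinearMap.BilinForm ℚ V) (R : Set V) : Prop :=
  (∀ α ∈ R, B α α ≠ 0) ∧
  Submodule.span ℚ R = ⊤ ∧
  (∀ α ∈ R, ∀ β ∈ R, ∃ n : ℤ, 2 * B α β / B β β = (n : ℚ)) ∧
  (∀ α ∈ R, ∀ β ∈ R, rroot B α β ∈ R) ∧
  (∀ R₁ R₂ : Set V, R = R₁ ∪ R₂ → (∀ x ∈ R₁, ∀ y ∈ R₂, B x y = 0) →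
    R₁ = ∅ ∨ R₂ = ∅)

section PartA

variable {M : Type*} [AddCommGroup M] {ι : Type*}

/-- A submodule of a free `ℤ`-module is free (arbitrary rank). -/
theorem submodule_free_of_basis (b : Module.Basis ι ℤ M) (N : Submodule ℤ M) :
    Module.Free ℤ ↥N := by
  obtain ⟨_linOrd, _wf⟩ := exists_wellOrder ι
  classical
  -- the submodule of elements of N supported on indices ≤ i
  let Nle : ι → Submodule ℤ M := fun i =>
    N ⊓ (⨅ j ∈ {j : ι | i < j}, LinearMap.ker ((Finsupp.lapply j).comp b.repr.toLinearMap))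
  have mem_Nle : ∀ i x, x ∈ Nle i ↔ x ∈ N ∧ ∀ j, i < j → b.repr x j = 0 := by
    intro i x
    simp [Nle, Submodule.mem_iInf]
  -- the ideal of i-th coordinates of such elements
  let I : ι → Submodule ℤ ℤ := fun i =>
    Submodule.map ((Finsupp.lapply i).comp b.repr.toLinearMap) (Nle i)
  have hprin : ∀ i, (I i).IsPrincipal := fun i =>
    IsPrincipalIdealRing.principal (I i)
  let d : ι → ℤ := fun i => (hprin i).generator
  have hd_mem : ∀ i, d i ∈ I i := fun i =>
    @Submodule.IsPrincipal.generator_mem ℤ ℤ _ _ _ (I i) (hprin i)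
  -- choose witnesses
  have hex : ∀ i : {i // I i ≠ ⊥}, ∃ x, x ∈ Nle i.1 ∧ b.repr x i.1 = d i.1 := by
    rintro ⟨i, hi⟩
    obtain ⟨x, hx, hx2⟩ := hd_mem i
    exact ⟨x, hx, hx2⟩
  choose xf hxf1 hxf2 using hex
  have hdne : ∀ i : {i // I i ≠ ⊥}, d i.1 ≠ 0 := by
    rintro ⟨i, hi⟩ h0
    exact hi ((Submodule.IsPrincipal.eq_bot_iff_generator_eq_zero _).2 h0)
  set Sp : Submodule ℤ M := Submodule.span ℤ (Set.range xf) with hSp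
  -- spanning, by well-founded induction
  have key : ∀ i : ι, ∀ x, x ∈ Nle i → x ∈ Sp := by
    intro i
    induction i using IsWellFounded.induction (r := ((· < ·) : ι → ι → Prop)) with
    | _ i IH =>
      -- auxiliary: the case where the i-th coordinate vanishes
      have aux : ∀ x, x ∈ Nle i → b.repr x i = 0 → x ∈ Sp := by
        intro x hx h0
        rcases eq_or_ne ((b.repr x).support) ∅ with hs | hs
        · have : b.repr x = 0 := Finsupp.support_eq_empty.1 hs
          have : x = 0 := by
            have := congrArg b.repr.symm this
            simpa using this
          simp [this]
        · have hne : ((b.repr x).support).Nonempty := Finset.nonempty_iff_ne_empty.2 hs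
          set m := ((b.repr x).support).max' hne with hm
          have hmem : m ∈ (b.repr x).support := Finset.max'_mem _ hne
          have hmi : m < i := by
            rcases lt_or_ge m i with h | h
            · exact h
            · rcases eq_or_lt_of_le h with rfl | h
              · exact absurd h0 (Finsupp.mem_support_iff.1 hmem)
              · exact absurd ((mem_Nle i x).1 hx).2 (by
                  intro hall
                  exact Finsupp.mem_support_iff.1 hmem (hall m h))
          refine IH m hmi x ?_
          rw [mem_Nle]
          refine ⟨((mem_Nle i x).1 hx).1, fun j hj => ?_⟩
          by_contra hne'
          exact absurd (Finset.le_max' _ j (Finsupp.mem_support_iff.2 hne')) (not_le.2 hj)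
      intro x hx
      rcases eq_or_ne (b.repr x i) 0 with h0 | h0
      · exact aux x hx h0
      · have hci : b.repr x i ∈ I i := ⟨x, hx, rfl⟩
        have hIne : I i ≠ ⊥ := by
          intro hbot
          rw [hbot, Submodule.mem_bot] at hci
          exact h0 hci
        set i' : {i : ι // I i ≠ ⊥} := ⟨i, hIne⟩ with hi'
        haveI := hprin i
        obtain ⟨a, ha⟩ := (Submodule.IsPrincipal.mem_iff_eq_smul_generator (I i)).1 hci
        set y : M := x - a • xf i' with hy
        have hx' : y ∈ Nle i :=
          Submodule.sub_mem _ hx (Submodule.smul_mem _ _ (hxf1 i'))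
        have h0' : b.repr y i = 0 := by
          rw [hy, map_sub, LinearEquiv.map_smul]
          simp only [Finsupp.sub_apply, Finsupp.smul_apply]
          have h2 : (b.repr (xf i')) i = d i := hxf2 i'
          rw [h2, ha]
          exact sub_eq_zero.2 rfl
        have hmem' : y ∈ Sp := aux y hx' h0'
        have hxfSp : xf i' ∈ Sp := Submodule.subset_span ⟨i', rfl⟩
        have hxeq : x = y + a • xf i' := by rw [hy]; abel
        rw [hxeq]
        exact Submodule.add_mem _ hmem' (Submodule.smul_mem _ _ hxfSp)
  -- all of N is in the span
  have keyN : ∀ x ∈ N, x ∈ Sp := by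
    intro x hx
    rcases eq_or_ne ((b.repr x).support) ∅ with hs | hs
    · have : b.repr x = 0 := Finsupp.support_eq_empty.1 hs
      have : x = 0 := by
        have := congrArg b.repr.symm this
        simpa using this
      simp [this]
    · have hne : ((b.repr x).support).Nonempty := Finset.nonempty_iff_ne_empty.2 hs
      refine key (((b.repr x).support).max' hne) x ?_
      rw [mem_Nle]
      refine ⟨hx, fun j hj => ?_⟩
      by_contra hne'
      exact absurd (Finset.le_max' _ j (Finsupp.mem_support_iff.2 hne')) (not_le.2 hj)
  -- linear independence of the chosen family
  have hind : LinearIndependent ℤ xf := by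
    rw [linearIndependent_iff']
    intro s g hsum
    induction s using Finset.strongInduction with
    | _ s IHs =>
      rcases Finset.eq_empty_or_nonempty s with rfl | hne
      · intro i hi
        exact absurd hi (Finset.notMem_empty i)
      · set m := s.max' hne with hm
        have hmmem : m ∈ s := Finset.max'_mem _ hne
        set φ : M →ₗ[ℤ] ℤ := (Finsupp.lapply (↑m : ι)).comp b.repr.toLinearMap with hφ
        have hgm : g m = 0 := by
          have happ := congrArg (fun z => φ z) hsum
          simp only [map_sum, map_smul, map_zero] at happ
          rw [Finset.sum_eq_single m] at happ
          · have h1 : φ (xf m) = d ↑m := hxf2 m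
            rw [h1] at happ
            rcases smul_eq_zero.1 happ with h | h
            · exact h
            · exact absurd h (hdne m)
          · intro i hi hine
            have hilt : (↑i : ι) < ↑m := by
              have hle : i ≤ m := Finset.le_max' s i hi
              exact lt_of_le_of_ne hle (by simpa [Subtype.ext_iff] using hine)
            have hz2 : φ (xf i) = 0 := ((mem_Nle i.1 (xf i)).1 (hxf1 i)).2 ↑m hilt
            rw [hz2, smul_zero]
          · intro h
            exact absurd hmmem h
        rw [← Finset.add_sum_erase s _ hmmem, hgm] at hsum
        simp only [zero_smul, zero_add] at hsum
        intro i hi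
        rcases eq_or_ne i m with rfl | hine
        · exact hgm
        · exact IHs (s.erase m) (Finset.erase_ssubset hmmem) hsum i
            (Finset.mem_erase.2 ⟨hine, hi⟩)
  -- N equals the span of the chosen family
  have hNSp : N = Sp := by
    apply le_antisymm
    · intro x hx
      exact keyN x hx
    · rw [hSp]
      apply Submodule.span_le.2
      rintro z ⟨i, rfl⟩
      exact ((mem_Nle i.1 (xf i)).1 (hxf1 i)).1
  rw [hNSp, hSp]
  exact Module.Free.of_basis (Module.Basis.span hind)

end PartA

section RootLemmas

variable {V : Type*} [AddCommGroup V] [Module ℚ V]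

/-- The orbit of `α₀` under all reflections in roots of `Δ`. -/
inductive RootOrbit (B : LinearMap.BilinForm ℚ V) (Δ : Set V) (α₀ : V) : V → Prop
  | base : RootOrbit B Δ α₀ α₀
  | refl (γ : V) (hγ : γ ∈ Δ) (u : V) : RootOrbit B Δ α₀ u → RootOrbit B Δ α₀ (rroot B γ u)

variable (B : LinearMap.BilinForm ℚ V)
  (hsym : ∀ x y : V, B x y = B y x)
  (hposdef : ∀ x : V, x ≠ 0 → 0 < B x x)

include hposdef in
theorem B_psd : ∀ z : V, 0 ≤ B z z := by
  intro z
  rcases eq_or_ne z 0 with rfl | hz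
  · simp
  · exact le_of_lt (hposdef z hz)

include hsym hposdef in
/-- Cauchy–Schwarz for a positive semidefinite symmetric form over `ℚ`. -/
theorem B_cs (x s : V) (hs : B s s ≠ 0) : (B x s) ^ 2 ≤ B x x * B s s := by
  have hBss : 0 < B s s := lt_of_le_of_ne (B_psd B hposdef s) (Ne.symm hs)
  set t : ℚ := B x s / B s s with ht
  have h := B_psd B hposdef (x - t • s)
  have hexp : B (x - t • s) (x - t • s)
      = B x x - 2 * t * B x s + t ^ 2 * B s s := by
    simp only [map_sub, map_smul, LinearMap.sub_apply, LinearMap.smul_apply, smul_eq_mul]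
    rw [hsym s x]
    ring
  rw [hexp, ht] at h
  have h2 : 0 ≤ B x x - (B x s) ^ 2 / B s s := by
    have : B x x - 2 * (B x s / B s s) * B x s + (B x s / B s s) ^ 2 * B s s
        = B x x - (B x s) ^ 2 / B s s := by
      field_simp
      ring
    rwa [this] at h
  have := mul_le_mul_of_nonneg_right (sub_nonneg.1 h2 : (B x s) ^ 2 / B s s ≤ B x x) hBss.le
  rwa [div_mul_cancel₀ _ hs] at this

include hsym in
theorem rroot_len {γ : V} (hγγ : B γ γ ≠ 0) (u : V) :
    B (rroot B γ u) (rroot B γ u) = B u u := by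
  unfold rroot
  simp only [map_sub, map_smul, LinearMap.sub_apply, LinearMap.smul_apply, smul_eq_mul]
  rw [hsym γ u]
  field_simp
  ring

include hsym hposdef in
/-- Main length comparison: any root has squared length at least a quarter of that of `α₀`. -/
theorem root_length_bound {Δ : Set V} (hΔ : IsLEARS B Δ) {α₀ : V} (hα₀ : α₀ ∈ Δ) :
    ∀ β ∈ Δ, B α₀ α₀ ≤ 4 * B β β := by
  obtain ⟨hA1, hspan, hA2, hA3, hA4⟩ := hΔ
  set O : Set V := {v | RootOrbit B Δ α₀ v} with hO
  have horb_mem : ∀ v ∈ O, v ∈ Δ := by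
    intro v hv
    induction hv with
    | base => exact hα₀
    | refl γ hγ u _ ih => exact hA3 γ hγ u ih
  have horb_len : ∀ v ∈ O, B v v = B α₀ α₀ := by
    intro v hv
    induction hv with
    | base => rfl
    | refl γ hγ u hu ih => rw [rroot_len B hsym (hA1 γ hγ) u]; exact ih
  -- any root non-orthogonal to the orbit lies in its span
  have hclaim : ∀ γ ∈ Δ, ∀ u ∈ O, B γ u ≠ 0 → γ ∈ Submodule.span ℚ O := by
    intro γ hγ u hu hne
    have hrr : rroot B γ u ∈ O := RootOrbit.refl γ hγ u hu
    have hc : u - rroot B γ u = (2 * B u γ / B γ γ) • γ := by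
      unfold rroot; abel
    have hcne : (2 * B u γ / B γ γ) ≠ 0 := by
      rw [hsym u γ]
      exact div_ne_zero (by simpa using hne) (hA1 γ hγ)
    have hγeq : γ = (2 * B u γ / B γ γ)⁻¹ • (u - rroot B γ u) := by
      rw [hc, smul_smul, inv_mul_cancel₀ hcne, one_smul]
    rw [hγeq]
    exact Submodule.smul_mem _ _ (Submodule.sub_mem _ (Submodule.subset_span hu)
      (Submodule.subset_span hrr))
  -- irreducibility: every root is non-orthogonal to some orbit element
  have hnonorth : ∀ β ∈ Δ, ∃ u ∈ O, B β u ≠ 0 := by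
    set Δ₂ : Set V := {γ ∈ Δ | ∀ u ∈ O, B γ u = 0} with hΔ₂
    have hsplit := hA4 (Δ \ Δ₂) Δ₂ (by rw [Set.diff_union_of_subset (Set.sep_subset _ _)])
      (by
        intro x hx y hy
        have hxspan : x ∈ Submodule.span ℚ O := by
          have hxΔ := hx.1
          have : ¬(∀ u ∈ O, B x u = 0) := fun hall => hx.2 ⟨hxΔ, hall⟩
          push_neg at this
          obtain ⟨u, hu, hne⟩ := this
          exact hclaim x hxΔ u hu hne
        have hyO : ∀ w ∈ Submodule.span ℚ O, B y w = 0 := by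
          intro w hw
          induction hw using Submodule.span_induction with
          | mem z hz => exact hy.2 z hz
          | zero => simp
          | add a b _ _ iha ihb => simp [iha, ihb]
          | smul c a _ iha => simp [iha]
        rw [hsym x y]
        exact hyO x hxspan)
    have hΔ₂emp : Δ₂ = ∅ := by
      rcases hsplit with h | h
      · exfalso
        have hα₀Δ₂ : α₀ ∈ Δ₂ := by
          by_contra hc
          have : α₀ ∈ Δ \ Δ₂ := ⟨hα₀, hc⟩
          rw [h] at this
          exact this
        exact hA1 α₀ hα₀ (hα₀Δ₂.2 α₀ RootOrbit.base)
      · exact h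
    intro β hβ
    by_contra hc
    push_neg at hc
    have : β ∈ Δ₂ := ⟨hβ, hc⟩
    rw [hΔ₂emp] at this
    exact this
  -- length comparison
  intro β hβ
  obtain ⟨u, hu, hne⟩ := hnonorth β hβ
  have huΔ : u ∈ Δ := horb_mem u hu
  have huu : B u u = B α₀ α₀ := horb_len u hu
  obtain ⟨n, hn⟩ := hA2 β hβ u huΔ
  obtain ⟨m, hm⟩ := hA2 u huΔ β hβ
  have hβ0 : β ≠ 0 := by
    intro h; exact hA1 β hβ (by simp [h])
  have hu0 : u ≠ 0 := by
    intro h; exact hA1 u huΔ (by simp [h])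
  have hBβ : 0 < B β β := hposdef β hβ0
  have hBu : 0 < B u u := hposdef u hu0
  have hnq : (n : ℚ) * B u u = 2 * B β u := by
    field_simp at hn
    linarith [hn]
  have hmq : (m : ℚ) * B β β = 2 * B β u := by
    rw [hsym u β] at hm
    field_simp at hm
    linarith [hm]
  have hcs : (B β u) ^ 2 ≤ B β β * B u u := B_cs B hsym hposdef β u (ne_of_gt hBu)
  have htne : B β u ≠ 0 := hne
  -- n*m ∈ [1,4]
  have hnm4 : (n : ℚ) * (m : ℚ) ≤ 4 := by
    have key : ((n : ℚ) * m) * (B u u * B β β) = 4 * (B β u) ^ 2 := by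
      calc ((n : ℚ) * m) * (B u u * B β β) = ((n:ℚ) * B u u) * ((m:ℚ) * B β β) := by ring
        _ = (2 * B β u) * (2 * B β u) := by rw [hnq, hmq]
        _ = 4 * (B β u) ^ 2 := by ring
    have hP : 0 < B u u * B β β := mul_pos hBu hBβ
    have hstep : ((n : ℚ) * m) * (B u u * B β β) ≤ 4 * (B u u * B β β) := by
      rw [key]; nlinarith [hcs]
    exact le_of_mul_le_mul_right hstep hP
  have hnmpos : 0 < (n : ℚ) * (m : ℚ) := by
    have key : ((n : ℚ) * m) * (B u u * B β β) = 4 * (B β u) ^ 2 := by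
      calc ((n : ℚ) * m) * (B u u * B β β) = ((n:ℚ) * B u u) * ((m:ℚ) * B β β) := by ring
        _ = (2 * B β u) * (2 * B β u) := by rw [hnq, hmq]
        _ = 4 * (B β u) ^ 2 := by ring
    have h4 : 0 < 4 * (B β u) ^ 2 := by positivity
    nlinarith [mul_pos hBu hBβ]
  have hn0 : (n : ℚ) ≠ 0 := by
    intro h
    rw [h, zero_mul] at hnq
    exact htne (by linarith)
  have hm0 : (m : ℚ) ≠ 0 := by
    intro h
    rw [h, zero_mul] at hmq
    exact htne (by linarith)
  -- |m| ≤ 4 and |n| ≥ 1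
  have hnZ : n ≠ 0 := fun h => hn0 (by simp [h])
  have hmZ : m ≠ 0 := fun h => hm0 (by simp [h])
  have habsn : (1 : ℚ) ≤ |(n : ℚ)| := by
    have := Int.one_le_abs hnZ
    exact_mod_cast this
  have habsm : |(m : ℚ)| ≤ 4 := by
    have h1 : |(m : ℚ)| ≤ |(n : ℚ)| * |(m : ℚ)| :=
      le_mul_of_one_le_left (abs_nonneg _) habsn
    have h2 : |(n : ℚ)| * |(m : ℚ)| = |(n : ℚ) * (m : ℚ)| := (abs_mul _ _).symm
    have h3 : |(n : ℚ) * (m : ℚ)| = (n : ℚ) * m := abs_of_pos hnmpos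
    calc |(m : ℚ)| ≤ |(n : ℚ)| * |(m : ℚ)| := h1
      _ = (n : ℚ) * m := by rw [h2, h3]
      _ ≤ 4 := hnm4
  -- conclude
  have heq : (n : ℚ) * B u u = (m : ℚ) * B β β := by rw [hnq, hmq]
  have final : B u u ≤ 4 * B β β := by
    calc B u u ≤ |(n : ℚ)| * B u u := le_mul_of_one_le_left hBu.le habsn
      _ = |(n : ℚ) * B u u| := by rw [abs_mul, abs_of_pos hBu]
      _ = |(m : ℚ) * B β β| := by rw [heq]
      _ = |(m : ℚ)| * B β β := by rw [abs_mul, abs_of_pos hBβ]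
      _ ≤ 4 * B β β := mul_le_mul_of_nonneg_right habsm hBβ.le
  rw [← huu]
  exact final

end RootLemmas

section MainAux

universe u
variable {V : Type u} [AddCommGroup V] [Module ℚ V]

theorem free_aux
    (B : LinearMap.BilinForm ℚ V)
    (hsym : ∀ x y : V, B x y = B y x)
    (hposdef : ∀ x : V, x ≠ 0 → 0 < B x x)
    (Δ : Set V)
    (hA1 : ∀ α ∈ Δ, B α α ≠ 0)
    (hspan : Submodule.span ℚ Δ = ⊤)
    (hint0 : ∀ α ∈ Δ, ∀ β ∈ Δ, ∃ n : ℤ, 2 * B α β / B β β = (n : ℚ))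
    (hpsd : ∀ z : V, 0 ≤ B z z)
    (hcs : ∀ x s : V, B s s ≠ 0 → (B x s) ^ 2 ≤ B x x * B s s)
    (α₀ : V) (hα₀ : α₀ ∈ Δ)
    (hlen : ∀ s ∈ Δ, B α₀ α₀ ≤ 4 * B s s) :
    Module.Free ℤ ↥(AddSubgroup.closure Δ) := by
  classical
  set G := AddSubgroup.closure Δ with hG
  have hα₀ne : α₀ ≠ 0 := fun h => hA1 α₀ hα₀ (by simp [h])
  have hα₀pos : 0 < B α₀ α₀ := hposdef α₀ hα₀ne
  -- integrality of pairings on the closure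
  have hint : ∀ x ∈ G, ∀ s ∈ Δ, ∃ n : ℤ, 2 * B x s / B s s = (n : ℚ) := by
    intro x hx
    induction hx using AddSubgroup.closure_induction with
    | mem z hz => exact hint0 z hz
    | zero => intro s hs; exact ⟨0, by simp⟩
    | add a b ha hb iha ihb =>
        intro s hs
        obtain ⟨n, hn⟩ := iha s hs
        obtain ⟨m, hm⟩ := ihb s hs
        refine ⟨n + m, ?_⟩
        rw [map_add, LinearMap.add_apply]
        push_cast
        rw [← hn, ← hm]
        ring
    | neg a ha iha =>
        intro s hs
        obtain ⟨n, hn⟩ := iha s hs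
        refine ⟨-n, ?_⟩
        rw [map_neg, LinearMap.neg_apply]
        push_cast
        rw [← hn]
        ring
  set X := ↥Δ with hX
  have hexN : ∀ (x : ↥G) (s : X), ∃ n : ℤ, 2 * B (x : V) (s : V) / B (s : V) (s : V) = (n : ℚ) :=
    fun x s => hint x x.2 s s.2
  choose Nf hNf using hexN
  -- additivity
  have hNf_add : ∀ x y s, Nf (x + y) s = Nf x s + Nf y s := by
    intro x y s
    have hss : B (s : V) (s : V) ≠ 0 := hA1 s s.2
    apply (Int.cast_injective (α := ℚ))
    push_cast
    rw [← hNf (x + y) s, ← hNf x s, ← hNf y s]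
    have hco : ((x + y : ↥G) : V) = (x : V) + (y : V) := rfl
    rw [hco, map_add, LinearMap.add_apply]
    ring
  -- boundedness of the pairing function
  have hbound : ∀ x : ↥G, (Set.range (Nf x)).Finite := by
    intro x
    set C : ℤ := ⌈(16 * B (x : V) (x : V)) / B α₀ α₀⌉ with hC
    have hsub : Set.range (Nf x) ⊆ Set.Icc (-C) C := by
      rintro n ⟨s, rfl⟩
      have hss : B (s : V) (s : V) ≠ 0 := hA1 s s.2
      have hspos : 0 < B (s : V) (s : V) := lt_of_le_of_ne (hpsd _) (Ne.symm hss)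
      have hq := hNf x s
      have hcs' := hcs (x : V) (s : V) hss
      have hx0 : 0 ≤ B (x : V) (x : V) := hpsd _
      have hq2 : ((Nf x s : ℚ)) ^ 2 = 4 * (B (x : V) (s : V)) ^ 2 / (B (s : V) (s : V)) ^ 2 := by
        rw [← hq, div_pow]
        ring
      have h1 : ((Nf x s : ℚ)) ^ 2 ≤ 4 * B (x : V) (x : V) / B (s : V) (s : V) := by
        rw [hq2]
        rw [div_le_div_iff₀ (by positivity) hspos]
        nlinarith [hcs', hspos]
      have h2 : 4 * B (x : V) (x : V) / B (s : V) (s : V)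
          ≤ 16 * B (x : V) (x : V) / B α₀ α₀ := by
        rw [div_le_div_iff₀ hspos hα₀pos]
        nlinarith [hlen s s.2, hx0]
      have h3 : ((Nf x s : ℚ)) ^ 2 ≤ (C : ℚ) := le_trans (h1.trans h2) (Int.le_ceil _)
      have h4 : (Nf x s) ^ 2 ≤ C := by exact_mod_cast h3
      have h5 : |Nf x s| ≤ C := by
        rcases eq_or_ne (Nf x s) 0 with h | h
        · rw [h]
          simpa using le_trans (by positivity : (0:ℤ) ≤ (Nf x s)^2) h4
        · have h6 : (1 : ℤ) ≤ |Nf x s| := Int.one_le_abs h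
          calc |Nf x s| ≤ |Nf x s| ^ 2 := le_self_pow₀ h6 (by norm_num)
            _ = (Nf x s) ^ 2 := sq_abs _
            _ ≤ C := h4
      exact Set.mem_Icc.2 (abs_le.1 h5)
    exact (Set.finite_Icc _ _).subset hsub
  -- ultrafilter extension
  have hUex : ∀ (x : ↥G) (u : Ultrafilter X), ∃ v : ℤ, (Nf x) ⁻¹' {v} ∈ u := by
    intro x u
    have hmem : Set.range (Nf x) ∈ Ultrafilter.map (Nf x) u := by
      rw [Ultrafilter.mem_map, Set.preimage_range]
      exact Filter.univ_mem
    obtain ⟨v, hvr, hpure⟩ := Ultrafilter.eq_pure_of_finite_mem (hbound x) hmem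
    refine ⟨v, ?_⟩
    have hv : {v} ∈ Ultrafilter.map (Nf x) u := by
      rw [hpure]
      exact Ultrafilter.mem_pure.2 rfl
    rwa [Ultrafilter.mem_map] at hv
  choose ef hef using hUex
  have hef_unique : ∀ x u v, (Nf x) ⁻¹' {v} ∈ u → ef x u = v := by
    intro x u v hv
    have hmem := Filter.inter_mem (hef x u) hv
    obtain ⟨s, hs1, hs2⟩ := Ultrafilter.nonempty_of_mem hmem
    simp only [Set.mem_preimage, Set.mem_singleton_iff] at hs1 hs2
    rw [← hs1, ← hs2]
  have hef_add : ∀ x y u, ef (x + y) u = ef x u + ef y u := by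
    intro x y u
    have hmem := Filter.inter_mem (Filter.inter_mem (hef x u) (hef y u)) (hef (x + y) u)
    obtain ⟨s, ⟨hs1, hs2⟩, hs3⟩ := Ultrafilter.nonempty_of_mem hmem
    simp only [Set.mem_preimage, Set.mem_singleton_iff] at hs1 hs2 hs3
    rw [← hs3, hNf_add, hs1, hs2]
  have hef_zero : ∀ u, ef 0 u = 0 := by
    intro u
    have := hef_add 0 0 u
    rw [add_zero] at this
    linarith [this]
  -- local constancy
  have hlc : ∀ x : ↥G, IsLocallyConstant (fun u : Ultrafilter X => ef x u) := by
    intro x S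
    have hpre : (fun u : Ultrafilter X => ef x u) ⁻¹' S
        = ⋃ v ∈ S, {u : Ultrafilter X | (Nf x) ⁻¹' {v} ∈ u} := by
      ext u
      simp only [Set.mem_preimage, Set.mem_iUnion, Set.mem_setOf_eq]
      constructor
      · intro h
        exact ⟨ef x u, h, hef x u⟩
      · rintro ⟨v, hvS, hv⟩
        rw [hef_unique x u v hv]
        exact hvS
    rw [hpre]
    exact isOpen_biUnion (fun v _ => ultrafilter_isOpen_basic _)
  -- the embedding
  let Ψ : ↥G →+ LocallyConstant (Ultrafilter X) ℤ :=
    { toFun := fun x => ⟨fun u => ef x u, hlc x⟩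
      map_zero' := by
        apply LocallyConstant.ext
        intro u
        exact hef_zero u
      map_add' := fun x y => by
        apply LocallyConstant.ext
        intro u
        exact hef_add x y u }
  have hker : ∀ z : ↥G, Ψ z = 0 → z = 0 := by
    intro z hz
    have hN0 : ∀ s : X, Nf z s = 0 := by
      intro s
      have hzu : ef z (pure s) = 0 := by
        have h := congrArg (fun f : LocallyConstant (Ultrafilter X) ℤ => f (pure s)) hz
        simpa [Ψ] using h
      have hp : ef z (pure s) = Nf z s := by
        apply hef_unique
        rw [Ultrafilter.mem_pure]
        exact rfl
      rw [hp] at hzu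
      exact hzu
    have hB0 : ∀ s : X, B (z : V) (s : V) = 0 := by
      intro s
      have h := hNf z s
      rw [hN0 s] at h
      have h2 : 2 * B (z : V) (s : V) / B (s : V) (s : V) = 0 := by exact_mod_cast h
      rcases div_eq_zero_iff.1 h2 with h' | h'
      · linarith
      · exact absurd h' (hA1 s s.2)
    have hz0 : (z : V) = 0 := by
      by_contra hne
      have hall : ∀ w ∈ Submodule.span ℚ Δ, B (z : V) w = 0 := by
        intro w hw
        induction hw using Submodule.span_induction with
        | mem a ha => exact hB0 ⟨a, ha⟩
        | zero => simp
        | add a b _ _ iha ihb => simp [iha, ihb]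
        | smul c a _ iha => simp [iha]
      have hzz : B (z : V) (z : V) = 0 := hall _ (by rw [hspan]; trivial)
      exact absurd hzz (ne_of_gt (hposdef _ hne))
    exact Subtype.ext hz0
  have hinj : Function.Injective Ψ := (injective_iff_map_eq_zero Ψ).2 hker
  -- Nöbeling's theorem
  haveI hfreeLC : Module.Free ℤ (LocallyConstant (Ultrafilter X) ℤ) :=
    LocallyConstant.freeOfProfinite (Profinite.of (Ultrafilter X))
  let bLC := Module.Free.chooseBasis ℤ (LocallyConstant (Ultrafilter X) ℤ)
  let L : ↥G →ₗ[ℤ] LocallyConstant (Ultrafilter X) ℤ := Ψ.toIntLinearMap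
  have hLinj : Function.Injective L := hinj
  haveI hNfree : Module.Free ℤ ↥(LinearMap.range L) :=
    submodule_free_of_basis bLC (LinearMap.range L)
  exact Module.Free.of_equiv (LinearEquiv.ofInjective L hLinj).symm

end MainAux

/-- The additive subgroup generated by a locally finite irreducible root system is free. -/
theorem addSubgroup_closure_of_locally_finite_irreducible_root_system_free
    {V : Type*} [AddCommGroup V] [Module ℚ V]
    (B : LinearMap.BilinForm ℚ V)
    (hsym : ∀ x y : V, B x y = B y x)
    (hposdef : ∀ x : V, x ≠ 0 → 0 < B x x)
    (Δ : Set V) (hΔ : IsLEARS B Δ) :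
    Module.Free ℤ ↥(AddSubgroup.closure Δ) := by
  classical
  rcases Set.eq_empty_or_nonempty Δ with rfl | ⟨α₀, hα₀⟩
  · rw [AddSubgroup.closure_empty]
    haveI : Subsingleton ↥(⊥ : AddSubgroup V) := by
      constructor
      rintro ⟨a, ha⟩ ⟨b, hb⟩
      simp only [AddSubgroup.mem_bot] at ha hb
      simp [Subtype.ext_iff, ha, hb]
    infer_instance
  · obtain ⟨hA1, hspan, hA2, hA3, hA4⟩ := id hΔ
    exact free_aux B hsym hposdef Δ hA1 hspan hA2 (B_psd B hposdef)
      (fun x s hs => B_cs B hsym hposdef x s hs) α₀ hα₀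
      (root_length_bound B hsym hposdef hΔ hα₀)
end

section
/- A LEARS is a directed union of extended affine root systems of finite rank: if (R, V) is a LEARS, then there is a family of subsets of R, directed under inclusion and with union equal to R, such that each member R′ of the family spans a finite-dimensional subspace W of V, satisfies axioms (A1)–(A4) in W with the restricted form, and generates a free abelian subgroup ⟨R′⟩ of finite rank. -/
open Submodule

section Aux

open Relation

variable {V : Type*} [AddCommGroup V] [Module ℚ V]

/-- The "linkage" relation on a subset `s`. -/
def lrel (B : LinearMap.BilinForm ℚ V) (s : Set V) (x y : V) : Prop :=
  x ∈ s ∧ y ∈ s ∧ B x y ≠ 0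

theorem lrel_mono (B : LinearMap.BilinForm ℚ V) {s t : Set V} (hst : s ⊆ t) :
    ∀ x y, lrel B s x y → lrel B t x y :=
  fun _ _ h => ⟨hst h.1, hst h.2.1, h.2.2⟩

/-- Any two roots of a LEARS are linked by a chain. -/
theorem lears_conn (B : LinearMap.BilinForm ℚ V) (R : Set V) (hR : IsLEARS B R)
    {α₀ β : V} (hα : α₀ ∈ R) (hβ : β ∈ R) :
    ReflTransGen (lrel B R) α₀ β := by
  by_contra hc
  rcases hR.2.2.2.2 {γ ∈ R | ReflTransGen (lrel B R) α₀ γ}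
      {γ ∈ R | ¬ ReflTransGen (lrel B R) α₀ γ}
      (by ext γ; simp only [Set.mem_union, Set.mem_setOf_eq]; tauto)
      (fun x hx y hy => by
        by_contra hxy
        exact hy.2 (hx.2.tail ⟨hx.1, hy.1, hxy⟩)) with h | h
  · exact (Set.eq_empty_iff_forall_notMem.mp h α₀) ⟨hα, ReflTransGen.refl⟩
  · exact (Set.eq_empty_iff_forall_notMem.mp h β) ⟨hβ, hc⟩

/-- A chain can be realized inside a finite set. -/
theorem lears_chain (B : LinearMap.BilinForm ℚ V) (R : Set V)
    {α₀ β : V} (h : ReflTransGen (lrel B R) α₀ β) (hα : α₀ ∈ R) :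
    ∃ G : Finset V, ↑G ⊆ R ∧ α₀ ∈ G ∧ β ∈ G ∧
      ∀ γ ∈ G, ReflTransGen (lrel B (↑G : Set V)) α₀ γ := by
  classical
  induction h with
  | refl =>
    refine ⟨{α₀}, by simpa using hα, Finset.mem_singleton_self _, Finset.mem_singleton_self _, fun γ hγ => ?_⟩
    simp only [Finset.mem_singleton] at hγ
    subst hγ; exact ReflTransGen.refl
  | @tail b c hab hbc ih =>
    obtain ⟨G, hGR, hα₀, hb, hconn⟩ := ih
    have hsub : (↑G : Set V) ⊆ ↑(insert c G) := by
      intro x hx; simp only [Finset.coe_insert, Set.mem_insert_iff]; exact Or.inr hx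
    refine ⟨insert c G, ?_, Finset.mem_insert_of_mem hα₀, Finset.mem_insert_self _ _,
      fun γ hγ => ?_⟩
    · intro x hx
      simp only [Finset.coe_insert, Set.mem_insert_iff] at hx
      rcases hx with rfl | hx
      · exact hbc.2.1
      · exact hGR hx
    rcases Finset.mem_insert.mp hγ with rfl | hγ
    · exact ((ReflTransGen.mono (lrel_mono B hsub) _ _ (hconn b hb))).tail
        ⟨hsub hb, Finset.mem_insert_self _ _, hbc.2.2⟩
    · exact ReflTransGen.mono (lrel_mono B hsub) _ _ (hconn γ hγ)

/-- A linear equivalence between the coercion of a `ℤ`-submodule to an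
additive subgroup and the submodule itself. -/
def subEquiv (P : Submodule ℤ V) : ↥P ≃ₗ[ℤ] ↥(P.toAddSubgroup) :=
  AddEquiv.toIntLinearEquiv
    { toFun := fun x => ⟨x.1, x.2⟩
      invFun := fun x => ⟨x.1, x.2⟩
      left_inv := fun _ => rfl
      right_inv := fun _ => rfl
      map_add' := fun _ _ => rfl }

/-- The main construction: the piece of `R` cut out by the subgroup generated by a
finite, chain-connected subset `G` of `R` is an EARS of finite rank. -/
theorem memberGood (B : LinearMap.BilinForm ℚ V)
    (hsym : ∀ x y : V, B x y = B y x)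
    (R : Set V) (hR : IsLEARS B R)
    (G : Finset V) (hGR : ↑G ⊆ R)
    (hconn : ∀ γ ∈ G, ∀ δ ∈ G, ReflTransGen (lrel B (↑G : Set V)) γ δ) :
    FiniteDimensional ℚ ↥(span ℚ (R ∩ ↑(AddSubgroup.closure (↑G : Set V)))) ∧
    IsLEARS (B.restrict (span ℚ (R ∩ ↑(AddSubgroup.closure (↑G : Set V)))))
      {x : ↥(span ℚ (R ∩ ↑(AddSubgroup.closure (↑G : Set V)))) |
        (x : V) ∈ R ∩ ↑(AddSubgroup.closure (↑G : Set V))} ∧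
    Module.Free ℤ ↥(AddSubgroup.closure (R ∩ ↑(AddSubgroup.closure (↑G : Set V)))) ∧
    Module.Finite ℤ ↥(AddSubgroup.closure (R ∩ ↑(AddSubgroup.closure (↑G : Set V)))) := by
  set R' : Set V := R ∩ ↑(AddSubgroup.closure (↑G : Set V)) with hR'def
  set W : Submodule ℚ V := span ℚ R' with hWdef
  have hR'R : R' ⊆ R := Set.inter_subset_left
  -- the subgroup generated by G sits inside the ℚ-span of G
  have hclq : (↑(AddSubgroup.closure (↑G : Set V)) : Set V) ⊆
      ↑(span ℚ (↑G : Set V)) := by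
    intro x hx
    exact (AddSubgroup.closure_le ((span ℚ (↑G : Set V)).toAddSubgroup)).mpr
      subset_span hx
  -- finite dimensionality
  have hWle : W ≤ span ℚ (↑G : Set V) :=
    span_le.mpr (fun x hx => hclq hx.2)
  haveI hfinG : FiniteDimensional ℚ (span ℚ (↑G : Set V)) :=
    FiniteDimensional.span_of_finite ℚ (G.finite_toSet)
  haveI hWfin : FiniteDimensional ℚ ↥W :=
    Submodule.finiteDimensional_of_le hWle
  -- the subgroup generated by R' sits in span ℤ G
  have hR'z : R' ⊆ ↑(span ℤ ((↑G : Set V))) := by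
    intro x hx
    have h2 : x ∈ AddSubgroup.closure ((↑G : Set V)) := hx.2
    rw [← Submodule.span_int_eq_addSubgroupClosure] at h2
    simpa using h2
  -- freeness and finiteness of the subgroup generated by R'
  set p : Submodule ℤ V := span ℤ R' with hpdef
  set N : Submodule ℤ V := span ℤ ((↑G : Set V)) with hNdef
  have hpN : p ≤ N := span_le.mpr hR'z
  haveI hNfin : Module.Finite ℤ ↥N :=
    Module.Finite.iff_fg.mpr (Submodule.fg_span G.finite_toSet)
  haveI : IsNoetherian ℤ ↥N := isNoetherian_of_isNoetherianRing_of_finite ℤ ↥N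
  have hpfg : p.FG := by
    have h1 : (p.comap N.subtype).FG := IsNoetherian.noetherian _
    have h2 : Submodule.map N.subtype (p.comap N.subtype) = p := by
      rw [Submodule.map_comap_subtype]
      exact inf_eq_right.mpr hpN
    exact h2 ▸ h1.map N.subtype
  haveI hpfin : Module.Finite ℤ ↥p := Module.Finite.iff_fg.mpr hpfg
  haveI : IsAddTorsionFree V := IsAddTorsionFree.of_module_rat V
  haveI : NoZeroSMulDivisors ℤ V := inferInstance
  haveI hpfree : Module.Free ℤ ↥p := Module.free_of_finite_type_torsion_free'
  have hcleq : AddSubgroup.closure R' = p.toAddSubgroup :=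
    (Submodule.span_int_eq_addSubgroupClosure R').symm
  have hfree : Module.Free ℤ ↥(AddSubgroup.closure R') := by
    rw [hcleq]
    exact Module.Free.of_equiv (subEquiv p)
  have hfinite : Module.Finite ℤ ↥(AddSubgroup.closure R') := by
    rw [hcleq]
    exact Module.Finite.equiv (subEquiv p)
  refine ⟨hWfin, ?_, hfree, hfinite⟩
  -- now the LEARS axioms for the restriction
  set S : Set ↥W := {x : ↥W | (x : V) ∈ R'} with hSdef
  have hBr : ∀ x y : ↥W, (B.restrict W) x y = B (x : V) (y : V) := fun x y => rfl
  refine ⟨?_, ?_, ?_, ?_, ?_⟩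
  · -- (A1)
    intro α hα
    rw [hBr]
    exact hR.1 ↑α (hR'R hα)
  · -- spanning
    apply Submodule.map_injective_of_injective W.injective_subtype
    rw [Submodule.map_span, Submodule.map_top, Submodule.range_subtype]
    have himg : W.subtype '' S = R' := by
      ext v
      constructor
      · rintro ⟨x, hx, rfl⟩; exact hx
      · intro hv; exact ⟨⟨v, subset_span hv⟩, hv, rfl⟩
    rw [himg]
  · -- (A2)
    intro α hα β hβ
    obtain ⟨n, hn⟩ := hR.2.2.1 ↑α (hR'R hα) ↑β (hR'R hβ)
    exact ⟨n, by rw [hBr, hBr]; exact hn⟩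
  · -- (A3)
    intro α hα β hβ
    have hco : ((rroot (B.restrict W) α β : ↥W) : V) = rroot B (↑α) (↑β) := by
      simp only [rroot, hBr, Submodule.coe_sub, SetLike.val_smul]
    show ((rroot (B.restrict W) α β : ↥W) : V) ∈ R'
    rw [hco]
    constructor
    · exact hR.2.2.2.1 ↑α (hR'R hα) ↑β (hR'R hβ)
    · obtain ⟨n, hn⟩ := hR.2.2.1 ↑β (hR'R hβ) ↑α (hR'R hα)
      have : rroot B (↑α) (↑β) = (↑β : V) - n • (↑α : V) := by
        rw [rroot, hn, Int.cast_smul_eq_zsmul]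
      rw [this]
      exact AddSubgroup.sub_mem _ hβ.2 (AddSubgroup.zsmul_mem _ hα.2 n)
  · -- (A4) : irreducibility
    intro S₁ S₂ hunion horth
    set T₁ : Set V := (W.subtype) '' S₁ with hT₁def
    set T₂ : Set V := (W.subtype) '' S₂ with hT₂def
    have hT₁R' : T₁ ⊆ R' := by
      rintro v ⟨x, hx, rfl⟩
      have : x ∈ S := hunion ▸ Set.mem_union_left _ hx
      exact this
    have hT₂R' : T₂ ⊆ R' := by
      rintro v ⟨x, hx, rfl⟩
      have : x ∈ S := hunion ▸ Set.mem_union_right _ hx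
      exact this
    have horth' : ∀ x ∈ T₁, ∀ y ∈ T₂, B x y = 0 := by
      rintro x ⟨a, ha, rfl⟩ y ⟨b, hb, rfl⟩
      exact horth a ha b hb
    have hcov : ∀ v ∈ R', v ∈ T₁ ∨ v ∈ T₂ := by
      intro v hv
      have hvW : v ∈ W := subset_span hv
      have : (⟨v, hvW⟩ : ↥W) ∈ S₁ ∪ S₂ := hunion ▸ hv
      rcases this with h | h
      · exact Or.inl ⟨⟨v, hvW⟩, h, rfl⟩
      · exact Or.inr ⟨⟨v, hvW⟩, h, rfl⟩
    -- a chain stays on one side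
    have pres : ∀ (Ta Tb : Set V), (∀ x ∈ Ta, ∀ y ∈ Tb, B x y = 0) →
        (∀ v ∈ R', v ∈ Ta ∨ v ∈ Tb) →
        ∀ {γ δ : V}, Relation.ReflTransGen (lrel B (↑G : Set V)) γ δ →
          γ ∈ Ta → δ ∈ Ta := by
      intro Ta Tb ho hc γ δ h hγ
      induction h with
      | refl => exact hγ
      | @tail b c hab hbc ih =>
        have hbTa : b ∈ Ta := ih
        have hcR' : c ∈ R' := ⟨hGR hbc.2.1, AddSubgroup.subset_closure hbc.2.1⟩
        rcases hc c hcR' with h | h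
        · exact h
        · exact absurd (ho b hbTa c h) hbc.2.2
    -- orthogonality kills elements of the other side
    have kill : ∀ (Ta Tb : Set V), (∀ x ∈ Ta, ∀ y ∈ Tb, B x y = 0) →
        (∀ g ∈ G, g ∈ Ta) → ∀ γ ∈ Tb, γ ∈ R' → False := by
      intro Ta Tb ho hg γ hγ hγR'
      have hker : AddSubgroup.closure (↑G : Set V) ≤
          (LinearMap.ker (B γ)).toAddSubgroup := by
        apply (AddSubgroup.closure_le _).mpr
        intro g hgG
        simp only [SetLike.mem_coe, Submodule.mem_toAddSubgroup, LinearMap.mem_ker]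
        rw [hsym]
        exact ho g (hg g hgG) γ hγ
      have : B γ γ = 0 := hker hγR'.2
      exact hR.1 γ (hR'R hγR') this
    -- conclude
    rcases Set.eq_empty_or_nonempty S₁ with h1 | h1
    · exact Or.inl h1
    rcases Set.eq_empty_or_nonempty S₂ with h2 | h2
    · exact Or.inr h2
    exfalso
    obtain ⟨s₁, hs₁⟩ := h1
    obtain ⟨s₂, hs₂⟩ := h2
    have hs₁T : (↑s₁ : V) ∈ T₁ := ⟨s₁, hs₁, rfl⟩
    have hs₂T : (↑s₂ : V) ∈ T₂ := ⟨s₂, hs₂, rfl⟩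
    have horth'' : ∀ x ∈ T₂, ∀ y ∈ T₁, B x y = 0 := by
      intro x hx y hy
      rw [hsym]
      exact horth' y hy x hx
    have hcov' : ∀ v ∈ R', v ∈ T₂ ∨ v ∈ T₁ := fun v hv => (hcov v hv).symm
    rcases Set.eq_empty_or_nonempty (↑G : Set V) with hG | ⟨g₀, hg₀⟩
    · -- G empty: closure is trivial, so R' consists of 0 only, impossible
      have : (↑s₁ : V) ∈ R' := hT₁R' hs₁T
      have h0 : (↑s₁ : V) = 0 := by
        have := this.2
        rw [hG] at this
        simpa [AddSubgroup.closure_empty] using this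
      exact hR.1 ↑s₁ (hR'R (hT₁R' hs₁T)) (by rw [h0]; simp)
    · have hg₀R' : g₀ ∈ R' := ⟨hGR hg₀, AddSubgroup.subset_closure hg₀⟩
      rcases hcov g₀ hg₀R' with hside | hside
      · have hgT : ∀ g ∈ G, g ∈ T₁ := fun g hg =>
          pres T₁ T₂ horth' hcov (hconn g₀ hg₀ g hg) hside
        exact kill T₁ T₂ horth' hgT ↑s₂ hs₂T (hT₂R' hs₂T)
      · have hgT : ∀ g ∈ G, g ∈ T₂ := fun g hg =>
          pres T₂ T₁ horth'' hcov' (hconn g₀ hg₀ g hg) hside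
        exact kill T₂ T₁ horth'' hgT ↑s₁ hs₁T (hT₁R' hs₁T)

end Aux

/-- A LEARS is a directed union of extended affine root systems of finite rank. -/
theorem LEARS_is_directed_union_of_finite_rank_EARS
    {V : Type*} [AddCommGroup V] [Module ℚ V]
    (B : LinearMap.BilinForm ℚ V)
    (hsym : ∀ x y : V, B x y = B y x)
    (hpos : ∀ x : V, 0 ≤ B x x)
    (R : Set V) (hR : IsLEARS B R) :
    ∃ 𝒮 : Set (Set V),
      (∀ R' ∈ 𝒮, R' ⊆ R) ∧
      DirectedOn (· ⊆ ·) 𝒮 ∧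
      ⋃₀ 𝒮 = R ∧
      ∀ R' ∈ 𝒮,
        FiniteDimensional ℚ ↥(Submodule.span ℚ R') ∧
        IsLEARS (B.restrict (Submodule.span ℚ R'))
          {x : ↥(Submodule.span ℚ R') | (x : V) ∈ R'} ∧
        Module.Free ℤ ↥(AddSubgroup.closure R') ∧
        Module.Finite ℤ ↥(AddSubgroup.closure R') := by
  classical
  rcases Set.eq_empty_or_nonempty R with hRe | ⟨α₀, hα₀⟩
  · -- degenerate case : R is empty
    refine ⟨{R ∩ ↑(AddSubgroup.closure ((↑(∅ : Finset V)) : Set V))},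
      ?_, ?_, ?_, ?_⟩
    · intro R' hR'
      rw [Set.mem_singleton_iff] at hR'
      rw [hR']
      exact Set.inter_subset_left
    · rintro a ha b hb
      rw [Set.mem_singleton_iff] at ha hb
      subst ha; subst hb
      exact ⟨_, Set.mem_singleton _, subset_rfl, subset_rfl⟩
    · rw [Set.sUnion_singleton, hRe, Set.empty_inter]
    · intro R' hR'
      rw [Set.mem_singleton_iff] at hR'
      rw [hR']
      exact memberGood B hsym R hR ∅ (by simp) (by simp)
  · -- main case
    refine ⟨{S | ∃ G : Finset V, ↑G ⊆ R ∧ α₀ ∈ G ∧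
        (∀ γ ∈ G, Relation.ReflTransGen (lrel B (↑G : Set V)) α₀ γ) ∧
        S = R ∩ ↑(AddSubgroup.closure ((↑G : Set V)))}, ?_, ?_, ?_, ?_⟩
    · rintro R' ⟨G, hGR, hα, hconn, rfl⟩
      exact Set.inter_subset_left
    · rintro a ⟨G₁, hG₁R, hα₁, hconn₁, rfl⟩ b ⟨G₂, hG₂R, hα₂, hconn₂, rfl⟩
      have hsub₁ : (↑G₁ : Set V) ⊆ ↑(G₁ ∪ G₂) := by
        intro x hx; simp only [Finset.coe_union, Set.mem_union]; exact Or.inl hx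
      have hsub₂ : (↑G₂ : Set V) ⊆ ↑(G₁ ∪ G₂) := by
        intro x hx; simp only [Finset.coe_union, Set.mem_union]; exact Or.inr hx
      refine ⟨R ∩ ↑(AddSubgroup.closure ((↑(G₁ ∪ G₂) : Set V))),
        ⟨G₁ ∪ G₂, ?_, Finset.mem_union_left _ hα₁, ?_, rfl⟩, ?_, ?_⟩
      · intro x hx
        rcases Finset.mem_coe.mp hx |> Finset.mem_union.mp with h | h
        · exact hG₁R (Finset.mem_coe.mpr h)
        · exact hG₂R (Finset.mem_coe.mpr h)
      · intro γ hγ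
        rcases Finset.mem_union.mp hγ with h | h
        · exact Relation.ReflTransGen.mono (lrel_mono B hsub₁) _ _ (hconn₁ γ h)
        · exact Relation.ReflTransGen.mono (lrel_mono B hsub₂) _ _ (hconn₂ γ h)
      · exact Set.inter_subset_inter_right _
          (SetLike.coe_subset_coe.mpr (AddSubgroup.closure_mono hsub₁))
      · exact Set.inter_subset_inter_right _
          (SetLike.coe_subset_coe.mpr (AddSubgroup.closure_mono hsub₂))
    · apply Set.Subset.antisymm
      · intro x hx
        obtain ⟨S, ⟨G, hGR, hα, hconn, rfl⟩, hxS⟩ := hx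
        exact hxS.1
      · intro β hβ
        obtain ⟨G, hGR, hαG, hβG, hconn⟩ :=
          lears_chain B R (lears_conn B R hR hα₀ hβ) hα₀
        exact ⟨R ∩ ↑(AddSubgroup.closure ((↑G : Set V))),
          ⟨G, hGR, hαG, hconn, rfl⟩, hβ, AddSubgroup.subset_closure hβG⟩
    · rintro R' ⟨G, hGR, hα, hconn, rfl⟩
      have hsymRTG : Symmetric (Relation.ReflTransGen (lrel B (↑G : Set V))) :=
        by
          haveI : Std.Symm (lrel B (↑G : Set V)) :=
            ⟨fun x y h => ⟨h.2.1, h.1, by rw [hsym]; exact h.2.2⟩⟩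
          exact fun x y h => Std.Symm.symm x y h
      exact memberGood B hsym R hR G hGR
        (fun γ hγ δ hδ => (hsymRTG (hconn γ hγ)).trans (hconn δ hδ))
end

section
/- Let (R, V) be a LEARS with reflectable subspace V′ and associated data Δ and S_α as in the standard setup. Then 0 ∈ S_α for every α ∈ Δ whose image ᾱ lies in R̄^red; equivalently, every α ∈ V′ with ᾱ ∈ R̄^red belongs to R. -/
open Submodule

/-- The image `R̄` of `R` in `V̄ = V/V⁰`. -/
def Rbar {V : Type*} [AddCommGroup V] [Module ℚ V]
    (B : LinearMap.BilinForm ℚ V) (R : Set V) : Set (V ⧸ LinearMap.ker B) :=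
  (LinearMap.ker B).mkQ '' R

/-- `R̄^red = {ᾱ ∈ R̄ : ᾱ/2 ∉ R̄}` (which equals `R̄` when `R̄` is reduced). -/
def RbarRed {V : Type*} [AddCommGroup V] [Module ℚ V]
    (B : LinearMap.BilinForm ℚ V) (R : Set V) : Set (V ⧸ LinearMap.ker B) :=
  {a ∈ Rbar B R | (2 : ℚ)⁻¹ • a ∉ Rbar B R}

/-- `Δ = {α ∈ V′ : α + s ∈ R for some s ∈ V⁰}`, where `V′ = span ℚ P` is the reflectable
subspace determined by the set `P` of representatives of a reflectable base. -/
def DeltaSet {V : Type*} [AddCommGroup V] [Module ℚ V]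
    (B : LinearMap.BilinForm ℚ V) (R P : Set V) : Set V :=
  {α : V | α ∈ Submodule.span ℚ P ∧ ∃ s ∈ LinearMap.ker B, α + s ∈ R}

/-- `S_α = {s ∈ V⁰ : α + s ∈ R}`. -/
def transSet {V : Type*} [AddCommGroup V] [Module ℚ V]
    (B : LinearMap.BilinForm ℚ V) (R : Set V) (α : V) : Set V :=
  {s : V | s ∈ LinearMap.ker B ∧ α + s ∈ R}

/-- `G`, the subgroup of `V⁰` generated by `⋃_{α ∈ Δ} S_α`. -/
def Ggrp {V : Type*} [AddCommGroup V] [Module ℚ V]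
    (B : LinearMap.BilinForm ℚ V) (R P : Set V) : AddSubgroup V :=
  AddSubgroup.closure (⋃ α ∈ DeltaSet B R P, transSet B R α)

/-- (S2): every element of the reflectable subspace whose image lies in R̄^red belongs to R;
equivalently `0 ∈ S_α` for all such `α ∈ Δ`. -/
theorem zero_mem_transSet_of_red
    {V : Type*} [AddCommGroup V] [Module ℚ V]
    (B : LinearMap.BilinForm ℚ V)
    (hsym : ∀ x y : V, B x y = B y x)
    (hpos : ∀ x : V, 0 ≤ B x x)
    (R : Set V) (hR : IsLEARS B R)
    (Bbar : LinearMap.BilinForm ℚ (V ⧸ LinearMap.ker B))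
    (hBbar : ∀ x y : V,
      Bbar ((LinearMap.ker B).mkQ x) ((LinearMap.ker B).mkQ y) = B x y)
    (P : Set V) (hPR : P ⊆ R)
    (hinj : Set.InjOn (LinearMap.ker B).mkQ P)
    (hPred : (LinearMap.ker B).mkQ '' P ⊆ RbarRed B R)
    (hli : LinearIndependent ℚ
      ((↑) : ((LinearMap.ker B).mkQ '' P) → V ⧸ LinearMap.ker B))
    (hspan : Submodule.span ℚ ((LinearMap.ker B).mkQ '' P) = ⊤)
    (hreflbase : ∀ a ∈ RbarRed B R,
      ∃ (l : List (V ⧸ LinearMap.ker B)) (b : V ⧸ LinearMap.ker B),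
        (∀ γ ∈ l, γ ∈ (LinearMap.ker B).mkQ '' P) ∧
        b ∈ (LinearMap.ker B).mkQ '' P ∧
        a = l.foldr (rroot Bbar) b)
    :
    ∀ α ∈ Submodule.span ℚ P, (LinearMap.ker B).mkQ α ∈ RbarRed B R → α ∈ R := by
  
  set π := (LinearMap.ker B).mkQ with hπ
  -- linear independence of π on P
  have hindep : LinearIndependent ℚ (π ∘ ((↑) : P → V)) := by
    have hf : Function.Injective (fun p : P => (⟨π p, ⟨p, p.2, rfl⟩⟩ : (π '' P))) := by
      intro p q h
      exact Subtype.ext (hinj p.2 q.2 (congrArg Subtype.val h))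
    exact hli.comp _ hf
  have hdisj : Disjoint (Submodule.span ℚ P) (LinearMap.ker B) := by
    have := Submodule.range_ker_disjoint hindep
    rwa [Subtype.range_coe, Submodule.ker_mkQ] at this
  -- the reflection commutes with the quotient map
  have hcomm : ∀ γ x : V, π (rroot B γ x) = rroot Bbar (π γ) (π x) := by
    intro γ x
    simp [rroot, hBbar, map_sub, map_smul]
  -- lifting lemma
  have hlift : ∀ (l : List (V ⧸ LinearMap.ker B)), (∀ γ ∈ l, γ ∈ π '' P) →
      ∀ b' ∈ P, ∃ β ∈ R, β ∈ Submodule.span ℚ P ∧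
        π β = l.foldr (rroot Bbar) (π b') := by
    intro l
    induction l with
    | nil => intro _ b' hb'; exact ⟨b', hPR hb', Submodule.subset_span hb', rfl⟩
    | cons γ l ih =>
      intro hl b' hb'
      obtain ⟨β, hβR, hβsp, hβπ⟩ := ih (fun x hx => hl x (List.mem_cons_of_mem _ hx)) b' hb'
      obtain ⟨g, hgP, hgπ⟩ := hl γ List.mem_cons_self
      refine ⟨rroot B g β, hR.2.2.2.1 g (hPR hgP) β hβR, ?_, ?_⟩
      · exact Submodule.sub_mem _ hβsp
          (Submodule.smul_mem _ _ (Submodule.subset_span hgP))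
      · rw [hcomm, hβπ, hgπ]; rfl
  intro α hα hαred
  obtain ⟨l, b, hl, hb, heq⟩ := hreflbase _ hαred
  obtain ⟨b', hb'P, hb'π⟩ := hb
  obtain ⟨β, hβR, hβsp, hβπ⟩ := hlift l hl b' hb'P
  have hπαβ : π (α - β) = 0 := by
    rw [map_sub, hβπ, hb'π, ← heq, sub_self]
  have hmem : α - β ∈ LinearMap.ker B := by
    rw [← Submodule.ker_mkQ (LinearMap.ker B)]
    exact hπαβ
  have hsp : α - β ∈ Submodule.span ℚ P := Submodule.sub_mem _ hα hβsp
  have : α - β = 0 := hdisj.le_bot ⟨hsp, hmem⟩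
  have : α = β := sub_eq_zero.mp this
  rw [this]; exact hβR
end

section
/- Let (R, V) be a LEARS with reflectable subspace V′ and associated data Δ and S_α as in the standard setup. If α, β ∈ Δ satisfy (α, α) = (β, β), then S_α = S_β; that is, the translation set S_α depends only on the length of the root α. -/
open Submodule

section
variable {V : Type*} [AddCommGroup V] [Module ℚ V] (B : LinearMap.BilinForm ℚ V)

lemma lears_ker_right (hsym : ∀ x y : V, B x y = B y x) {s : V}
    (hs : s ∈ LinearMap.ker B) (x : V) : B x s = 0 := by
  rw [hsym, LinearMap.mem_ker.mp hs]; rfl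

lemma lears_ker_left {s : V} (hs : s ∈ LinearMap.ker B) (x : V) : B s x = 0 := by
  rw [LinearMap.mem_ker.mp hs]; rfl

lemma lears_add_ker (hsym : ∀ x y : V, B x y = B y x) {s t : V}
    (hs : s ∈ LinearMap.ker B) (ht : t ∈ LinearMap.ker B) (x y : V) :
    B (x + s) (y + t) = B x y := by
  simp [map_add, lears_ker_left B hs, lears_ker_right B hsym ht]

lemma lears_quad (hsym : ∀ x y : V, B x y = B y x) (hpos : ∀ x : V, 0 ≤ B x x)
    (x y : V) (t : ℚ) : 0 ≤ B x x + 2*t*(B x y) + t^2*(B y y) := by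
  have h := hpos (x + t • y)
  have e : B (x + t • y) (x + t • y) = B x x + 2*t*(B x y) + t^2*(B y y) := by
    simp only [map_add, map_smul, LinearMap.add_apply, LinearMap.smul_apply, smul_eq_mul]
    rw [hsym y x]; ring
  linarith [e ▸ h]

lemma lears_psd_ker (hsym : ∀ x y : V, B x y = B y x) (hpos : ∀ x : V, 0 ≤ B x x)
    {v : V} (hv : B v v = 0) : v ∈ LinearMap.ker B := by
  rw [LinearMap.mem_ker]
  ext y
  simp only [LinearMap.zero_apply]
  by_contra h
  rcases eq_or_lt_of_le (hpos y) with hy | hy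
  · have h1 := lears_quad B hsym hpos v y (-(B v y))
    rw [hv, ← hy] at h1
    have h2 : (0:ℚ) < (B v y)^2 := by positivity
    nlinarith [h1, h2]
  · have h1 := lears_quad B hsym hpos v y (-(B v y / B y y))
    rw [hv] at h1
    have hyne : B y y ≠ 0 := ne_of_gt hy
    have h2 : (0:ℚ) < (B v y)^2 / B y y := div_pos (by positivity) hy
    have h3 : 2*(-(B v y / B y y))*(B v y) + (-(B v y / B y y))^2*(B y y)
        = -((B v y)^2 / B y y) := by field_simp; ring
    linarith [h1, h2, h3]

lemma lears_cs (hsym : ∀ x y : V, B x y = B y x) (hpos : ∀ x : V, 0 ≤ B x x)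
    (x y : V) : (B x y)^2 ≤ B x x * B y y := by
  rcases eq_or_lt_of_le (hpos y) with hy | hy
  · have hk : y ∈ LinearMap.ker B := lears_psd_ker B hsym hpos (hy.symm)
    rw [lears_ker_right B hsym hk x, ← hy, mul_zero]
    positivity
  · have h1 := lears_quad B hsym hpos x y (-(B x y / B y y))
    have hyne : B y y ≠ 0 := ne_of_gt hy
    have h3 : 2*(-(B x y / B y y))*(B x y) + (-(B x y / B y y))^2*(B y y)
        = -((B x y)^2 / B y y) := by field_simp; ring
    have h4 : 0 ≤ B x x - (B x y)^2 / B y y := by linarith [h1, h3]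
    have h5 := mul_le_mul_of_nonneg_right (by linarith : (B x y)^2 / B y y ≤ B x x) (le_of_lt hy)
    rw [div_mul_cancel₀ _ hyne] at h5
    exact h5

end
section
variable {V : Type*} [AddCommGroup V] [Module ℚ V] (B : LinearMap.BilinForm ℚ V)
variable (R P : Set V)

/-- Injectivity of the quotient map on `span ℚ P`. -/
lemma lears_ker_inj
    (hinj : Set.InjOn (LinearMap.ker B).mkQ P)
    (hli : LinearIndependent ℚ
      ((↑) : ((LinearMap.ker B).mkQ '' P) → V ⧸ LinearMap.ker B))
    {v : V} (hv : v ∈ Submodule.span ℚ P) (hv0 : v ∈ LinearMap.ker B) : v = 0 := by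
  classical
  -- independence of the family indexed by P
  have e : ∀ p : P, (LinearMap.ker B).mkQ p ∈ ((LinearMap.ker B).mkQ '' P) :=
    fun p => Set.mem_image_of_mem _ p.2
  have hli' : LinearIndependent ℚ (fun p : P => (LinearMap.ker B).mkQ (p : V)) := by
    have : (fun p : P => (LinearMap.ker B).mkQ (p : V)) =
        (↑) ∘ (fun p : P => (⟨(LinearMap.ker B).mkQ p, e p⟩ : ((LinearMap.ker B).mkQ '' P))) :=
      rfl
    rw [this]
    apply hli.comp
    intro p q hpq
    have : (LinearMap.ker B).mkQ (p : V) = (LinearMap.ker B).mkQ (q : V) := by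
      simpa using congrArg Subtype.val hpq
    exact Subtype.ext (hinj p.2 q.2 this)
  have hv' : v ∈ Submodule.span ℚ (Set.range ((↑) : P → V)) := by
    rwa [Subtype.range_coe_subtype, Set.setOf_mem_eq]
  obtain ⟨c, hc⟩ := Finsupp.mem_span_range_iff_exists_finsupp.mp hv'
  have h0 : (c.sum fun i a => a • (LinearMap.ker B).mkQ (i : V)) = 0 := by
    have := congrArg (LinearMap.ker B).mkQ hc
    rw [map_finsuppSum] at this
    simp only [map_smul] at this
    rw [this]
    exact (Submodule.Quotient.mk_eq_zero _).mpr hv0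
  have hc0 : c = 0 := by
    apply linearIndependent_iff.mp hli'
    rw [Finsupp.linearCombination_apply]
    exact h0
  rw [← hc, hc0]
  simp

/-- Every vector decomposes as (span P) + ker. -/
lemma lears_decomp
    (hspan : Submodule.span ℚ ((LinearMap.ker B).mkQ '' P) = ⊤) (v : V) :
    ∃ w, w ∈ Submodule.span ℚ P ∧ v - w ∈ LinearMap.ker B := by
  have : (LinearMap.ker B).mkQ v ∈ Submodule.map (LinearMap.ker B).mkQ (Submodule.span ℚ P) := by
    rw [← Submodule.span_image, hspan]; trivial
  obtain ⟨w, hw, hwv⟩ := this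
  refine ⟨w, hw, ?_⟩
  have : (LinearMap.ker B).mkQ (v - w) = 0 := by rw [map_sub, hwv, sub_self]
  rwa [Submodule.mkQ_apply, Submodule.Quotient.mk_eq_zero] at this
end
section
variable {V : Type*} [AddCommGroup V] [Module ℚ V] (B : LinearMap.BilinForm ℚ V)
variable (R P : Set V)

lemma lears_len_pos (hsym : ∀ x y : V, B x y = B y x) (hpos : ∀ x : V, 0 ≤ B x x)
    (hR : IsLEARS B R) {α : V} (hα : α ∈ DeltaSet B R P) : 0 < B α α := by
  obtain ⟨-, s, hs, hαs⟩ := hα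
  have h1 : B (α + s) (α + s) = B α α := lears_add_ker B hsym hs hs α α
  have h2 := hR.1 _ hαs
  rw [h1] at h2
  exact lt_of_le_of_ne (hpos α) (Ne.symm h2)

lemma lears_pair_int (hsym : ∀ x y : V, B x y = B y x)
    (hR : IsLEARS B R) {α β : V} (hα : α ∈ DeltaSet B R P) (hβ : β ∈ DeltaSet B R P) :
    ∃ n : ℤ, 2 * B α β / B β β = (n : ℚ) := by
  obtain ⟨-, s, hs, hαs⟩ := hα
  obtain ⟨-, t, ht, hβt⟩ := hβ
  obtain ⟨n, hn⟩ := hR.2.2.1 _ hαs _ hβt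
  refine ⟨n, ?_⟩
  rwa [lears_add_ker B hsym hs ht, lears_add_ker B hsym ht ht] at hn

/-- Reflection by an "anchored" root (one lying in `R ∩ span P`) maps `Δ` to `Δ`
and the translation sets embed. -/
lemma lears_refl_sub (hsym : ∀ x y : V, B x y = B y x)
    (hR : IsLEARS B R) {γ : V} (hγP : γ ∈ Submodule.span ℚ P) (hγR : γ ∈ R)
    {α : V} (hα : α ∈ DeltaSet B R P) :
    (α - (2 * B α γ / B γ γ) • γ) ∈ DeltaSet B R P ∧
      transSet B R α ⊆ transSet B R (α - (2 * B α γ / B γ γ) • γ) := by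
  have key : ∀ s ∈ transSet B R α, (α - (2 * B α γ / B γ γ) • γ) + s ∈ R := by
    intro s hs
    have h1 : rroot B γ (α + s) ∈ R := hR.2.2.2.1 _ hγR _ hs.2
    have h2 : B (α + s) γ = B α γ := by
      rw [map_add, LinearMap.add_apply, lears_ker_left B hs.1 γ, add_zero]
    have h3 : rroot B γ (α + s) = (α - (2 * B α γ / B γ γ) • γ) + s := by
      rw [rroot, h2]; abel
    rwa [h3] at h1
  obtain ⟨hαsp, s, hs, hαs⟩ := hα
  constructor
  · refine ⟨Submodule.sub_mem _ hαsp (Submodule.smul_mem _ _ hγP), s, hs, ?_⟩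
    exact key s ⟨hs, hαs⟩
  · intro s hs
    exact ⟨hs.1, key s hs⟩

/-- Equality version of the reflection lemma. -/
lemma lears_refl_eq (hsym : ∀ x y : V, B x y = B y x) (hpos : ∀ x : V, 0 ≤ B x x)
    (hR : IsLEARS B R) {γ : V} (hγP : γ ∈ Submodule.span ℚ P) (hγR : γ ∈ R)
    {α : V} (hα : α ∈ DeltaSet B R P) :
    (α - (2 * B α γ / B γ γ) • γ) ∈ DeltaSet B R P ∧
      transSet B R α = transSet B R (α - (2 * B α γ / B γ γ) • γ) := by
  obtain ⟨h1, h2⟩ := lears_refl_sub B R P hsym hR hγP hγR hα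
  refine ⟨h1, Set.Subset.antisymm h2 ?_⟩
  have hγγ : B γ γ ≠ 0 := hR.1 _ hγR
  obtain ⟨h3, h4⟩ := lears_refl_sub B R P hsym hR hγP hγR h1
  have e : (α - (2 * B α γ / B γ γ) • γ) -
      (2 * B (α - (2 * B α γ / B γ γ) • γ) γ / B γ γ) • γ = α := by
    have : B (α - (2 * B α γ / B γ γ) • γ) γ = - B α γ := by
      rw [map_sub, map_smul, LinearMap.sub_apply, LinearMap.smul_apply, smul_eq_mul]
      field_simp
      ring
    rw [this]
    have : 2 * (- B α γ) / B γ γ = -(2 * B α γ / B γ γ) := by ring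
    rw [this, neg_smul]
    abel
  rwa [e] at h4
end
section
variable {V : Type*} [AddCommGroup V] [Module ℚ V] (B : LinearMap.BilinForm ℚ V)
variable (R P : Set V)

lemma lears_mkQ_mem_Rbar {α : V} (hα : α ∈ DeltaSet B R P) :
    (LinearMap.ker B).mkQ α ∈ Rbar B R := by
  obtain ⟨-, s, hs, hαs⟩ := hα
  refine ⟨α + s, hαs, ?_⟩
  rw [map_add]
  have : (LinearMap.ker B).mkQ s = 0 := by
    rw [Submodule.mkQ_apply, Submodule.Quotient.mk_eq_zero]; exact hs
  rw [this, add_zero]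

lemma lears_lift_foldr
    (hR : IsLEARS B R)
    (Bbar : LinearMap.BilinForm ℚ (V ⧸ LinearMap.ker B))
    (hBbar : ∀ x y : V,
      Bbar ((LinearMap.ker B).mkQ x) ((LinearMap.ker B).mkQ y) = B x y)
    (hPR : P ⊆ R)
    (l : List (V ⧸ LinearMap.ker B)) (hl : ∀ γ ∈ l, γ ∈ (LinearMap.ker B).mkQ '' P)
    {p : V} (hp : p ∈ P) :
    ∃ x, x ∈ Submodule.span ℚ P ∧ x ∈ R ∧
      (LinearMap.ker B).mkQ x = l.foldr (rroot Bbar) ((LinearMap.ker B).mkQ p) := by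
  induction l with
  | nil => exact ⟨p, Submodule.subset_span hp, hPR hp, rfl⟩
  | cons a l ih =>
    obtain ⟨x, hxP, hxR, hxq⟩ := ih (fun γ hγ => hl γ (List.mem_cons_of_mem a hγ))
    obtain ⟨γ, hγP, hγq⟩ := hl a List.mem_cons_self
    refine ⟨rroot B γ x, ?_, hR.2.2.2.1 _ (hPR hγP) _ hxR, ?_⟩
    · exact Submodule.sub_mem _ hxP (Submodule.smul_mem _ _ (Submodule.subset_span hγP))
    · rw [List.foldr_cons, ← hxq, ← hγq]
      show (LinearMap.ker B).mkQ (x - (2 * B x γ / B γ γ) • γ) = _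
      rw [map_sub, map_smul, rroot, hBbar, hBbar]

/-- Every element of `Δ` whose image is in `R̄^red` actually lies in `R`. -/
lemma lears_anchored
    (hR : IsLEARS B R)
    (Bbar : LinearMap.BilinForm ℚ (V ⧸ LinearMap.ker B))
    (hBbar : ∀ x y : V,
      Bbar ((LinearMap.ker B).mkQ x) ((LinearMap.ker B).mkQ y) = B x y)
    (hPR : P ⊆ R)
    (hinj : Set.InjOn (LinearMap.ker B).mkQ P)
    (hli : LinearIndependent ℚ
      ((↑) : ((LinearMap.ker B).mkQ '' P) → V ⧸ LinearMap.ker B))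
    (hreflbase : ∀ a ∈ RbarRed B R,
      ∃ (l : List (V ⧸ LinearMap.ker B)) (b : V ⧸ LinearMap.ker B),
        (∀ γ ∈ l, γ ∈ (LinearMap.ker B).mkQ '' P) ∧
        b ∈ (LinearMap.ker B).mkQ '' P ∧
        a = l.foldr (rroot Bbar) b)
    {α : V} (hα : α ∈ DeltaSet B R P)
    (hred : (LinearMap.ker B).mkQ α ∈ RbarRed B R) : α ∈ R := by
  obtain ⟨l, b, hl, hb, heq⟩ := hreflbase _ hred
  obtain ⟨p, hpP, hpq⟩ := hb
  obtain ⟨x, hxP, hxR, hxq⟩ := lears_lift_foldr B R P hR Bbar hBbar hPR l hl hpP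
  rw [hpq, ← heq] at hxq
  have : x - α ∈ LinearMap.ker B := by
    have : (LinearMap.ker B).mkQ (x - α) = 0 := by rw [map_sub, hxq, sub_self]
    rwa [Submodule.mkQ_apply, Submodule.Quotient.mk_eq_zero] at this
  have hx0 : x - α = 0 :=
    lears_ker_inj B P hinj hli (Submodule.sub_mem _ hxP hα.1) this
  have : x = α := by rwa [sub_eq_zero] at hx0
  rwa [this] at hxR

/-- If `ᾱ ∉ R̄^red` then `α/2 ∈ Δ` and its image is in `R̄^red`. -/
lemma lears_half (hsym : ∀ x y : V, B x y = B y x) (hpos : ∀ x : V, 0 ≤ B x x)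
    (hR : IsLEARS B R)
    {α : V} (hα : α ∈ DeltaSet B R P)
    (hnred : (LinearMap.ker B).mkQ α ∉ RbarRed B R) :
    (2⁻¹ : ℚ) • α ∈ DeltaSet B R P ∧
      (LinearMap.ker B).mkQ ((2⁻¹ : ℚ) • α) ∈ RbarRed B R := by
  have hbar := lears_mkQ_mem_Rbar B R P hα
  have hhalfbar : (2⁻¹ : ℚ) • ((LinearMap.ker B).mkQ α) ∈ Rbar B R := by
    by_contra h
    exact hnred ⟨hbar, h⟩
  have hmem : ∀ (c : ℚ), (c • (LinearMap.ker B).mkQ α) ∈ Rbar B R → c • α ∈ DeltaSet B R P := by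
    intro c hc
    obtain ⟨r, hrR, hrq⟩ := hc
    have : r - c • α ∈ LinearMap.ker B := by
      have : (LinearMap.ker B).mkQ (r - c • α) = 0 := by
        rw [map_sub, map_smul, hrq, sub_self]
      rwa [Submodule.mkQ_apply, Submodule.Quotient.mk_eq_zero] at this
    refine ⟨Submodule.smul_mem _ _ hα.1, r - c • α, this, ?_⟩
    have : c • α + (r - c • α) = r := by abel
    rw [this]
    exact hrR
  have hhalf : (2⁻¹ : ℚ) • α ∈ DeltaSet B R P := hmem _ hhalfbar
  refine ⟨hhalf, ?_, ?_⟩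
  · rw [map_smul]; exact hhalfbar
  · intro h4
    rw [map_smul, smul_smul] at h4
    have h4' : ((4⁻¹ : ℚ)) • α ∈ DeltaSet B R P := by
      have : ((2:ℚ)⁻¹ * 2⁻¹) = (4⁻¹ : ℚ) := by norm_num
      rw [this] at h4
      exact hmem _ h4
    obtain ⟨n, hn⟩ := lears_pair_int B R P hsym hR h4' hα
    have hαα : (0:ℚ) < B α α := lears_len_pos B R P hsym hpos hR hα
    rw [map_smul, LinearMap.smul_apply, smul_eq_mul] at hn
    have : (n : ℚ) = 1/2 := by
      rw [← hn]; field_simp; ring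
    have : (2 * n : ℚ) = 1 := by rw [this]; norm_num
    have : (2 * n : ℤ) = 1 := by exact_mod_cast this
    omega

/-- Every `γ ∈ Δ` has an "anchored" representative defining the same reflection. -/
lemma lears_anchored_rep (hsym : ∀ x y : V, B x y = B y x) (hpos : ∀ x : V, 0 ≤ B x x)
    (hR : IsLEARS B R)
    (Bbar : LinearMap.BilinForm ℚ (V ⧸ LinearMap.ker B))
    (hBbar : ∀ x y : V,
      Bbar ((LinearMap.ker B).mkQ x) ((LinearMap.ker B).mkQ y) = B x y)
    (hPR : P ⊆ R)
    (hinj : Set.InjOn (LinearMap.ker B).mkQ P)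
    (hli : LinearIndependent ℚ
      ((↑) : ((LinearMap.ker B).mkQ '' P) → V ⧸ LinearMap.ker B))
    (hreflbase : ∀ a ∈ RbarRed B R,
      ∃ (l : List (V ⧸ LinearMap.ker B)) (b : V ⧸ LinearMap.ker B),
        (∀ γ ∈ l, γ ∈ (LinearMap.ker B).mkQ '' P) ∧
        b ∈ (LinearMap.ker B).mkQ '' P ∧
        a = l.foldr (rroot Bbar) b)
    {γ : V} (hγ : γ ∈ DeltaSet B R P) :
    ∃ γ', γ' ∈ Submodule.span ℚ P ∧ γ' ∈ R ∧
      ∀ x : V, (2 * B x γ' / B γ' γ') • γ' = (2 * B x γ / B γ γ) • γ := by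
  by_cases hred : (LinearMap.ker B).mkQ γ ∈ RbarRed B R
  · exact ⟨γ, hγ.1,
      lears_anchored B R P hR Bbar hBbar hPR hinj hli hreflbase hγ hred,
      fun x => rfl⟩
  · obtain ⟨hhalf, hhred⟩ := lears_half B R P hsym hpos hR hγ hred
    refine ⟨(2⁻¹ : ℚ) • γ, Submodule.smul_mem _ _ hγ.1,
      lears_anchored B R P hR Bbar hBbar hPR hinj hli hreflbase hhalf hhred, ?_⟩
    intro x
    have hγγ : B γ γ ≠ 0 := ne_of_gt (lears_len_pos B R P hsym hpos hR hγ)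
    simp only [map_smul, LinearMap.smul_apply, smul_eq_mul, smul_smul]
    congr 1
    field_simp
end
section
variable {V : Type*} [AddCommGroup V] [Module ℚ V] (B : LinearMap.BilinForm ℚ V)
variable (R P : Set V)
variable (hsym : ∀ x y : V, B x y = B y x) (hpos : ∀ x : V, 0 ≤ B x x)
variable (hR : IsLEARS B R)
variable (Bbar : LinearMap.BilinForm ℚ (V ⧸ LinearMap.ker B))
variable (hBbar : ∀ x y : V,
      Bbar ((LinearMap.ker B).mkQ x) ((LinearMap.ker B).mkQ y) = B x y)
variable (hPR : P ⊆ R)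
variable (hinj : Set.InjOn (LinearMap.ker B).mkQ P)
variable (hli : LinearIndependent ℚ
      ((↑) : ((LinearMap.ker B).mkQ '' P) → V ⧸ LinearMap.ker B))
variable (hreflbase : ∀ a ∈ RbarRed B R,
      ∃ (l : List (V ⧸ LinearMap.ker B)) (b : V ⧸ LinearMap.ker B),
        (∀ γ ∈ l, γ ∈ (LinearMap.ker B).mkQ '' P) ∧
        b ∈ (LinearMap.ker B).mkQ '' P ∧
        a = l.foldr (rroot Bbar) b)

include hsym hpos hR hBbar hPR hinj hli hreflbase in
lemma lears_neg {α : V} (hα : α ∈ DeltaSet B R P) :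
    -α ∈ DeltaSet B R P ∧ transSet B R α = transSet B R (-α) := by
  obtain ⟨γ', hγ'P, hγ'R, hact⟩ :=
    lears_anchored_rep B R P hsym hpos hR Bbar hBbar hPR hinj hli hreflbase hα
  have h := lears_refl_eq B R P hsym hpos hR hγ'P hγ'R hα
  have hαα : B α α ≠ 0 := ne_of_gt (lears_len_pos B R P hsym hpos hR hα)
  have e : α - (2 * B α γ' / B γ' γ') • γ' = -α := by
    rw [hact α]
    have : 2 * B α α / B α α = 2 := by field_simp
    rw [this, two_smul]
    abel
  rw [e] at h
  exact h

include hsym hpos hR hBbar hPR hinj hli hreflbase in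
lemma lears_claimA {α β : V} (hα : α ∈ DeltaSet B R P) (hβ : β ∈ DeltaSet B R P)
    (hlen : B α α = B β β) (hne : B α β ≠ 0) :
    transSet B R α = transSet B R β := by
  set L := B α α with hLdef
  have hL : 0 < L := lears_len_pos B R P hsym hpos hR hα
  obtain ⟨n, hn⟩ := lears_pair_int B R P hsym hR hα hβ
  rw [← hlen] at hn
  have hLne : L ≠ 0 := ne_of_gt hL
  have hBαβ : B α β = (n : ℚ) * L / 2 := by
    field_simp at hn ⊢
    linarith [hn]
  have hcs := lears_cs B hsym hpos α β
  rw [← hlen, ← hLdef] at hcs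
  have hn2 : (n : ℚ)^2 ≤ 4 := by
    rw [hBαβ] at hcs
    nlinarith [hcs, mul_pos hL hL]
  have hn0 : n ≠ 0 := by
    intro h0
    rw [h0] at hBαβ
    simp at hBαβ
    exact hne hBαβ
  have hn2' : n^2 ≤ 4 := by exact_mod_cast hn2
  have hrange : n = -2 ∨ n = -1 ∨ n = 1 ∨ n = 2 := by
    have h1 : -2 ≤ n := by nlinarith
    have h2 : n ≤ 2 := by nlinarith
    omega
  -- helper: in the cases n = ±1, both α and β are anchored
  have hodd_anchor : (n = 1 ∨ n = -1) → ∀ δ ε : V, δ ∈ DeltaSet B R P → ε ∈ DeltaSet B R P →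
      B ε ε = L → B δ ε = (n : ℚ) * L / 2 → δ ∈ R := by
    intro hodd δ ε hδ hε hεL hpair
    by_cases hred : (LinearMap.ker B).mkQ δ ∈ RbarRed B R
    · exact lears_anchored B R P hR Bbar hBbar hPR hinj hli hreflbase hδ hred
    · exfalso
      obtain ⟨hhalf, -⟩ := lears_half B R P hsym hpos hR hδ hred
      obtain ⟨m, hm⟩ := lears_pair_int B R P hsym hR hhalf hε
      have hBδ : B ((2⁻¹ : ℚ) • δ) ε = 2⁻¹ * ((n : ℚ) * L / 2) := by
        rw [map_smul, LinearMap.smul_apply, smul_eq_mul, hpair]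
      rw [hBδ, hεL] at hm
      have hnm : (n : ℚ) = 2 * m := by
        field_simp at hm
        have h' : ((2 * n : ℚ)) * L = ((4 * m : ℚ)) * L := by push_cast; rw [hm]; ring
        have h'' := mul_right_cancel₀ hLne h'
        push_cast at h''
        linarith [h'']
      have hnm' : n = 2 * m := by exact_mod_cast hnm
      omega
  rcases hrange with h2 | h2 | h2 | h2
  · -- n = -2 : β = -α
    subst h2
    have h0 : B (β + α) (β + α) = 0 := by
      simp only [map_add, LinearMap.add_apply]
      rw [hsym β α, hBαβ, ← hlen, ← hLdef]
      push_cast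
      ring
    have hker := lears_psd_ker B hsym hpos h0
    have h00 := lears_ker_inj B P hinj hli
      (Submodule.add_mem _ hβ.1 hα.1) hker
    have hβeq : β = -α := by
      have := eq_neg_of_add_eq_zero_left h00
      rw [this]
    obtain ⟨-, hSneg⟩ := lears_neg B R P hsym hpos hR Bbar hBbar hPR hinj hli hreflbase hα
    rw [hβeq, ← hSneg]
  · -- n = -1
    subst h2
    have hαR : α ∈ R := hodd_anchor (Or.inr rfl) α β hα hβ hlen.symm hBαβ
    have hβR : β ∈ R := by
      refine hodd_anchor (Or.inr rfl) β α hβ hα hLdef.symm ?_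
      rw [hsym β α, hBαβ]
    have hc : 2 * B α β / B β β = -1 := by
      rw [← hlen]
      rw [hn]; push_cast; ring
    have hc' : 2 * B β α / B α α = -1 := by
      rw [hsym β α]
      rw [hn]; push_cast; ring
    have h1 := lears_refl_eq B R P hsym hpos hR hβ.1 hβR hα
    have h2' := lears_refl_eq B R P hsym hpos hR hα.1 hαR hβ
    rw [hc] at h1
    rw [hc'] at h2'
    have e1 : α - (-1 : ℚ) • β = α + β := by
      rw [neg_smul, one_smul]; abel
    have e2 : β - (-1 : ℚ) • α = α + β := by
      rw [neg_smul, one_smul]; abel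
    rw [e1] at h1
    rw [e2] at h2'
    rw [h1.2, h2'.2]
  · -- n = 1
    subst h2
    have hαR : α ∈ R := hodd_anchor (Or.inl rfl) α β hα hβ hlen.symm hBαβ
    have hβR : β ∈ R := by
      refine hodd_anchor (Or.inl rfl) β α hβ hα hLdef.symm ?_
      rw [hsym β α, hBαβ]
    have hc : 2 * B α β / B β β = 1 := by
      rw [← hlen, hn]; push_cast; ring
    have hc' : 2 * B β α / B α α = 1 := by
      rw [hsym β α, hn]; push_cast; ring
    have h1 := lears_refl_eq B R P hsym hpos hR hβ.1 hβR hα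
    have h2' := lears_refl_eq B R P hsym hpos hR hα.1 hαR hβ
    rw [hc] at h1
    rw [hc'] at h2'
    have e1 : α - (1 : ℚ) • β = α - β := by rw [one_smul]
    have e2 : β - (1 : ℚ) • α = β - α := by rw [one_smul]
    rw [e1] at h1
    rw [e2] at h2'
    obtain ⟨-, hSneg⟩ := lears_neg B R P hsym hpos hR Bbar hBbar hPR hinj hli hreflbase h1.1
    have e3 : -(α - β) = β - α := by abel
    rw [e3] at hSneg
    rw [h1.2, hSneg, h2'.2]
  · -- n = 2 : β = α
    subst h2
    have hβα : B β α = B α β := hsym β α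
    have h0 : B (β - α) (β - α) = 0 := by
      simp only [map_sub, LinearMap.sub_apply]
      rw [hβα, hBαβ, ← hlen, ← hLdef]
      push_cast
      ring
    have hker := lears_psd_ker B hsym hpos h0
    have h00 := lears_ker_inj B P hinj hli
      (Submodule.sub_mem _ hβ.1 hα.1) hker
    have hβeq : β = α := by rwa [sub_eq_zero] at h00
    rw [hβeq]
end
section
variable {V : Type*} [AddCommGroup V] [Module ℚ V] (B : LinearMap.BilinForm ℚ V)
variable (R P : Set V)
variable (hsym : ∀ x y : V, B x y = B y x) (hpos : ∀ x : V, 0 ≤ B x x)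
variable (hR : IsLEARS B R)
variable (Bbar : LinearMap.BilinForm ℚ (V ⧸ LinearMap.ker B))
variable (hBbar : ∀ x y : V,
      Bbar ((LinearMap.ker B).mkQ x) ((LinearMap.ker B).mkQ y) = B x y)
variable (hPR : P ⊆ R)
variable (hinj : Set.InjOn (LinearMap.ker B).mkQ P)
variable (hli : LinearIndependent ℚ
      ((↑) : ((LinearMap.ker B).mkQ '' P) → V ⧸ LinearMap.ker B))
variable (hspan : Submodule.span ℚ ((LinearMap.ker B).mkQ '' P) = ⊤)
variable (hreflbase : ∀ a ∈ RbarRed B R,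
      ∃ (l : List (V ⧸ LinearMap.ker B)) (b : V ⧸ LinearMap.ker B),
        (∀ γ ∈ l, γ ∈ (LinearMap.ker B).mkQ '' P) ∧
        b ∈ (LinearMap.ker B).mkQ '' P ∧
        a = l.foldr (rroot Bbar) b)

include hsym hspan in
/-- Convert a chain in `R` into a chain in `Δ` with the same pairing pattern. -/
lemma lears_conv (l : List V) :
    ∀ (r αr : V), (∀ x ∈ l, x ∈ R) →
    List.Chain (fun a b => B a b ≠ 0) r l →
    αr ∈ Submodule.span ℚ P → r - αr ∈ LinearMap.ker B →
    ∃ m : List V, (∀ x ∈ m, x ∈ DeltaSet B R P) ∧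
      List.Chain (fun a b => B a b ≠ 0) αr m ∧
      (αr :: m).getLast (List.cons_ne_nil _ _) ∈ Submodule.span ℚ P ∧
      ((αr :: m).getLast (List.cons_ne_nil _ _) - (r :: l).getLast (List.cons_ne_nil _ _))
        ∈ LinearMap.ker B := by
  induction l with
  | nil =>
    intro r αr _ _ hαrP hker
    refine ⟨[], by simp, List.Chain.nil, by simpa using hαrP, ?_⟩
    simp only [List.getLast_singleton]
    have : αr - r = -(r - αr) := by abel
    rw [this]
    exact Submodule.neg_mem _ hker
  | cons y l' ih =>
    intro r αr hl hchain hαrP hker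
    unfold List.Chain at hchain
    rw [List.chain_cons] at hchain
    obtain ⟨hry, hchain'⟩ := hchain
    obtain ⟨w, hwP, hwker⟩ := lears_decomp B P hspan y
    obtain ⟨m', hm'Δ, hm'chain, hm'P, hm'ker⟩ :=
      ih y w (fun x hx => hl x (List.mem_cons_of_mem _ hx)) hchain' hwP hwker
    have hBrw : B r y = B αr w := by
      conv_lhs => rw [show r = αr + (r - αr) by abel, show y = w + (y - w) by abel]
      exact lears_add_ker B hsym hker hwker αr w
    refine ⟨w :: m', ?_, ?_, ?_, ?_⟩
    · intro x hx
      rcases List.mem_cons.mp hx with h | h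
      · rw [h]
        refine ⟨hwP, y - w, hwker, ?_⟩
        have : w + (y - w) = y := by abel
        rw [this]
        exact hl y List.mem_cons_self
      · exact hm'Δ x h
    · unfold List.Chain
      rw [List.chain_cons]
      exact ⟨by rwa [hBrw] at hry, hm'chain⟩
    · rwa [List.getLast_cons (List.cons_ne_nil _ _)]
    · rw [List.getLast_cons (List.cons_ne_nil _ _), List.getLast_cons (List.cons_ne_nil _ _)]
      exact hm'ker

include hsym hpos hR hBbar hPR hinj hli hreflbase in
/-- Walk along a `Δ`-chain, preserving the translation set. -/
lemma lears_walk (β : V) (hβ : β ∈ DeltaSet B R P) (m : List V) :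
    ∀ (α : V), α ∈ DeltaSet B R P → (∀ x ∈ m, x ∈ DeltaSet B R P) →
    List.Chain (fun a b => B a b ≠ 0) α m →
    (α :: m).getLast (List.cons_ne_nil _ _) = β →
    B α α = B β β → transSet B R α = transSet B R β := by
  induction m with
  | nil =>
    intro α _ _ _ hlast _
    simp only [List.getLast_singleton] at hlast
    rw [hlast]
  | cons γ m' ih =>
    intro α hα hmΔ hchain hlast hlen
    unfold List.Chain at hchain
    rw [List.chain_cons] at hchain
    obtain ⟨hαγ, hchain'⟩ := hchain
    have hγΔ : γ ∈ DeltaSet B R P := hmΔ γ List.mem_cons_self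
    rw [List.getLast_cons (List.cons_ne_nil _ _)] at hlast
    cases m' with
    | nil =>
      have hγβ : γ = β := by simpa using hlast
      subst hγβ
      exact lears_claimA B R P hsym hpos hR Bbar hBbar hPR hinj hli hreflbase hα hγΔ hlen hαγ
    | cons d m'' =>
      have hdΔ : d ∈ DeltaSet B R P :=
        hmΔ d (List.mem_cons_of_mem _ List.mem_cons_self)
      rw [List.chain_cons] at hchain'
      obtain ⟨hγd, hchain''⟩ := hchain'
      have hlast' : (d :: m'').getLast (List.cons_ne_nil _ _) = β := by
        rwa [List.getLast_cons (List.cons_ne_nil _ _)] at hlast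
      have hmΔ' : ∀ x ∈ d :: m'', x ∈ DeltaSet B R P :=
        fun x hx => hmΔ x (List.mem_cons_of_mem _ hx)
      by_cases had : B α d = 0
      · -- reflect α through γ
        obtain ⟨γ', hγ'P, hγ'R, hact⟩ :=
          lears_anchored_rep B R P hsym hpos hR Bbar hBbar hPR hinj hli hreflbase hγΔ
        have h := lears_refl_eq B R P hsym hpos hR hγ'P hγ'R hα
        rw [hact α] at h
        set c : ℚ := 2 * B α γ / B γ γ with hc
        set α' : V := α - c • γ with hα'
        have hγγ : B γ γ ≠ 0 := ne_of_gt (lears_len_pos B R P hsym hpos hR hγΔ)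
        have hcne : c ≠ 0 := by
          rw [hc]
          exact div_ne_zero (mul_ne_zero two_ne_zero hαγ) hγγ
        have hlen' : B α' α' = B α α := by
          rw [hα']
          simp only [map_sub, map_smul, LinearMap.sub_apply, LinearMap.smul_apply, smul_eq_mul]
          rw [hsym γ α, hc]
          field_simp
          ring
        have hα'd : B α' d ≠ 0 := by
          rw [hα']
          simp only [map_sub, LinearMap.sub_apply, map_smul, LinearMap.smul_apply, smul_eq_mul]
          rw [had]
          simp only [zero_sub, neg_ne_zero]
          exact mul_ne_zero hcne hγd
        have := ih α' h.1 hmΔ' (List.chain_cons.mpr ⟨hα'd, hchain''⟩)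
          (by rwa [List.getLast_cons (List.cons_ne_nil _ _)]) (hlen' ▸ hlen)
        rw [h.2, this]
      · -- skip γ
        exact ih α hα hmΔ' (List.chain_cons.mpr ⟨had, hchain''⟩)
          (by rwa [List.getLast_cons (List.cons_ne_nil _ _)]) hlen
end
lemma lears_chain_mem {V : Type*} {rel : V → V → Prop} {Q : Set V}
    (hrel : ∀ x y, rel x y → y ∈ Q) :
    ∀ (l : List V) (a : V), List.Chain rel a l → ∀ x ∈ l, x ∈ Q := by
  intro l
  induction l with
  | nil => intro a _ x hx; simp at hx
  | cons y l' ih =>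
    intro a hchain x hx
    unfold List.Chain at hchain
    rw [List.chain_cons] at hchain
    rcases List.mem_cons.mp hx with h | h
    · rw [h]; exact hrel a y hchain.1
    · exact ih y hchain.2 x h

/-- The translation set `S_α` depends only on the length of `α ∈ Δ`. -/
theorem transSet_eq_of_length_eq
    {V : Type*} [AddCommGroup V] [Module ℚ V]
    (B : LinearMap.BilinForm ℚ V)
    (hsym : ∀ x y : V, B x y = B y x)
    (hpos : ∀ x : V, 0 ≤ B x x)
    (R : Set V) (hR : IsLEARS B R)
    (Bbar : LinearMap.BilinForm ℚ (V ⧸ LinearMap.ker B))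
    (hBbar : ∀ x y : V,
      Bbar ((LinearMap.ker B).mkQ x) ((LinearMap.ker B).mkQ y) = B x y)
    (P : Set V) (hPR : P ⊆ R)
    (hinj : Set.InjOn (LinearMap.ker B).mkQ P)
    (hPred : (LinearMap.ker B).mkQ '' P ⊆ RbarRed B R)
    (hli : LinearIndependent ℚ
      ((↑) : ((LinearMap.ker B).mkQ '' P) → V ⧸ LinearMap.ker B))
    (hspan : Submodule.span ℚ ((LinearMap.ker B).mkQ '' P) = ⊤)
    (hreflbase : ∀ a ∈ RbarRed B R,
      ∃ (l : List (V ⧸ LinearMap.ker B)) (b : V ⧸ LinearMap.ker B),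
        (∀ γ ∈ l, γ ∈ (LinearMap.ker B).mkQ '' P) ∧
        b ∈ (LinearMap.ker B).mkQ '' P ∧
        a = l.foldr (rroot Bbar) b)
    :
    ∀ α ∈ DeltaSet B R P, ∀ β ∈ DeltaSet B R P,
      B α α = B β β → transSet B R α = transSet B R β := by
  intro α hα β hβ hlen
  obtain ⟨hαP, s, hs, hαs⟩ := hα
  obtain ⟨hβP, t, ht, hβt⟩ := hβ
  have hα : α ∈ DeltaSet B R P := ⟨hαP, s, hs, hαs⟩
  have hβ : β ∈ DeltaSet B R P := ⟨hβP, t, ht, hβt⟩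
  set rel : V → V → Prop := fun x y => y ∈ R ∧ B x y ≠ 0 with hreldef
  -- connectivity of R via (A4)
  have hconn : Relation.ReflTransGen rel (α + s) (β + t) := by
    set R₁ : Set V := {r ∈ R | Relation.ReflTransGen rel (α + s) r} with hR₁
    set R₂ : Set V := {r ∈ R | ¬ Relation.ReflTransGen rel (α + s) r} with hR₂
    have hunion : R = R₁ ∪ R₂ := by
      ext x
      constructor
      · intro hx
        by_cases h : Relation.ReflTransGen rel (α + s) x
        · exact Or.inl ⟨hx, h⟩
        · exact Or.inr ⟨hx, h⟩
      · rintro (⟨hx, -⟩ | ⟨hx, -⟩) <;> exact hx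
    have horth : ∀ x ∈ R₁, ∀ y ∈ R₂, B x y = 0 := by
      intro x hx y hy
      by_contra hBxy
      exact hy.2 (hx.2.tail ⟨hy.1, hBxy⟩)
    have h12 := hR.2.2.2.2 R₁ R₂ hunion horth
    have hR₂empty : R₂ = ∅ := by
      rcases h12 with h | h
      · exfalso
        have hmem : (α + s) ∈ R₁ := ⟨hαs, Relation.ReflTransGen.refl⟩
        rw [h] at hmem
        exact hmem
      · exact h
    by_contra h
    have hmem : (β + t) ∈ R₂ := ⟨hβt, h⟩
    rw [hR₂empty] at hmem
    exact hmem
  obtain ⟨l, hchain, hlast⟩ := List.exists_isChain_cons_of_relationReflTransGen hconn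
  have hlR : ∀ x ∈ l, x ∈ R :=
    lears_chain_mem (fun x y h => h.1) l (α + s) hchain
  have hchainB : List.Chain (fun a b => B a b ≠ 0) (α + s) l :=
    List.Chain.imp (fun a b h => h.2) hchain
  have hsker : (α + s) - α ∈ LinearMap.ker B := by
    have e : (α + s) - α = s := by abel
    rw [e]; exact hs
  obtain ⟨m, hmΔ, hmchain, hmP, hmker⟩ :=
    lears_conv B R P hsym hspan l (α + s) α hlR hchainB hαP hsker
  rw [hlast] at hmker
  have hδβ : (α :: m).getLast (List.cons_ne_nil _ _) = β := by
    have h1 : (α :: m).getLast (List.cons_ne_nil _ _) - β ∈ LinearMap.ker B := by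
      have e : (α :: m).getLast (List.cons_ne_nil _ _) - β
          = ((α :: m).getLast (List.cons_ne_nil _ _) - (β + t)) + t := by abel
      rw [e]
      exact Submodule.add_mem _ hmker ht
    have h2 : (α :: m).getLast (List.cons_ne_nil _ _) - β ∈ Submodule.span ℚ P :=
      Submodule.sub_mem _ hmP hβP
    have := lears_ker_inj B P hinj hli h2 h1
    rwa [sub_eq_zero] at this
  exact lears_walk B R P hsym hpos hR Bbar hBbar hPR hinj hli hreflbase
    β hβ m α hα hmΔ hmchain hδβ hlen
end

section
/- Let (R, V) be a LEARS with reflectable subspace V′ and associated data Δ, S_α, and G as in the standard setup. Then: (i) for α, β ∈ Δ with (α, α) ≤ (β, β) one has S_β ⊆ S_α; (ii) for every α ∈ Δ, the set S_α spans V⁰ over ℚ; (iii) if α ∈ Δ has minimal length (i.e., (α,α) ≤ (β,β) for all β ∈ Δ), then the subgroup generated by S_α equals G. -/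
open Submodule

namespace LearsAux

/-- chains of given length for a relation -/
def chn {α : Type*} (S : α → α → Prop) : ℕ → α → α → Prop
  | 0 => fun x y => x = y
  | n+1 => fun x y => ∃ z, S x z ∧ chn S n z y

lemma chn_snoc {α : Type*} {S : α → α → Prop} :
    ∀ {n : ℕ} {a b c : α}, chn S n a b → S b c → chn S (n+1) a c
  | 0, a, b, c, h, hbc => ⟨c, by rw [show a = b from h]; exact hbc, rfl⟩
  | n+1, a, b, c, ⟨z, haz, hz⟩, hbc => ⟨z, haz, chn_snoc hz hbc⟩

lemma chn_map {α : Type*} {S : α → α → Prop} {f : α → α} (hf : ∀ x y, S x y → S (f x) (f y)) :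
    ∀ {n : ℕ} {a b : α}, chn S n a b → chn S n (f a) (f b)
  | 0, a, b, h => by rw [show a = b from h]; rfl
  | n+1, a, b, ⟨z, haz, hz⟩ => ⟨f z, hf _ _ haz, chn_map hf hz⟩

section Bilin
variable {V : Type*} [AddCommGroup V] [Module ℚ V] {B : LinearMap.BilinForm ℚ V}

lemma kerL {t : V} (ht : t ∈ LinearMap.ker B) (y : V) : B t y = 0 := by
  rw [LinearMap.mem_ker.mp ht]; rfl

lemma kerR (hsym : ∀ x y : V, B x y = B y x) {t : V} (ht : t ∈ LinearMap.ker B) (y : V) :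
    B y t = 0 := by rw [hsym]; exact kerL ht y

lemma expand_sq (hsym : ∀ x y : V, B x y = B y x) (x y : V) (a : ℚ) :
    B (x + a • y) (x + a • y) = B x x + 2*a*(B x y) + a^2 * B y y := by
  simp only [map_add, map_smul, LinearMap.add_apply, LinearMap.smul_apply, smul_eq_mul]
  rw [hsym y x]; ring

lemma ker_of_diag (hsym : ∀ x y : V, B x y = B y x) (hpos : ∀ x : V, 0 ≤ B x x)
    {x : V} (hx : B x x = 0) : x ∈ LinearMap.ker B := by
  rw [LinearMap.mem_ker]
  apply LinearMap.ext
  intro y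
  show B x y = 0
  rcases eq_or_ne (B y y) 0 with h0 | h0
  · have h1 := hpos (x + (-(B x y)) • y)
    rw [expand_sq hsym, hx, h0] at h1
    nlinarith [sq_nonneg (B x y)]
  · have hy : 0 < B y y := lt_of_le_of_ne (hpos y) (Ne.symm h0)
    have h1 := hpos (x + (-(B x y / B y y)) • y)
    rw [expand_sq hsym, hx] at h1
    have key : 0 + 2 * (-(B x y / B y y)) * B x y + (-(B x y / B y y))^2 * B y y
        = -((B x y)^2) / B y y := by
      field_simp
      ring
    rw [key] at h1
    have h4 := (le_div_iff₀ hy).mp h1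
    have h5 : (B x y)^2 ≤ 0 := by linarith
    have h6 : (B x y)^2 = 0 := le_antisymm h5 (sq_nonneg _)
    exact pow_eq_zero_iff (two_ne_zero) |>.mp h6

lemma cs_le (hsym : ∀ x y : V, B x y = B y x) (hpos : ∀ x : V, 0 ≤ B x x)
    (x y : V) : (B x y)^2 ≤ B x x * B y y := by
  rcases eq_or_ne (B y y) 0 with h0 | h0
  · have := kerR hsym (ker_of_diag hsym hpos h0) x
    rw [this, h0]
    norm_num
  · have hy : 0 < B y y := lt_of_le_of_ne (hpos y) (Ne.symm h0)
    have h1 := hpos (x + (-(B x y / B y y)) • y)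
    rw [expand_sq hsym] at h1
    have key : B x x + 2 * (-(B x y / B y y)) * B x y + (-(B x y / B y y))^2 * B y y
        = B x x - (B x y)^2 / B y y := by
      field_simp
      ring
    rw [key] at h1
    have h2 : (B x y)^2 / B y y ≤ B x x := by linarith
    calc (B x y)^2 = (B x y)^2 / B y y * B y y := by field_simp
    _ ≤ B x x * B y y := mul_le_mul_of_nonneg_right h2 hy.le

lemma B_add_ker (hsym : ∀ x y : V, B x y = B y x) {s t : V} (hs : s ∈ LinearMap.ker B)
    (ht : t ∈ LinearMap.ker B) (x y : V) : B (x + s) (y + t) = B x y := by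
  simp [map_add, LinearMap.add_apply, kerL hs, kerR hsym ht]

lemma rroot_ker_right (hsym : ∀ x y : V, B x y = B y x) {t : V} (ht : t ∈ LinearMap.ker B)
    (g x : V) : rroot B g (x + t) = rroot B g x + t := by
  unfold rroot
  have : B (x + t) g = B x g := by simp [map_add, LinearMap.add_apply, kerL ht]
  rw [this]; abel

lemma rroot_half (g x : V) : rroot B ((2:ℚ)⁻¹ • g) x = rroot B g x := by
  unfold rroot
  rcases eq_or_ne (B g g) 0 with h0 | h0
  · simp [map_smul, LinearMap.smul_apply, smul_eq_mul, h0, smul_smul]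
  · simp only [map_smul, LinearMap.smul_apply, smul_eq_mul, smul_smul]
    congr 2
    field_simp

lemma B_rroot_left (x y g : V) :
    B (rroot B g x) y = B x y - (2 * B x g / B g g) * B g y := by
  unfold rroot
  simp [map_sub, map_smul, LinearMap.sub_apply, LinearMap.smul_apply, smul_eq_mul]

lemma B_rroot_right (x y g : V) :
    B x (rroot B g y) = B x y - (2 * B y g / B g g) * B x g := by
  unfold rroot
  simp [map_sub, map_smul, LinearMap.sub_apply, LinearMap.smul_apply, smul_eq_mul]

lemma B_rroot_selfadj (hsym : ∀ x y : V, B x y = B y x) (g x y : V) :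
    B (rroot B g x) y = B x (rroot B g y) := by
  rw [B_rroot_left, B_rroot_right, hsym g y]
  ring

lemma B_rroot_rroot (hsym : ∀ x y : V, B x y = B y x) {g : V} (hg : B g g ≠ 0) (x y : V) :
    B (rroot B g x) (rroot B g y) = B x y := by
  unfold rroot
  simp only [map_sub, map_smul, LinearMap.sub_apply, LinearMap.smul_apply, smul_eq_mul]
  rw [hsym g y]
  field_simp
  ring

end Bilin

section Ctx
variable {V : Type*} [AddCommGroup V] [Module ℚ V]

/-- relation for connectivity chains -/
def chainP (B : LinearMap.BilinForm ℚ V) (R : Set V) : V → V → Prop :=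
  fun x y => x ∈ R ∧ y ∈ R ∧ B x y ≠ 0

variable {B : LinearMap.BilinForm ℚ V} {R P : Set V}

lemma spanP_ker
    (hinj : Set.InjOn (LinearMap.ker B).mkQ P)
    (hli : LinearIndependent ℚ ((↑) : ((LinearMap.ker B).mkQ '' P) → V ⧸ LinearMap.ker B))
    {x : V} (hx : x ∈ span ℚ P) (hx0 : x ∈ LinearMap.ker B) : x = 0 := by
  classical
  obtain ⟨c, hcs, hcx⟩ := mem_span_set.mp hx
  set f := (LinearMap.ker B).mkQ with hf
  have hl : Finsupp.mapDomain f c ∈ Finsupp.supported ℚ ℚ (f '' P) := by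
    rw [Finsupp.mem_supported]
    refine subset_trans (Finset.coe_subset.mpr Finsupp.mapDomain_support) ?_
    rw [Finset.coe_image]
    exact Set.image_mono hcs
  have hx' : Finsupp.linearCombination ℚ id c = x := by
    rw [Finsupp.linearCombination_apply]
    exact hcx
  have hcomb : Finsupp.linearCombination ℚ id (Finsupp.mapDomain f c) = 0 := by
    rw [Finsupp.linearCombination_mapDomain]
    have h1 : Finsupp.linearCombination ℚ (id ∘ ⇑f) c
        = f (Finsupp.linearCombination ℚ id c) := by
      rw [Finsupp.apply_linearCombination]
      rfl
    rw [h1, hx']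
    simpa [hf, Submodule.mkQ_apply] using (Submodule.Quotient.mk_eq_zero _).mpr hx0
  have hzero := (linearIndepOn_iff.mp (linearIndependent_subtype_iff.mp hli)) _ hl hcomb
  have hc0 : c = 0 := by
    have hinj' := Finsupp.mapDomain_injOn (M := ℚ) P hinj
    have hmem : c ∈ {w : V →₀ ℚ | ↑w.support ⊆ P} := hcs
    have hmem0 : (0 : V →₀ ℚ) ∈ {w : V →₀ ℚ | ↑w.support ⊆ P} := by simp
    exact hinj' hmem hmem0 (by rw [hzero, Finsupp.mapDomain_zero])
  rw [← hcx, hc0]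
  simp

lemma sub_ker_eq
    (hinj : Set.InjOn (LinearMap.ker B).mkQ P)
    (hli : LinearIndependent ℚ ((↑) : ((LinearMap.ker B).mkQ '' P) → V ⧸ LinearMap.ker B))
    {x y : V} (hx : x ∈ span ℚ P) (hy : y ∈ span ℚ P) (h : x - y ∈ LinearMap.ker B) :
    x = y :=
  sub_eq_zero.mp (spanP_ker hinj hli (sub_mem hx hy) h)

lemma decomp (hspan : span ℚ ((LinearMap.ker B).mkQ '' P) = ⊤) (v : V) :
    ∃ p ∈ span ℚ P, v - p ∈ LinearMap.ker B := by
  have hv : (LinearMap.ker B).mkQ v ∈ span ℚ ((LinearMap.ker B).mkQ '' P) := by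
    rw [hspan]; trivial
  rw [span_image ((LinearMap.ker B).mkQ)] at hv
  obtain ⟨p, hp, hpv⟩ := Submodule.mem_map.mp hv
  refine ⟨p, hp, ?_⟩
  have h0 : (LinearMap.ker B).mkQ (v - p) = 0 := by rw [map_sub, hpv, sub_self]
  have := (LinearMap.mem_ker (f := (LinearMap.ker B).mkQ)).mpr h0
  rwa [Submodule.ker_mkQ] at this

lemma connect (hR : IsLEARS B R) {r r' : V} (hr : r ∈ R) (hr' : r' ∈ R) :
    ∃ n, chn (chainP B R) n r r' := by
  classical
  set C : Set V := {y | y ∈ R ∧ ∃ n, chn (chainP B R) n r y} with hC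
  have hCsub : C ⊆ R := fun z hz => hz.1
  have hsplit : R = C ∪ (R \ C) := by
    ext z
    constructor
    · intro hz
      by_cases h : z ∈ C
      · exact Or.inl h
      · exact Or.inr ⟨hz, h⟩
    · rintro (h | h)
      · exact hCsub h
      · exact h.1
  have horth : ∀ x ∈ C, ∀ y ∈ R \ C, B x y = 0 := by
    rintro x ⟨hxR, n, hn⟩ y ⟨hyR, hyC⟩
    by_contra hne
    exact hyC ⟨hyR, n+1, chn_snoc hn ⟨hxR, hyR, hne⟩⟩
  have hrC : r ∈ C := ⟨hr, 0, rfl⟩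
  rcases hR.2.2.2.2 C (R \ C) hsplit horth with h | h
  · exact absurd (h ▸ hrC) (Set.notMem_empty r)
  · have hr'C : r' ∈ C := by
      have : r' ∈ C ∪ (R \ C) := by rw [← hsplit]; exact hr'
      rcases this with h' | h'
      · exact h'
      · exact absurd (h ▸ h') (Set.notMem_empty r')
    exact hr'C.2

variable {Bbar : LinearMap.BilinForm ℚ (V ⧸ LinearMap.ker B)}

lemma mkQ_rroot
    (hBbar : ∀ x y : V, Bbar ((LinearMap.ker B).mkQ x) ((LinearMap.ker B).mkQ y) = B x y)
    (g x : V) :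
    (LinearMap.ker B).mkQ (rroot B g x)
      = rroot Bbar ((LinearMap.ker B).mkQ g) ((LinearMap.ker B).mkQ x) := by
  unfold rroot
  rw [map_sub, map_smul, hBbar, hBbar]

lemma lift_foldr (hR : IsLEARS B R) (hPR : P ⊆ R)
    (hBbar : ∀ x y : V, Bbar ((LinearMap.ker B).mkQ x) ((LinearMap.ker B).mkQ y) = B x y) :
    ∀ (l : List (V ⧸ LinearMap.ker B)) (b : V ⧸ LinearMap.ker B),
      (∀ γ ∈ l, γ ∈ (LinearMap.ker B).mkQ '' P) → b ∈ (LinearMap.ker B).mkQ '' P →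
      ∃ g, g ∈ R ∧ g ∈ span ℚ P ∧ (LinearMap.ker B).mkQ g = l.foldr (rroot Bbar) b
  | [], b, _, hb => by
      obtain ⟨p, hpP, hpb⟩ := hb
      exact ⟨p, hPR hpP, Submodule.subset_span hpP, by simpa using hpb⟩
  | γ :: l, b, hl, hb => by
      obtain ⟨g, hgR, hgsp, hgq⟩ :=
        lift_foldr hR hPR hBbar l b (fun x hx => hl x (List.mem_cons_of_mem _ hx)) hb
      obtain ⟨p, hpP, hpγ⟩ := hl γ List.mem_cons_self
      refine ⟨rroot B p g, hR.2.2.2.1 p (hPR hpP) g hgR, ?_, ?_⟩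
      · unfold rroot
        exact sub_mem hgsp (Submodule.smul_mem _ _ (Submodule.subset_span hpP))
      · rw [List.foldr_cons, mkQ_rroot hBbar, hpγ, hgq]

lemma delta_red (hR : IsLEARS B R) (hPR : P ⊆ R)
    (hinj : Set.InjOn (LinearMap.ker B).mkQ P)
    (hli : LinearIndependent ℚ ((↑) : ((LinearMap.ker B).mkQ '' P) → V ⧸ LinearMap.ker B))
    (hBbar : ∀ x y : V, Bbar ((LinearMap.ker B).mkQ x) ((LinearMap.ker B).mkQ y) = B x y)
    (hreflbase : ∀ a ∈ RbarRed B R,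
      ∃ (l : List (V ⧸ LinearMap.ker B)) (b : V ⧸ LinearMap.ker B),
        (∀ γ ∈ l, γ ∈ (LinearMap.ker B).mkQ '' P) ∧
        b ∈ (LinearMap.ker B).mkQ '' P ∧
        a = l.foldr (rroot Bbar) b)
    {δ : V} (hδ : δ ∈ DeltaSet B R P) :
    δ ∈ R ∨ (2:ℚ)⁻¹ • δ ∈ R := by
  classical
  obtain ⟨hδsp, s, hs, hδs⟩ := hδ
  have hfs : (LinearMap.ker B).mkQ s = 0 := (Submodule.Quotient.mk_eq_zero _).mpr hs
  have hfδ : (LinearMap.ker B).mkQ (δ + s) = (LinearMap.ker B).mkQ δ := by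
    rw [map_add, hfs, add_zero]
  have haR : (LinearMap.ker B).mkQ δ ∈ Rbar B R := ⟨δ + s, hδs, hfδ⟩
  have hlift : ∀ a ∈ RbarRed B R, ∀ w ∈ span ℚ P,
      (LinearMap.ker B).mkQ w = a → w ∈ R := by
    intro a ha w hw hwa
    obtain ⟨l, b, hl, hb, hfold⟩ := hreflbase a ha
    obtain ⟨g, hgR, hgsp, hgq⟩ := lift_foldr hR hPR hBbar l b hl hb
    have hgw : g = w := by
      apply sub_ker_eq hinj hli hgsp hw
      have h0 : (LinearMap.ker B).mkQ (g - w) = 0 := by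
        rw [map_sub, hgq, ← hfold, hwa, sub_self]
      have := (LinearMap.mem_ker (f := (LinearMap.ker B).mkQ)).mpr h0
      rwa [Submodule.ker_mkQ] at this
    rwa [hgw] at hgR
  by_cases hred : (LinearMap.ker B).mkQ δ ∈ RbarRed B R
  · exact Or.inl (hlift _ hred δ hδsp rfl)
  · have hhalf : (2:ℚ)⁻¹ • (LinearMap.ker B).mkQ δ ∈ Rbar B R := by
      by_contra hcon
      exact hred ⟨haR, hcon⟩
    have hred2 : (2:ℚ)⁻¹ • (LinearMap.ker B).mkQ δ ∈ RbarRed B R := by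
      refine ⟨hhalf, ?_⟩
      rintro ⟨r₄, hr₄R, hr₄q⟩
      have hcc : B (δ + s) (δ + s) ≠ 0 := hR.1 _ hδs
      have hBr : B r₄ (δ + s) = (4:ℚ)⁻¹ * B (δ + s) (δ + s) := by
        rw [← hBbar r₄ (δ + s), hr₄q, hfδ, smul_smul]
        rw [map_smul, LinearMap.smul_apply, smul_eq_mul, ← hfδ, hBbar]
        norm_num
      obtain ⟨n, hn⟩ := hR.2.2.1 r₄ hr₄R (δ + s) hδs
      rw [hBr] at hn
      set cc := B (δ + s) (δ + s) with hccdef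
      have h12 : (n : ℚ) = 1/2 := by
        rw [← hn]
        rw [div_eq_div_iff hcc (by norm_num : (2:ℚ) ≠ 0)]
        ring
      have : (2*n : ℚ) = 1 := by rw [h12]; norm_num
      have h2n : (2*n : ℤ) = 1 := by exact_mod_cast this
      omega
    have hh : (LinearMap.ker B).mkQ ((2:ℚ)⁻¹ • δ) = (2:ℚ)⁻¹ • (LinearMap.ker B).mkQ δ :=
      map_smul _ _ _
    exact Or.inr (hlift _ hred2 _ (Submodule.smul_mem _ _ hδsp) hh)

lemma chn_succ_iff {α : Type*} {S : α → α → Prop} {n : ℕ} {x y : α} :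
    chn S (n+1) x y ↔ ∃ z, S x z ∧ chn S n z y := Iff.rfl

lemma chn_zero_iff {α : Type*} {S : α → α → Prop} {x y : α} :
    chn S 0 x y ↔ x = y := Iff.rfl

lemma B_addR (hsym : ∀ x y : V, B x y = B y x) {t : V} (ht : t ∈ LinearMap.ker B) (x y : V) :
    B x (y + t) = B x y := by rw [map_add, kerR hsym ht, add_zero]

lemma B_addL {s : V} (hs : s ∈ LinearMap.ker B) (x y : V) :
    B (x + s) y = B x y := by
  rw [map_add, LinearMap.add_apply, kerL hs, add_zero]

lemma B_smulL (q : ℚ) (x y : V) : B (q • x) y = q * B x y := by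
  rw [map_smul, LinearMap.smul_apply, smul_eq_mul]

lemma B_smulR (q : ℚ) (x y : V) : B x (q • y) = q * B x y := by
  rw [map_smul, smul_eq_mul]

lemma neg_mem (hR : IsLEARS B R) {x : V} (hx : x ∈ R) : -x ∈ R := by
  have h := hR.2.2.2.1 x hx x hx
  have hx0 := hR.1 x hx
  have he : rroot B x x = -x := by
    unfold rroot
    have h2 : 2 * B x x / B x x = 2 := by field_simp
    rw [h2]
    module
  rwa [he] at h

lemma reflect_closed (hR : IsLEARS B R) {d : V} (hd : d ∈ R ∨ (2:ℚ)⁻¹ • d ∈ R) :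
    ∀ x ∈ R, rroot B d x ∈ R := by
  intro x hx
  rcases hd with h | h
  · exact hR.2.2.2.1 d h x hx
  · have h2 := hR.2.2.2.1 _ h x hx
    rwa [rroot_half] at h2

lemma K2 (hsym : ∀ x y : V, B x y = B y x) (hR : IsLEARS B R) {a t : V}
    (haR : a ∈ R ∨ (2:ℚ)⁻¹ • a ∈ R) (ht : t ∈ LinearMap.ker B) (h : a - t ∈ R) :
    a + t ∈ R := by
  have haa0 : B a a ≠ 0 := by
    rcases haR with h' | h'
    · exact hR.1 a h'
    · have := hR.1 _ h'
      rw [B_smulL, B_smulR] at this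
      intro hc; rw [hc] at this; simp at this
  have hu := reflect_closed hR haR _ h
  have he : rroot B a (a - t) = -(a + t) := by
    unfold rroot
    have h1 : B (a - t) a = B a a := by
      rw [sub_eq_add_neg, B_addL (neg_mem_iff.mpr ht)]
    rw [h1]
    have h2 : 2 * B a a / B a a = 2 := by field_simp
    rw [h2]
    module
  rw [he] at hu
  have := neg_mem hR hu
  rwa [neg_neg] at this

lemma K3 (hsym : ∀ x y : V, B x y = B y x) (hR : IsLEARS B R) {a t : V}
    (haR : a ∈ R) (ht : t ∈ LinearMap.ker B) (h2 : (2:ℚ) • a + t ∈ R) :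
    a + t ∈ R := by
  have haa0 : B a a ≠ 0 := hR.1 a haR
  have hu := hR.2.2.2.1 _ h2 a haR
  have he : rroot B ((2:ℚ) • a + t) a = -(a + t) := by
    unfold rroot
    have e1 : B a ((2:ℚ) • a + t) = 2 * B a a := by rw [B_addR hsym ht, B_smulR]
    have e2 : B ((2:ℚ) • a + t) ((2:ℚ) • a + t) = 4 * B a a := by
      rw [B_addL ht, B_addR hsym ht, B_smulL, B_smulR]; ring
    rw [e1, e2]
    have h3 : 2 * (2 * B a a) / (4 * B a a) = 1 := by field_simp; ring
    rw [h3]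
    module
  rw [he] at hu
  have := neg_mem hR hu
  rwa [neg_neg] at this

end Ctx

section Main
variable {V : Type*} [AddCommGroup V] [Module ℚ V]
  {B : LinearMap.BilinForm ℚ V} {R P : Set V}
  {Bbar : LinearMap.BilinForm ℚ (V ⧸ LinearMap.ker B)}

set_option maxHeartbeats 2000000 in
lemma main_lemma
    (hsym : ∀ x y : V, B x y = B y x) (hpos : ∀ x : V, 0 ≤ B x x)
    (hR : IsLEARS B R) (hPR : P ⊆ R)
    (hinj : Set.InjOn (LinearMap.ker B).mkQ P)
    (hli : LinearIndependent ℚ ((↑) : ((LinearMap.ker B).mkQ '' P) → V ⧸ LinearMap.ker B))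
    (hspan : span ℚ ((LinearMap.ker B).mkQ '' P) = ⊤)
    (hBbar : ∀ x y : V, Bbar ((LinearMap.ker B).mkQ x) ((LinearMap.ker B).mkQ y) = B x y)
    (hreflbase : ∀ a ∈ RbarRed B R,
      ∃ (l : List (V ⧸ LinearMap.ker B)) (b : V ⧸ LinearMap.ker B),
        (∀ γ ∈ l, γ ∈ (LinearMap.ker B).mkQ '' P) ∧
        b ∈ (LinearMap.ker B).mkQ '' P ∧
        a = l.foldr (rroot Bbar) b) :
    ∀ n : ℕ, ∀ a d s₀ t : V, a ∈ DeltaSet B R P → d ∈ DeltaSet B R P →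
      s₀ ∈ transSet B R a → t ∈ transSet B R d →
      chn (chainP B R) n (a + s₀) (d + t) →
      (B a a ≤ B d d → t ∈ transSet B R a) ∧ t ∈ span ℚ (transSet B R a) := by
  intro n
  induction n using Nat.strong_induction_on with
  | _ n IH =>
  intro a d s₀ t ha hd hs₀ ht hchain
  obtain ⟨hasp, -⟩ := id ha
  obtain ⟨hdsp, -⟩ := id hd
  obtain ⟨hs₀k, hs₀R⟩ := id hs₀
  obtain ⟨htk, htR⟩ := id ht
  rcases n with _ | n'
  · -- length-0 chain : a + s₀ = d + t
    have heq : a + s₀ = d + t := hchain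
    have had : a - d ∈ LinearMap.ker B := by
      have h1 : a - d = t - s₀ := by
        have h2 : a + s₀ - (d + t) = 0 := by rw [heq]; abel
        have h3 : a - d - (t - s₀) = 0 := by rw [← h2]; abel
        have := sub_eq_zero.mp h3
        exact this
      rw [h1]
      exact sub_mem htk hs₀k
    have haeq : a = d := sub_ker_eq hinj hli hasp hdsp had
    have hts : t = s₀ := by
      rw [haeq] at heq
      exact (add_left_cancel heq).symm
    constructor
    · intro _
      rw [hts]; exact hs₀
    · rw [hts]; exact Submodule.subset_span hs₀
  rcases n' with _ | m
  · -- length-1 chain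
    rw [chn_succ_iff] at hchain
    obtain ⟨z, hlink, hz0⟩ := hchain
    have hzeq : z = d + t := hz0
    rw [hzeq] at hlink
    obtain ⟨hraR, hrdR, hBne⟩ := hlink
    have hBad : B a d ≠ 0 := by
      rwa [B_add_ker hsym hs₀k htk] at hBne
    have haa : B a a ≠ 0 := by
      have h := hR.1 _ hs₀R
      rwa [B_add_ker hsym hs₀k hs₀k] at h
    have hdd : B d d ≠ 0 := by
      have h := hR.1 _ htR
      rwa [B_add_ker hsym htk htk] at h
    have haapos : 0 < B a a := lt_of_le_of_ne (hpos a) (Ne.symm haa)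
    have hddpos : 0 < B d d := lt_of_le_of_ne (hpos d) (Ne.symm hdd)
    have hdR2 := delta_red hR hPR hinj hli hBbar hreflbase hd
    have haR2 := delta_red hR hPR hinj hli hBbar hreflbase ha
    -- span part (uniform)
    set c := 2 * B a d / B d d with hc
    have hc0 : c ≠ 0 := div_ne_zero (mul_ne_zero two_ne_zero hBad) hdd
    have hy₁R : rroot B (d + t) (a + s₀) ∈ R := hR.2.2.2.1 _ hrdR _ hraR
    have hy₁ : rroot B (d + t) (a + s₀) = a + s₀ - c • (d + t) := by
      unfold rroot
      rw [B_add_ker hsym hs₀k htk, B_add_ker hsym htk htk]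
    rw [hy₁] at hy₁R
    have hy₂R : rroot B d (a + s₀ - c • (d + t)) ∈ R := reflect_closed hR hdR2 _ hy₁R
    have hy₂ : rroot B d (a + s₀ - c • (d + t)) = a + (s₀ - c • t) := by
      unfold rroot
      have e1 : B (a + s₀ - c • (d + t)) d = - B a d := by
        rw [map_sub, LinearMap.sub_apply, B_addL hs₀k, B_smulL, B_addL htk]
        rw [hc]
        field_simp
        ring
      rw [e1]
      have e2 : 2 * (- B a d) / B d d = -c := by rw [hc]; ring
      rw [e2]
      module
    rw [hy₂] at hy₂R
    have hu : s₀ - c • t ∈ transSet B R a :=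
      ⟨sub_mem hs₀k (Submodule.smul_mem _ _ htk), hy₂R⟩
    have hspanpart : t ∈ span ℚ (transSet B R a) := by
      have h1 : s₀ - (s₀ - c • t) ∈ span ℚ (transSet B R a) :=
        sub_mem (Submodule.subset_span hs₀) (Submodule.subset_span hu)
      have h2 : c • t = s₀ - (s₀ - c • t) := by abel
      have h3 : t = c⁻¹ • (c • t) := by rw [smul_smul, inv_mul_cancel₀ hc0, one_smul]
      rw [h3, h2]
      exact Submodule.smul_mem _ _ h1
    refine ⟨fun hle => ?_, hspanpart⟩
    by_cases hprop : ∃ q : ℚ, d = q • a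
    · -- proportional case
      obtain ⟨q, hq⟩ := hprop
      have hBadq : B a d = q * B a a := by rw [hq, B_smulR]
      have hBddq : B d d = q^2 * B a a := by rw [hq, B_smulL, B_smulR]; ring
      have hq0 : q ≠ 0 := fun h => hdd (by rw [hBddq, h]; ring)
      have hq1 : 1 ≤ q^2 := by
        rw [hBddq] at hle
        nlinarith
      obtain ⟨n₂, hn₂⟩ := hR.2.2.1 (a + s₀) hraR (d + t) hrdR
      rw [B_add_ker hsym hs₀k htk, B_add_ker hsym htk htk, hBadq, hBddq] at hn₂
      have hq2 : (n₂ : ℚ) * q = 2 := by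
        rw [← hn₂]
        field_simp
      have hn₂0 : n₂ ≠ 0 := by
        intro h
        rw [h] at hq2
        norm_num at hq2
      have hn₂sq : (n₂ : ℚ)^2 ≤ 4 := by nlinarith [sq_nonneg ((n₂:ℚ) * q), sq_nonneg (n₂:ℚ)]
      have hn₂sqZ : n₂^2 ≤ 4 := by exact_mod_cast hn₂sq
      have hb1 : -2 ≤ n₂ := by nlinarith
      have hb2 : n₂ ≤ 2 := by nlinarith
      have haRhalf : ∀ q' : ℚ, q = q' → (q' = 2 ∨ q' = -2) → a ∈ R := by
        intro q' hqq' hq'v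
        rcases haR2 with h | h
        · exact h
        · exfalso
          obtain ⟨mm, hmm⟩ := hR.2.2.1 _ h (d + t) hrdR
          rw [B_smulL, B_addR hsym htk, B_add_ker hsym htk htk, hBadq, hBddq] at hmm
          have hmm2 : (mm : ℚ) * q = 1 := by
            rw [← hmm]
            field_simp
          rcases hq'v with h' | h' <;> rw [hqq', h'] at hmm2
          · have : ((2 * mm : ℤ) : ℚ) = 1 := by push_cast; linarith
            have h2 : (2 * mm : ℤ) = 1 := by exact_mod_cast this
            omega
          · have : ((2 * mm : ℤ) : ℚ) = -1 := by push_cast; linarith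
            have h2 : (2 * mm : ℤ) = -1 := by exact_mod_cast this
            omega
      interval_cases n₂
      · -- n₂ = -2 : q = -1
        have hqv : q = -1 := by
          push_cast at hq2
          linarith
        have heq1 : a - t = -(d + t) := by rw [hq, hqv]; module
        have h5 : a - t ∈ R := by rw [heq1]; exact neg_mem hR htR
        exact ⟨htk, K2 hsym hR haR2 htk h5⟩
      · -- n₂ = -1 : q = -2
        have hqv : q = -2 := by
          push_cast at hq2
          linarith
        have haR : a ∈ R := haRhalf (-2) hqv (Or.inr rfl)
        have hmt : -t ∈ LinearMap.ker B := neg_mem_iff.mpr htk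
        have h6 : (2:ℚ) • a + (-t) ∈ R := by
          have heq2 : (2:ℚ) • a + (-t) = -(d + t) := by rw [hq, hqv]; module
          rw [heq2]; exact neg_mem hR htR
        have h7 := K3 hsym hR haR hmt h6
        have h8 : a - t ∈ R := by rwa [← sub_eq_add_neg] at h7
        exact ⟨htk, K2 hsym hR haR2 htk h8⟩
      · exact absurd rfl hn₂0
      · -- n₂ = 1 : q = 2
        have hqv : q = 2 := by
          push_cast at hq2
          linarith
        have haR : a ∈ R := haRhalf 2 hqv (Or.inl rfl)
        have h6 : (2:ℚ) • a + t ∈ R := by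
          have heq2 : (2:ℚ) • a + t = d + t := by rw [hq, hqv]
          rw [heq2]; exact htR
        exact ⟨htk, K3 hsym hR haR htk h6⟩
      · -- n₂ = 2 : q = 1
        have hqv : q = 1 := by
          push_cast at hq2
          linarith
        have hda : d = a := by rw [hq, hqv, one_smul]
        rw [hda] at ht
        exact ht
    · -- independent case
      have hcs : (B a d)^2 < B a a * B d d := by
        rcases lt_or_eq_of_le (cs_le hsym hpos a d) with h | h
        · exact h
        · exfalso
          set z := (B d d) • a - (B a d) • d with hz
          have hzz : B z z = 0 := by
            rw [hz]
            simp only [map_sub, map_smul, LinearMap.sub_apply, LinearMap.smul_apply,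
              smul_eq_mul]
            rw [hsym d a]
            nlinarith [h]
          have hzker := ker_of_diag hsym hpos hzz
          have hzsp : z ∈ span ℚ P :=
            sub_mem (Submodule.smul_mem _ _ hasp) (Submodule.smul_mem _ _ hdsp)
          have hz0 : z = 0 := spanP_ker hinj hli hzsp hzker
          apply hprop
          refine ⟨B d d / B a d, ?_⟩
          have hsub : (B d d) • a - (B a d) • d = 0 := by rw [← hz]; exact hz0
          have he : (B d d) • a = (B a d) • d := sub_eq_zero.mp hsub
          calc d = (B a d)⁻¹ • ((B a d) • d) := by
                rw [smul_smul, inv_mul_cancel₀ hBad, one_smul]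
          _ = (B a d)⁻¹ • ((B d d) • a) := by rw [he]
          _ = (B d d / B a d) • a := by rw [smul_smul, div_eq_inv_mul]
      obtain ⟨n₁, hn₁⟩ := hR.2.2.1 (a + s₀) hraR (d + t) hrdR
      rw [B_add_ker hsym hs₀k htk, B_add_ker hsym htk htk] at hn₁
      have hn₁0 : n₁ ≠ 0 := by
        intro h
        apply hBad
        rw [h] at hn₁
        push_cast at hn₁
        rw [div_eq_iff hdd] at hn₁
        linarith
      have hsq : (n₁ : ℚ)^2 < 4 := by
        rw [← hn₁, div_pow]
        rw [div_lt_iff₀ (by positivity)]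
        nlinarith [hle, hddpos, hcs]
      have hsqZ : n₁^2 < 4 := by exact_mod_cast hsq
      have hv : n₁ = 1 ∨ n₁ = -1 := by
        have hlow : -2 < n₁ := by nlinarith
        have hhigh : n₁ < 2 := by nlinarith
        omega
      have haR : a ∈ R := by
        rcases haR2 with h | h
        · exact h
        · exfalso
          obtain ⟨mm, hmm⟩ := hR.2.2.1 _ h (d + t) hrdR
          rw [B_smulL, B_addR hsym htk, B_add_ker hsym htk htk] at hmm
          rw [div_eq_iff hdd] at hmm hn₁
          have h2m : 2 * (mm:ℚ) * B d d = (n₁:ℚ) * B d d := by linarith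
          have h2m' : 2 * (mm:ℚ) = (n₁:ℚ) := mul_right_cancel₀ hdd h2m
          have h2mz : 2 * mm = n₁ := by exact_mod_cast h2m'
          rcases hv with h' | h' <;> omega
      rcases hv with h1 | h1
      · -- n₁ = 1
        have hcoef : 2 * B a d / B d d = 1 := by rw [hn₁, h1]; norm_num
        have hval : 2 * B a d = B d d := by
          rw [div_eq_iff hdd] at hcoef
          linarith
        have hx₁R : rroot B (d + t) a ∈ R := hR.2.2.2.1 _ hrdR a haR
        have hx₁ : rroot B (d + t) a = a - (d + t) := by
          unfold rroot
          rw [B_addR hsym htk, B_add_ker hsym htk htk, hcoef]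
          module
        rw [hx₁] at hx₁R
        have hx₂R : rroot B d (a - (d + t)) ∈ R := reflect_closed hR hdR2 _ hx₁R
        have hx₂ : rroot B d (a - (d + t)) = a - t := by
          unfold rroot
          have e1 : B (a - (d + t)) d = B a d - B d d := by
            rw [map_sub, LinearMap.sub_apply, B_addL htk]
          rw [e1]
          have e2 : 2 * (B a d - B d d) / B d d = -1 := by
            rw [div_eq_iff hdd]
            linarith
          rw [e2]
          module
        rw [hx₂] at hx₂R
        exact ⟨htk, K2 hsym hR haR2 htk hx₂R⟩
      · -- n₁ = -1
        have hcoef : 2 * B a d / B d d = -1 := by rw [hn₁, h1]; norm_num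
        have hval : 2 * B a d = - B d d := by
          rw [div_eq_iff hdd] at hcoef
          linarith
        have hx₁R : rroot B (d + t) a ∈ R := hR.2.2.2.1 _ hrdR a haR
        have hx₁ : rroot B (d + t) a = a + (d + t) := by
          unfold rroot
          rw [B_addR hsym htk, B_add_ker hsym htk htk, hcoef]
          module
        rw [hx₁] at hx₁R
        have hx₂R : rroot B d (a + (d + t)) ∈ R := reflect_closed hR hdR2 _ hx₁R
        have hx₂ : rroot B d (a + (d + t)) = a + t := by
          unfold rroot
          have e1 : B (a + (d + t)) d = B a d + B d d := by
            rw [map_add, LinearMap.add_apply, B_addL htk]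
          rw [e1]
          have e2 : 2 * (B a d + B d d) / B d d = 1 := by
            rw [div_eq_iff hdd]
            linarith
          rw [e2]
          module
        rw [hx₂] at hx₂R
        exact ⟨htk, hx₂R⟩
  · -- length m+2 : induction step
    rw [chn_succ_iff] at hchain
    obtain ⟨z₁, hlink1, hchain1⟩ := hchain
    rw [chn_succ_iff] at hchain1
    obtain ⟨z₂, hlink2, htail⟩ := hchain1
    obtain ⟨-, hz₁R, hB01⟩ := hlink1
    obtain ⟨-, hz₂R, hB12⟩ := hlink2
    by_cases h02 : B (a + s₀) z₂ = 0
    · -- reflect the tail by the Delta-part of z₁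
      obtain ⟨p₁, hp₁sp, hk₁⟩ := decomp hspan z₁
      have hz₁dec : z₁ = p₁ + (z₁ - p₁) := by abel
      have hp₁Δ : p₁ ∈ DeltaSet B R P := ⟨hp₁sp, z₁ - p₁, hk₁, by rw [← hz₁dec]; exact hz₁R⟩
      have hp₁R2 := delta_red hR hPR hinj hli hBbar hreflbase hp₁Δ
      have hp₁p₁ : B p₁ p₁ ≠ 0 := by
        have h := hR.1 _ hz₁R
        rw [hz₁dec, B_add_ker hsym hk₁ hk₁] at h
        exact h
      have hσR : ∀ x ∈ R, rroot B p₁ x ∈ R := reflect_closed hR hp₁R2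
      have hσB : ∀ x y : V, B (rroot B p₁ x) (rroot B p₁ y) = B x y :=
        B_rroot_rroot hsym hp₁p₁
      have hmap : ∀ x y : V, chainP B R x y → chainP B R (rroot B p₁ x) (rroot B p₁ y) := by
        rintro x y ⟨hx, hy, hxy⟩
        exact ⟨hσR x hx, hσR y hy, by rw [hσB]; exact hxy⟩
      have htail' : chn (chainP B R) m (rroot B p₁ z₂) (rroot B p₁ (d + t)) :=
        chn_map hmap htail
      have hσdt : rroot B p₁ (d + t) = rroot B p₁ d + t := rroot_ker_right hsym htk p₁ d
      have hdstarsp : rroot B p₁ d ∈ span ℚ P := by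
        unfold rroot
        exact sub_mem hdsp (Submodule.smul_mem _ _ hp₁sp)
      have hdstarR : rroot B p₁ d + t ∈ R := by
        rw [← hσdt]
        exact hσR _ htR
      have hdstarΔ : rroot B p₁ d ∈ DeltaSet B R P := ⟨hdstarsp, t, htk, hdstarR⟩
      have htstar : t ∈ transSet B R (rroot B p₁ d) := ⟨htk, hdstarR⟩
      have hBdstar : B (rroot B p₁ d) (rroot B p₁ d) = B d d := hσB d d
      -- the new first link
      have hBap₁ : B (a + s₀) p₁ ≠ 0 := by
        have h := hB01
        rw [hz₁dec, B_addR hsym hk₁] at h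
        exact h
      have hBp₁z₂ : B p₁ z₂ ≠ 0 := by
        have h := hB12
        rw [hz₁dec, B_addL hk₁] at h
        exact h
      have hlinknew : B (a + s₀) (rroot B p₁ z₂) ≠ 0 := by
        rw [← B_rroot_selfadj hsym, B_rroot_left, h02]
        simp only [zero_sub, neg_ne_zero]
        exact mul_ne_zero (div_ne_zero (mul_ne_zero two_ne_zero hBap₁) hp₁p₁) hBp₁z₂
      have hchainnew : chn (chainP B R) (m + 1) (a + s₀) (rroot B p₁ d + t) := by
        rw [chn_succ_iff]
        refine ⟨rroot B p₁ z₂, ⟨hs₀R, hσR _ hz₂R, hlinknew⟩, ?_⟩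
        rw [← hσdt]
        exact htail'
      have hres := IH (m + 1) (by omega) a (rroot B p₁ d) s₀ t ha hdstarΔ hs₀ htstar hchainnew
      refine ⟨fun hle => hres.1 ?_, hres.2⟩
      rw [hBdstar]
      exact hle
    · -- skip z₁
      have hchainnew : chn (chainP B R) (m + 1) (a + s₀) (d + t) := by
        rw [chn_succ_iff]
        exact ⟨z₂, ⟨hs₀R, hz₂R, h02⟩, htail⟩
      exact IH (m + 1) (by omega) a d s₀ t ha hd hs₀ ht hchainnew

end Main

end LearsAux

/-- (i) longer roots have smaller translation sets; (ii) each `S_α` spans `V⁰`;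
(iii) for `α` of minimal length, `⟨S_α⟩ = G`. -/
theorem transSet_antitone_spans_and_generates
    {V : Type*} [AddCommGroup V] [Module ℚ V]
    (B : LinearMap.BilinForm ℚ V)
    (hsym : ∀ x y : V, B x y = B y x)
    (hpos : ∀ x : V, 0 ≤ B x x)
    (R : Set V) (hR : IsLEARS B R)
    (Bbar : LinearMap.BilinForm ℚ (V ⧸ LinearMap.ker B))
    (hBbar : ∀ x y : V,
      Bbar ((LinearMap.ker B).mkQ x) ((LinearMap.ker B).mkQ y) = B x y)
    (P : Set V) (hPR : P ⊆ R)
    (hinj : Set.InjOn (LinearMap.ker B).mkQ P)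
    (hPred : (LinearMap.ker B).mkQ '' P ⊆ RbarRed B R)
    (hli : LinearIndependent ℚ
      ((↑) : ((LinearMap.ker B).mkQ '' P) → V ⧸ LinearMap.ker B))
    (hspan : Submodule.span ℚ ((LinearMap.ker B).mkQ '' P) = ⊤)
    (hreflbase : ∀ a ∈ RbarRed B R,
      ∃ (l : List (V ⧸ LinearMap.ker B)) (b : V ⧸ LinearMap.ker B),
        (∀ γ ∈ l, γ ∈ (LinearMap.ker B).mkQ '' P) ∧
        b ∈ (LinearMap.ker B).mkQ '' P ∧
        a = l.foldr (rroot Bbar) b)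
    :
    (∀ α ∈ DeltaSet B R P, ∀ β ∈ DeltaSet B R P,
      B α α ≤ B β β → transSet B R β ⊆ transSet B R α) ∧
    (∀ α ∈ DeltaSet B R P, Submodule.span ℚ (transSet B R α) = LinearMap.ker B) ∧
    (∀ α ∈ DeltaSet B R P, (∀ β ∈ DeltaSet B R P, B α α ≤ B β β) →
      AddSubgroup.closure (transSet B R α) = Ggrp B R P) := by
  classical
  have htrans : ∀ α ∈ DeltaSet B R P, ∀ β ∈ DeltaSet B R P,
      B α α ≤ B β β → transSet B R β ⊆ transSet B R α := by
    intro α hα β hβ hle t htmem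
    obtain ⟨-, s₀, hs₀k, hs₀R⟩ := id hα
    have hs₀ : s₀ ∈ transSet B R α := ⟨hs₀k, hs₀R⟩
    obtain ⟨n, hchain⟩ := LearsAux.connect hR hs₀R htmem.2
    exact (LearsAux.main_lemma hsym hpos hR hPR hinj hli hspan hBbar hreflbase
      n α β s₀ t hα hβ hs₀ htmem hchain).1 hle
  have hspans : ∀ α ∈ DeltaSet B R P,
      Submodule.span ℚ (transSet B R α) = LinearMap.ker B := by
    intro α hα
    apply le_antisymm
    · rw [Submodule.span_le]
      intro x hx
      exact hx.1
    · obtain ⟨-, s₀, hs₀k, hs₀R⟩ := id hα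
      have hs₀ : s₀ ∈ transSet B R α := ⟨hs₀k, hs₀R⟩
      have hRsub : R ⊆ ↑(Submodule.span ℚ P ⊔ Submodule.span ℚ (transSet B R α)) := by
        intro r hr
        obtain ⟨p, hpsp, hk⟩ := LearsAux.decomp hspan r
        have hrdec : r = p + (r - p) := by abel
        have hrR : p + (r - p) ∈ R := by rw [← hrdec]; exact hr
        have hpΔ : p ∈ DeltaSet B R P := ⟨hpsp, r - p, hk, hrR⟩
        have hsS : r - p ∈ transSet B R p := ⟨hk, hrR⟩
        obtain ⟨n, hchain⟩ := LearsAux.connect hR hs₀R hrR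
        have hsp := (LearsAux.main_lemma hsym hpos hR hPR hinj hli hspan hBbar hreflbase
          n α p s₀ (r - p) hα hpΔ hs₀ hsS hchain).2
        have hmem : p + (r - p) ∈ Submodule.span ℚ P ⊔ Submodule.span ℚ (transSet B R α) :=
          add_mem (Submodule.mem_sup_left hpsp) (Submodule.mem_sup_right hsp)
        rwa [← hrdec] at hmem
      have htop : Submodule.span ℚ P ⊔ Submodule.span ℚ (transSet B R α) = ⊤ := by
        rw [eq_top_iff, ← hR.2.1]
        exact Submodule.span_le.mpr hRsub
      intro x hx
      have hxW : x ∈ Submodule.span ℚ P ⊔ Submodule.span ℚ (transSet B R α) := by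
        rw [htop]; trivial
      obtain ⟨p, hp, w, hw, hxpw⟩ := Submodule.mem_sup.mp hxW
      have hwker : w ∈ LinearMap.ker B := by
        have hsub : transSet B R α ⊆ (LinearMap.ker B : Set V) := fun y hy => hy.1
        exact (Submodule.span_le.mpr hsub) hw
      have hpker : p ∈ LinearMap.ker B := by
        have hpe : p = x - w := by rw [← hxpw]; abel
        rw [hpe]
        exact sub_mem hx hwker
      have hp0 : p = 0 := LearsAux.spanP_ker hinj hli hp hpker
      rw [← hxpw, hp0, zero_add]
      exact hw
  refine ⟨htrans, hspans, ?_⟩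
  intro α hα hmin
  apply le_antisymm
  · apply AddSubgroup.closure_mono
    intro x hx
    exact Set.mem_biUnion hα hx
  · rw [Ggrp]
    apply (AddSubgroup.closure_le _).mpr
    intro x hx
    rcases Set.mem_iUnion₂.mp hx with ⟨β, hβ, hxβ⟩
    exact AddSubgroup.subset_closure (htrans α hα β hβ (hmin β hβ) hxβ)
end

section
/- Let (R, V) be a LEARS with radical V⁰. If the abelian group ⟨R⟩ ∩ V⁰ is free, then the abelian group ⟨R⟩ is free. -/
open Submodule

section SubFree
variable {ι : Type*} [LinearOrder ι] [WellFoundedLT ι]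

theorem submodule_finsupp_free (N : Submodule ℤ (ι →₀ ℤ)) : Module.Free ℤ ↥N := by
  classical
  -- the submodule of finsupps supported on indices ≤ i
  let S : ι → Submodule ℤ (ι →₀ ℤ) := fun i =>
    { carrier := {f | ∀ j, i < j → f j = 0}
      add_mem' := fun hf hg j hj => by
        simp [Finsupp.add_apply, hf j hj, hg j hj]
      zero_mem' := fun j _ => rfl
      smul_mem' := fun c f hf j hj => by simp [Finsupp.smul_apply, hf j hj] }
  let φ : ι → ((ι →₀ ℤ) →ₗ[ℤ] ℤ) := fun i => Finsupp.lapply i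
  let I : ι → Submodule ℤ ℤ := fun i => (N ⊓ S i).map (φ i)
  let g : ι → ℤ := fun i => Submodule.IsPrincipal.generator (I i)
  have hspec : ∀ i, ∃ y, (y ∈ N ⊓ S i) ∧ (φ i) y = g i := by
    intro i
    have := Submodule.IsPrincipal.generator_mem (I i)
    rw [Submodule.mem_map] at this
    obtain ⟨y, hy, hy2⟩ := this
    exact ⟨y, hy, hy2⟩
  choose n hn1 hn2 using hspec
  have hnN : ∀ i, n i ∈ N := fun i => (hn1 i).1
  have hnS : ∀ i j, i < j → n i j = 0 := fun i j h => (hn1 i).2 j h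
  have hng : ∀ i, n i i = g i := fun i => hn2 i
  set J := {i : ι // g i ≠ 0} with hJ
  let ν : J → ↥N := fun j => ⟨n j.1, hnN j.1⟩
  -- linear independence
  have ind : ∀ s : Finset J, ∀ c : J → ℤ, (∑ i ∈ s, c i • n i.1 = 0) → ∀ i ∈ s, c i = 0 := by
    intro s
    induction s using Finset.induction_on_max with
    | empty => intro c _ i hi; exact absurd hi (Finset.notMem_empty i)
    | insert a s hlt IH =>
      intro c hsum i hi
      have hans : a ∉ s := fun h => lt_irrefl a (hlt a h)
      rw [Finset.sum_insert hans] at hsum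
      have key : c a = 0 := by
        have := congrArg (φ a.1) hsum
        rw [map_add, map_sum, map_zero, map_smul] at this
        have hz : ∀ x ∈ s, (φ a.1) (c x • n x.1) = 0 := by
          intro x hx
          rw [map_smul]
          have : n x.1 a.1 = 0 := hnS x.1 a.1 (hlt x hx)
          simp [φ, Finsupp.lapply_apply, this]
        rw [Finset.sum_congr rfl hz, Finset.sum_const_zero, add_zero] at this
        simp only [φ, Finsupp.lapply_apply, smul_eq_mul, hng] at this
        exact (mul_eq_zero.mp this).resolve_right a.2
      rcases Finset.mem_insert.mp hi with rfl | hi'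
      · exact key
      · apply IH c _ i hi'
        rw [key, zero_smul, zero_add] at hsum
        exact hsum
  have linIndep : LinearIndependent ℤ (fun j : J => n j.1) := by
    rw [linearIndependent_iff']
    intro s c h i hi
    exact ind s c h i hi
  have linIndepν : LinearIndependent ℤ ν := by
    apply LinearIndependent.of_comp N.subtype
    convert linIndep
    rfl
  -- spanning
  let T : Submodule ℤ (ι →₀ ℤ) := span ℤ (Set.range fun j : J => n j.1)
  have main : ∀ i : ι, ∀ f, f ∈ N → f ∈ S i → f ∈ T := by
    intro i
    induction i using WellFoundedLT.induction with
    | _ i IH =>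
      intro f hfN hfS
      by_cases hf0 : f = 0
      · simp [hf0, zero_mem]
      have h1 : f.support.Nonempty := Finsupp.support_nonempty_iff.mpr hf0
      set m := f.support.max' h1 with hm
      have hmsup : m ∈ f.support := f.support.max'_mem h1
      have hfm : f m ≠ 0 := Finsupp.mem_support_iff.mp hmsup
      have hmi : m ≤ i := by
        by_contra h
        exact hfm (hfS m (not_le.mp h))
      have hfSm : ∀ j, m < j → f j = 0 := by
        intro j hj
        by_contra h
        exact absurd (f.support.le_max' j (Finsupp.mem_support_iff.mpr h)) (not_le.mpr hj)
      have hmem : f m ∈ I m := Submodule.mem_map.mpr ⟨f, ⟨hfN, hfSm⟩, rfl⟩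
      obtain ⟨c, hc⟩ := (Submodule.IsPrincipal.mem_iff_eq_smul_generator _).mp hmem
      have hc2 : f m = c * g m := by simpa [smul_eq_mul] using hc
      have hgm : g m ≠ 0 := by
        intro h
        rw [h, mul_zero] at hc2
        exact hfm hc2
      have hnmT : n m ∈ T := subset_span ⟨(⟨m, hgm⟩ : J), rfl⟩
      set f' := f - c • n m with hf'
      have f'N : f' ∈ N := sub_mem hfN (smul_mem _ _ (hnN m))
      have f'Sm : ∀ j, m < j → f' j = 0 := by
        intro j hj
        simp [hf', Finsupp.sub_apply, Finsupp.smul_apply, hfSm j hj, hnS m j hj]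
      have f'm : f' m = 0 := by
        simp only [hf', Finsupp.sub_apply, Finsupp.smul_apply, hng m, smul_eq_mul]
        rw [← hc2, sub_self]
      by_cases hf'0 : f' = 0
      · have : f = c • n m := by
          have := sub_eq_zero.mp (hf' ▸ hf'0)
          exact this
        rw [this]
        exact smul_mem _ _ hnmT
      · have h2 : f'.support.Nonempty := Finsupp.support_nonempty_iff.mpr hf'0
        set m' := f'.support.max' h2 with hm'
        have hm'sup : m' ∈ f'.support := f'.support.max'_mem h2
        have hm'le : m' ≤ m := by
          by_contra h
          exact (Finsupp.mem_support_iff.mp hm'sup) (f'Sm m' (not_le.mp h))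
        have hm'm : m' < m :=
          lt_of_le_of_ne hm'le (fun h => (Finsupp.mem_support_iff.mp hm'sup) (h ▸ f'm))
        have f'Sm' : ∀ j, m' < j → f' j = 0 := by
          intro j hj
          by_contra h
          exact absurd (f'.support.le_max' j (Finsupp.mem_support_iff.mpr h)) (not_le.mpr hj)
        have hf'T : f' ∈ T := IH m' (lt_of_lt_of_le hm'm hmi) f' f'N f'Sm'
        have : f = f' + c • n m := by rw [hf', sub_add_cancel]
        rw [this]
        exact add_mem hf'T (smul_mem _ _ hnmT)
  have spanTop : ⊤ ≤ span ℤ (Set.range ν) := by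
    intro x _
    have hx1 : (x : ι →₀ ℤ) ∈ T := by
      by_cases hx0 : (x : ι →₀ ℤ) = 0
      · rw [hx0]; exact zero_mem _
      · have h1 : (x : ι →₀ ℤ).support.Nonempty := Finsupp.support_nonempty_iff.mpr hx0
        apply main ((x : ι →₀ ℤ).support.max' h1) _ x.2
        intro j hj
        by_contra h
        exact absurd ((x : ι→₀ℤ).support.le_max' j (Finsupp.mem_support_iff.mpr h))
          (not_le.mpr hj)
    have : (x : ι →₀ ℤ) ∈ Submodule.map N.subtype (span ℤ (Set.range ν)) := by
      rw [Submodule.map_span, ← Set.range_comp]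
      exact hx1
    obtain ⟨y, hy, hyx⟩ := Submodule.mem_map.mp this
    have : y = x := Subtype.ext hyx
    exact this ▸ hy
  exact Module.Free.of_basis (Module.Basis.mk linIndepν spanTop)

end SubFree

theorem free_transport {A : Type*} [AddCommGroup A] {i1 i2 : Module ℤ A}
    (h : @Module.Free ℤ A _ _ i1) : @Module.Free ℤ A _ _ i2 := by
  haveI : Subsingleton (Module ℤ A) :=
    @Unique.instSubsingleton _ AddCommGroup.uniqueIntModule
  rwa [Subsingleton.elim i2 i1]

theorem int_submodule_free {M : Type*} [AddCommGroup M] [Module ℤ M] [Module.Free ℤ M]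
    (N : Submodule ℤ M) : Module.Free ℤ ↥N := by
  obtain ⟨lo, wo⟩ := exists_wellOrder (Module.Free.ChooseBasisIndex ℤ M)
  letI := lo
  haveI := wo
  let e : M ≃ₗ[ℤ] (Module.Free.ChooseBasisIndex ℤ M →₀ ℤ) := (Module.Free.chooseBasis ℤ M).repr
  set N' := N.map e.toLinearMap with hN'
  have h := submodule_finsupp_free (ι := Module.Free.ChooseBasisIndex ℤ M) N'
  have h' : @Module.Free ℤ ↥N' _ _ N'.module := free_transport h
  have hE : @LinearEquiv ℤ ℤ _ _ (RingHom.id ℤ) (RingHom.id ℤ) _ _ ↥N' ↥N _ _ N'.module N.module :=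
    (N.equivMapOfInjective e.toLinearMap e.injective).symm
  have h2 : @Module.Free ℤ ↥N _ _ N.module :=
    @Module.Free.of_equiv' ℤ ↥N _ _ N.module ↥N' _ N'.module h' hE
  exact free_transport h2


section Ulim
variable {S : Type*}

open scoped Classical in
/-- The limit of a finite-range function along an ultrafilter. -/
noncomputable def ulim (f : S → ℤ) (u : Ultrafilter S) : ℤ :=
  if h : ∃ k, f ⁻¹' {k} ∈ u then h.choose else 0

theorem ulim_unique {f : S → ℤ} {u : Ultrafilter S} {k l : ℤ}
    (hk : f ⁻¹' {k} ∈ u) (hl : f ⁻¹' {l} ∈ u) : k = l := by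
  obtain ⟨s, hs⟩ := Ultrafilter.nonempty_of_mem (Filter.inter_mem hk hl)
  obtain ⟨hs1, hs2⟩ := hs
  simp only [Set.mem_preimage, Set.mem_singleton_iff] at hs1 hs2
  rw [← hs1, ← hs2]

theorem ulim_spec {f : S → ℤ} (hf : (Set.range f).Finite) (u : Ultrafilter S) :
    f ⁻¹' {ulim f u} ∈ u := by
  have hex : ∃ k, f ⁻¹' {k} ∈ u := by
    have hr : Set.range f ∈ Ultrafilter.map f u := by
      rw [Ultrafilter.mem_map]
      have : f ⁻¹' Set.range f = Set.univ := by
        ext s; simp [Set.mem_range]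
      rw [this]
      exact Filter.univ_mem
    obtain ⟨k, _, hpure⟩ := Ultrafilter.eq_pure_of_finite_mem hf hr
    refine ⟨k, ?_⟩
    rw [← Ultrafilter.mem_map, hpure]
    simp
  rw [ulim]
  rw [dif_pos hex]
  exact hex.choose_spec

theorem ulim_eq {f : S → ℤ} (hf : (Set.range f).Finite) {u : Ultrafilter S} {k : ℤ}
    (hk : f ⁻¹' {k} ∈ u) : ulim f u = k :=
  ulim_unique (ulim_spec hf u) hk

theorem ulim_pure {f : S → ℤ} (hf : (Set.range f).Finite) (s : S) :
    ulim f (pure s) = f s := by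
  apply ulim_eq hf
  simp [Ultrafilter.mem_pure]

theorem range_add_finite {f g : S → ℤ} (hf : (Set.range f).Finite) (hg : (Set.range g).Finite) :
    (Set.range (f + g)).Finite := by
  apply Set.Finite.subset (Set.Finite.image2 (· + ·) hf hg)
  rintro x ⟨s, rfl⟩
  exact Set.mem_image2_of_mem (Set.mem_range_self s) (Set.mem_range_self s)

theorem ulim_add {f g : S → ℤ} (hf : (Set.range f).Finite) (hg : (Set.range g).Finite)
    (u : Ultrafilter S) : ulim (f + g) u = ulim f u + ulim g u := by
  apply ulim_eq (range_add_finite hf hg)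
  apply Filter.mem_of_superset (Filter.inter_mem (ulim_spec hf u) (ulim_spec hg u))
  rintro s ⟨hs1, hs2⟩
  simp only [Set.mem_preimage, Set.mem_singleton_iff] at hs1 hs2 ⊢
  simp [hs1, hs2]

theorem isLocallyConstant_ulim {f : S → ℤ} (hf : (Set.range f).Finite) :
    IsLocallyConstant (ulim f) := by
  intro s
  have h : ulim f ⁻¹' s = ⋃ k ∈ s, {u : Ultrafilter S | f ⁻¹' {k} ∈ u} := by
    ext u
    simp only [Set.mem_preimage, Set.mem_iUnion, Set.mem_setOf_eq]
    constructor
    · intro h; exact ⟨ulim f u, h, ulim_spec hf u⟩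
    · rintro ⟨k, hk, hmem⟩; rwa [ulim_eq hf hmem]
  rw [h]
  exact isOpen_biUnion fun k _ => ultrafilter_isOpen_basic _

end Ulim

section LEARSLemmas

variable {V : Type*} [AddCommGroup V] [Module ℚ V] (B : LinearMap.BilinForm ℚ V)

theorem bil_expand (x y : V) (t : ℚ) :
    B (x + t • y) (x + t • y) = B x x + t * B x y + t * B y x + t * t * B y y := by
  simp only [map_add, map_smul, LinearMap.add_apply, LinearMap.smul_apply, smul_eq_mul]
  ring

theorem bil_expand_sub (x y : V) (t : ℚ) :
    B (x - t • y) (x - t • y) = B x x - t * B x y - t * B y x + t * t * B y y := by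
  simp only [map_sub, map_smul, LinearMap.sub_apply, LinearMap.smul_apply, smul_eq_mul]
  ring

variable (hsym : ∀ x y : V, B x y = B y x) (hpos : ∀ x : V, 0 ≤ B x x)
include hsym hpos

theorem orth_of_self_zero {y : V} (hy : B y y = 0) (x : V) : B x y = 0 := by
  by_contra h
  have key : ∀ t : ℚ, 0 ≤ B x x + 2 * (t * B x y) := by
    intro t
    have h1 := hpos (x + t • y)
    rw [bil_expand B x y t, hy, hsym y x] at h1
    linarith
  have h2 := key (-(B x x + 1) / (2 * B x y))
  have h3 : -(B x x + 1) / (2 * B x y) * B x y = -(B x x + 1) / 2 := by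
    field_simp
  rw [h3] at h2
  linarith

theorem cauchy_schwarz (x y : V) : (B x y) ^ 2 ≤ B x x * B y y := by
  by_cases hy : B y y = 0
  · rw [hy, orth_of_self_zero B hsym hpos hy x]
    simp
  · have hy' : 0 < B y y := lt_of_le_of_ne (hpos y) (Ne.symm hy)
    have h1 := hpos (B y y • x - B x y • y)
    have hexp : B (B y y • x - B x y • y) (B y y • x - B x y • y) =
        B y y * (B x x * B y y - B x y ^ 2) := by
      simp only [map_sub, map_smul, LinearMap.sub_apply, LinearMap.smul_apply, smul_eq_mul]
      rw [hsym y x]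
      ring
    rw [hexp] at h1
    nlinarith

theorem refl_apply (γ x z : V) :
    B (rroot B γ x) z = B x z - (2 * B x γ / B γ γ) * B γ z := by
  simp only [rroot, map_sub, map_smul, LinearMap.sub_apply, LinearMap.smul_apply, smul_eq_mul]

theorem refl_len {γ : V} (hγ : B γ γ ≠ 0) (x : V) :
    B (rroot B γ x) (rroot B γ x) = B x x := by
  rw [rroot, bil_expand_sub B x γ (2 * B x γ / B γ γ), hsym γ x]
  field_simp
  ring

variable {R : Set V}

theorem lears_connected (hR : IsLEARS B R) {α β : V} (hα : α ∈ R) (hβ : β ∈ R) :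
    Relation.ReflTransGen (fun x y => x ∈ R ∧ y ∈ R ∧ B x y ≠ 0) α β := by
  classical
  obtain ⟨A1, _, A2, A3, A4⟩ := hR
  set rel : V → V → Prop := fun x y => x ∈ R ∧ y ∈ R ∧ B x y ≠ 0 with hrel
  set R₁ : Set V := {γ | γ ∈ R ∧ Relation.ReflTransGen rel α γ} with hR₁
  have hsub : R₁ ⊆ R := fun γ hγ => hγ.1
  have hcover : R = R₁ ∪ (R \ R₁) := by
    ext γ
    constructor
    · intro hγ
      by_cases h : γ ∈ R₁
      · exact Or.inl h
      · exact Or.inr ⟨hγ, h⟩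
    · rintro (h | h)
      · exact hsub h
      · exact h.1
  have horth : ∀ x ∈ R₁, ∀ y ∈ R \ R₁, B x y = 0 := by
    intro x hx y hy
    by_contra h
    exact hy.2 ⟨hy.1, hx.2.tail ⟨hx.1, hy.1, h⟩⟩
  rcases A4 R₁ (R \ R₁) hcover horth with h | h
  · exact absurd (show α ∈ R₁ from ⟨hα, Relation.ReflTransGen.refl⟩) (by simp [h])
  · have : β ∈ R₁ := by
      rcases (hcover ▸ hβ : β ∈ R₁ ∪ (R \ R₁)) with h' | h'
      · exact h'
      · exact absurd h' (by simp [h])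
    exact this.2

theorem exists_same_len (hR : IsLEARS B R) {α β : V} (hα : α ∈ R) (hβ : β ∈ R) :
    ∃ α', α' ∈ R ∧ B α' α' = B α α ∧ B α' β ≠ 0 := by
  obtain ⟨A1, Aspan, A2, A3, A4⟩ := hR
  have hchain := lears_connected B hsym hpos ⟨A1, Aspan, A2, A3, A4⟩ hα hβ
  clear hβ
  induction hchain with
  | refl => exact ⟨α, hα, rfl, A1 α hα⟩
  | @tail b c hab hbc ih =>
    obtain ⟨hbR, hcR, hBbc⟩ := hbc
    obtain ⟨α', hα'R, hlen, hα'b⟩ := ih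
    by_cases h : B α' c = 0
    · refine ⟨rroot B b α', A3 b hbR α' hα'R, ?_, ?_⟩
      · rw [refl_len B hsym hpos (A1 b hbR) α', hlen]
      · rw [refl_apply B hsym hpos, h, zero_sub, neg_ne_zero]
        exact mul_ne_zero (div_ne_zero (mul_ne_zero two_ne_zero hα'b) (A1 b hbR)) hBbc
    · exact ⟨α', hα'R, hlen, h⟩

theorem length_rel (hR : IsLEARS B R) {α β : V} (hα : α ∈ R) (hβ : β ∈ R)
    (hne : B α β ≠ 0) :
    ∃ m n : ℤ, m ≠ 0 ∧ n ≠ 0 ∧ 0 < m * n ∧ m * n ≤ 4 ∧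
      (m : ℚ) * B β β = (n : ℚ) * B α α := by
  obtain ⟨A1, Aspan, A2, A3, A4⟩ := hR
  obtain ⟨m, hm⟩ := A2 α hα β hβ
  obtain ⟨n, hn⟩ := A2 β hβ α hα
  have hℓα : 0 < B α α := lt_of_le_of_ne (hpos α) (Ne.symm (A1 α hα))
  have hℓβ : 0 < B β β := lt_of_le_of_ne (hpos β) (Ne.symm (A1 β hβ))
  have hm' : (m : ℚ) * B β β = 2 * B α β := by
    rw [← hm]; field_simp
  have hn' : (n : ℚ) * B α α = 2 * B α β := by
    rw [← hn]; field_simp; rw [hsym β α]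
  refine ⟨m, n, ?_, ?_, ?_, ?_, by rw [hm', hn']⟩
  · intro h
    rw [h] at hm'
    simp only [Int.cast_zero, zero_mul] at hm'
    exact hne (by linarith)
  · intro h
    rw [h] at hn'
    simp only [Int.cast_zero, zero_mul] at hn'
    exact hne (by linarith)
  · have h2 : ((m : ℚ) * B β β) * ((n : ℚ) * B α α) = (2 * B α β) * (2 * B α β) := by
      rw [hm', hn']
    have hq : ((m * n : ℤ) : ℚ) * (B α α * B β β) = 4 * (B α β) ^ 2 := by
      push_cast
      linear_combination h2
    have h4 : 0 < (B α β) ^ 2 := lt_of_le_of_ne (sq_nonneg _) (Ne.symm (pow_ne_zero 2 hne))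
    have h5 : 0 < B α α * B β β := mul_pos hℓα hℓβ
    have : (0 : ℚ) < ((m * n : ℤ) : ℚ) := by nlinarith
    exact_mod_cast this
  · have h2 : ((m : ℚ) * B β β) * ((n : ℚ) * B α α) = (2 * B α β) * (2 * B α β) := by
      rw [hm', hn']
    have hq : ((m * n : ℤ) : ℚ) * (B α α * B β β) = 4 * (B α β) ^ 2 := by
      push_cast
      linear_combination h2
    have hcs := cauchy_schwarz B hsym hpos α β
    have h5 : 0 < B α α * B β β := mul_pos hℓα hℓβ
    have : ((m * n : ℤ) : ℚ) ≤ 4 := by nlinarith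
    exact_mod_cast this

theorem length_lower (hR : IsLEARS B R) {α₀ β : V} (hα₀ : α₀ ∈ R) (hβ : β ∈ R) :
    B α₀ α₀ ≤ 16 * B β β := by
  obtain ⟨α', hα'R, hlen, hα'β⟩ := exists_same_len B hsym hpos hR hα₀ hβ
  obtain ⟨m, n, hm0, hn0, hmn1, hmn4, heq⟩ := length_rel B hsym hpos hR hα'R hβ hα'β
  have hℓβ : 0 < B β β :=
    lt_of_le_of_ne (hpos β) (Ne.symm (hR.1 β hβ))
  have hℓ₀ : 0 < B α' α' :=
    lt_of_le_of_ne (hpos α') (Ne.symm (hR.1 α' hα'R))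
  rw [← hlen]
  -- m^2 ≤ 16 and 1 ≤ m*n
  have hm4 : m * m ≤ 16 := by
    have h1 : (1 : ℤ) ≤ |m| := Int.one_le_abs hm0
    have h2 : (1 : ℤ) ≤ |n| := Int.one_le_abs hn0
    have h3 : |m| * |n| ≤ 4 := by rw [← abs_mul, abs_of_pos hmn1]; exact hmn4
    have h4 : |m| ≤ 4 := by nlinarith
    nlinarith [abs_nonneg m, sq_abs m]
  have hmn1' : (1 : ℚ) ≤ ((m * n : ℤ) : ℚ) := by exact_mod_cast hmn1
  have hm4' : ((m * m : ℤ) : ℚ) ≤ 16 := by exact_mod_cast hm4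
  push_cast at hmn1' hm4'
  have h5 : (m : ℚ) * ((m : ℚ) * B β β) = (m : ℚ) * ((n : ℚ) * B α' α') := by rw [heq]
  nlinarith [h5, mul_le_mul_of_nonneg_right hm4' hℓβ.le,
    mul_le_mul_of_nonneg_right hmn1' hℓ₀.le]

theorem closure_coroot_int (hR : IsLEARS B R) {x β : V}
    (hx : x ∈ AddSubgroup.closure R) (hβ : β ∈ R) :
    ∃ k : ℤ, 2 * B x β / B β β = (k : ℚ) := by
  induction hx using AddSubgroup.closure_induction with
  | mem α hα => exact hR.2.2.1 α hα β hβ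
  | zero => exact ⟨0, by simp⟩
  | add a b _ _ iha ihb =>
    obtain ⟨k, hk⟩ := iha
    obtain ⟨l, hl⟩ := ihb
    refine ⟨k + l, ?_⟩
    simp only [map_add, LinearMap.add_apply]
    push_cast
    rw [← hk, ← hl]
    ring
  | neg a _ iha =>
    obtain ⟨k, hk⟩ := iha
    refine ⟨-k, ?_⟩
    simp only [map_neg, LinearMap.neg_apply]
    push_cast
    rw [← hk]
    ring

theorem mem_ker_of_orth_roots (hspan : Submodule.span ℚ R = ⊤) {x : V}
    (h : ∀ β ∈ R, B x β = 0) : B x = 0 := by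
  ext y
  have hy : y ∈ Submodule.span ℚ R := by rw [hspan]; trivial
  induction hy using Submodule.span_induction with
  | mem β hβ => exact h β hβ
  | zero => simp
  | add a b _ _ iha ihb => simp [map_add, iha, ihb]
  | smul c a _ iha => simp [map_smul, iha]

end LEARSLemmas

/-- If `⟨R⟩ ∩ V⁰` is a free abelian group, then `⟨R⟩` is free. -/
theorem closure_free_of_closure_inf_radical_free
    {V : Type*} [AddCommGroup V] [Module ℚ V]
    (B : LinearMap.BilinForm ℚ V)
    (hsym : ∀ x y : V, B x y = B y x)
    (hpos : ∀ x : V, 0 ≤ B x x)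
    (R : Set V) (hR : IsLEARS B R)
    (hfree : Module.Free ℤ
      ↥(AddSubgroup.closure R ⊓ (LinearMap.ker B).toAddSubgroup)) :
    Module.Free ℤ ↥(AddSubgroup.closure R) := by
  classical
  by_cases hRe : R = ∅
  · subst hRe
    rw [AddSubgroup.closure_empty]
    haveI : Subsingleton ↥(⊥ : AddSubgroup V) := by
      constructor
      rintro ⟨a, ha⟩ ⟨b, hb⟩
      simp only [AddSubgroup.mem_bot] at ha hb
      subst ha; subst hb; rfl
    exact Module.Free.of_subsingleton ℤ _
  obtain ⟨α₀, hα₀⟩ := Set.nonempty_iff_ne_empty.mpr hRe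
  obtain ⟨A1, Aspan, A2, A3, A4⟩ := hR
  have hR' : IsLEARS B R := ⟨A1, Aspan, A2, A3, A4⟩
  set G := AddSubgroup.closure R with hG
  set S := {β : V // β ∈ R} with hS
  have hl0 : 0 < B α₀ α₀ := lt_of_le_of_ne (hpos α₀) (Ne.symm (A1 α₀ hα₀))
  have hlpos : ∀ β : S, 0 < B β.1 β.1 :=
    fun β => lt_of_le_of_ne (hpos β.1) (Ne.symm (A1 β.1 β.2))
  have hlb : ∀ β : S, B α₀ α₀ ≤ 16 * B β.1 β.1 :=
    fun β => length_lower B hsym hpos hR' hα₀ β.2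
  -- the coroot pairing function
  set F : ↥G → S → ℤ := fun x β => (2 * B x.1 β.1 / B β.1 β.1).num with hF
  have hFspec : ∀ (x : ↥G) (β : S), ((F x β : ℚ)) = 2 * B x.1 β.1 / B β.1 β.1 := by
    intro x β
    obtain ⟨k, hk⟩ := closure_coroot_int B hsym hpos hR' x.2 β.2
    simp only [hF, hk, Rat.num_intCast]
  have hFadd : ∀ x y : ↥G, F (x + y) = F x + F y := by
    intro x y
    funext β
    have hc : B β.1 β.1 ≠ 0 := A1 β.1 β.2
    have key : ((F (x + y) β : ℚ)) = ((F x β : ℚ)) + ((F y β : ℚ)) := by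
      rw [hFspec, hFspec, hFspec]
      have hxy : ((x + y : ↥G) : V) = (x : V) + (y : V) := rfl
      rw [hxy]
      simp only [map_add, LinearMap.add_apply]
      field_simp
    have : ((F (x + y) β : ℚ)) = (((F x β + F y β : ℤ)) : ℚ) := by
      push_cast
      exact key
    have h2 := Int.cast_injective (α := ℚ) this
    simpa using h2
  have hFfin : ∀ x : ↥G, (Set.range (F x)).Finite := by
    intro x
    set C : ℚ := 64 * B x.1 x.1 / B α₀ α₀ with hC
    have hkey : ∀ β : S, ((F x β : ℚ)) ^ 2 ≤ C := by
      intro β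
      rw [hFspec]
      have hcs := cauchy_schwarz B hsym hpos x.1 β.1
      have hβ := hlpos β
      have h16 := hlb β
      have hx0 := hpos x.1
      rw [div_pow, hC, div_le_div_iff₀ (by positivity) hl0]
      nlinarith [mul_le_mul_of_nonneg_right hcs hl0.le,
        mul_le_mul_of_nonneg_left h16 (mul_nonneg hx0 hβ.le)]
    set K : ℤ := max 1 ⌈C⌉ with hK
    have hsub : Set.range (F x) ⊆ Set.Icc (-K) K := by
      rintro k ⟨β, rfl⟩
      have h2 := hkey β
      have habs : (|F x β| : ℚ) ≤ (K : ℚ) := by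
        rcases le_or_gt (|F x β|) 1 with h | h
        · have h1 : ((|F x β| : ℤ) : ℚ) ≤ ((1 : ℤ) : ℚ) := by exact_mod_cast h
          have h3 : ((1 : ℤ) : ℚ) ≤ ((K : ℤ) : ℚ) := by
            exact_mod_cast le_max_left 1 ⌈C⌉
          push_cast at h1 h3 ⊢
          linarith
        · have h1 : (1 : ℚ) ≤ (|F x β| : ℚ) := by exact_mod_cast h.le
          have hsq : ((|F x β| : ℚ)) ≤ ((|F x β| : ℚ)) ^ 2 := by nlinarith
          have hsq2 : ((|F x β| : ℚ)) ^ 2 = ((F x β : ℚ)) ^ 2 := by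
            push_cast
            rw [sq_abs]
          have h4 : (C : ℚ) ≤ (⌈C⌉ : ℚ) := Int.le_ceil C
          have h5 : ((⌈C⌉ : ℤ) : ℚ) ≤ ((K : ℤ) : ℚ) := by
            exact_mod_cast le_max_right 1 ⌈C⌉
          push_cast at h5 ⊢
          calc (|F x β| : ℚ) ≤ ((|F x β| : ℚ)) ^ 2 := hsq
            _ = ((F x β : ℚ)) ^ 2 := hsq2
            _ ≤ C := h2
            _ ≤ (⌈C⌉ : ℚ) := h4
            _ ≤ (K : ℚ) := h5
      have : |F x β| ≤ K := by exact_mod_cast habs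
      exact Set.mem_Icc.mpr (abs_le.mp this)
    exact Set.Finite.subset (Set.finite_Icc _ _) hsub
  -- the additive map into locally constant functions on the ultrafilter space
  set Ψ : ↥G →+ LocallyConstant (Ultrafilter S) ℤ := AddMonoidHom.mk'
    (fun x => ⟨ulim (F x), isLocallyConstant_ulim (hFfin x)⟩)
    (fun x y => by
      ext u
      have : ulim (F (x + y)) u = ulim (F x) u + ulim (F y) u := by
        rw [hFadd x y]
        exact ulim_add (hFfin x) (hFfin y) u
      simpa using this) with hΨ
  have hΨval : ∀ (x : ↥G) (u : Ultrafilter S), Ψ x u = ulim (F x) u := fun x u => rfl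
  have hkerΨ : ∀ x : ↥G, Ψ x = 0 ↔ B x.1 = 0 := by
    intro x
    constructor
    · intro h
      apply mem_ker_of_orth_roots B hsym hpos Aspan
      intro β hβ
      have h0 : ulim (F x) (pure ⟨β, hβ⟩) = 0 := by
        rw [← hΨval x (pure ⟨β, hβ⟩), h]
        rfl
      have h1 : F x ⟨β, hβ⟩ = 0 := by
        rw [← ulim_pure (hFfin x) ⟨β, hβ⟩]
        exact h0
      have h2 := hFspec x ⟨β, hβ⟩
      rw [h1] at h2
      simp only [Int.cast_zero] at h2
      have hc : B β β ≠ 0 := A1 β hβ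
      have := h2.symm
      rw [div_eq_zero_iff] at this
      rcases this with h3 | h3
      · linarith
      · exact absurd h3 hc
    · intro h
      ext u
      have hFz : F x = fun _ => (0 : ℤ) := by
        funext β
        have h2 := hFspec x β
        rw [h] at h2
        simp only [LinearMap.zero_apply, mul_zero, zero_mul, zero_div] at h2
        exact_mod_cast h2
      have : ulim (F x) u = 0 := by
        apply ulim_eq (hFfin x)
        rw [hFz]
        have hset : (fun (_ : S) => (0 : ℤ)) ⁻¹' {0} = Set.univ := by
          ext s; simp
        rw [hset]
        exact Filter.univ_mem
      simpa [hΨval] using this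
  -- modules and splitting
  letI Ψl : ↥G →ₗ[ℤ] LocallyConstant (Ultrafilter S) ℤ := Ψ.toIntLinearMap
  haveI hLCfree : Module.Free ℤ (LocallyConstant (Ultrafilter S) ℤ) :=
    LocallyConstant.freeOfProfinite (Profinite.of (Ultrafilter S))
  set N : Submodule ℤ (LocallyConstant (Ultrafilter S) ℤ) := LinearMap.range Ψl with hN
  have hNfree : Module.Free ℤ ↥N := int_submodule_free N
  set Ψr : ↥G →ₗ[ℤ] ↥N := Ψl.rangeRestrict with hΨr
  have hsurj : Function.Surjective Ψr := Ψl.surjective_rangeRestrict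
  haveI : Module.Projective ℤ ↥N := @Module.Projective.of_free ℤ _ _ _ _ hNfree
  obtain ⟨sec, hsec⟩ := Module.projective_lifting_property Ψr LinearMap.id hsurj
  have hker_iff : ∀ x : ↥G, Ψr x = 0 ↔ B x.1 = 0 := by
    intro x
    rw [← hkerΨ x]
    constructor
    · intro h
      have := congrArg (Subtype.val) h
      exact this
    · intro h
      exact Subtype.ext h
  set K : Submodule ℤ ↥G := LinearMap.ker Ψr with hKdef
  -- the kernel is isomorphic to the closure ∩ radical
  set H := AddSubgroup.closure R ⊓ (LinearMap.ker B).toAddSubgroup with hH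
  have eK : ↥K ≃+ ↥H := by
    refine
      { toFun := fun y => ⟨y.1.1, AddSubgroup.mem_inf.mpr ⟨y.1.2, ?_⟩⟩
        invFun := fun h => ⟨⟨h.1, (AddSubgroup.mem_inf.mp h.2).1⟩, ?_⟩
        left_inv := fun y => rfl
        right_inv := fun h => rfl
        map_add' := fun a b => rfl }
    · rw [Submodule.mem_toAddSubgroup, LinearMap.mem_ker]
      exact (hker_iff y.1).mp (LinearMap.mem_ker.mp y.2)
    · rw [LinearMap.mem_ker]
      apply (hker_iff _).mpr
      have := (AddSubgroup.mem_inf.mp h.2).2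
      rwa [Submodule.mem_toAddSubgroup, LinearMap.mem_ker] at this
  have hKfree : Module.Free ℤ ↥K :=
    Module.Free.of_equiv' hfree (eK.toIntLinearEquiv.symm)
  -- the splitting equivalence
  set Ξ : ↥K × ↥N →ₗ[ℤ] ↥G := (K.subtype).coprod sec with hΞ
  have hinj : Function.Injective Ξ := by
    rw [← LinearMap.ker_eq_bot]
    rw [LinearMap.ker_eq_bot']
    rintro ⟨k, n⟩ hkn
    have hkn' : (k : ↥G) + sec n = 0 := hkn
    have h1 : Ψr ((k : ↥G) + sec n) = 0 := by rw [hkn']; simp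
    rw [map_add] at h1
    have h2 : Ψr (k : ↥G) = 0 := LinearMap.mem_ker.mp k.2
    have h3 : Ψr (sec n) = n := DFunLike.congr_fun hsec n
    rw [h2, h3, zero_add] at h1
    have hk0 : (k : ↥G) = 0 := by rw [h1] at hkn'; simpa using hkn'
    have : k = 0 := Subtype.ext hk0
    rw [this, h1]
    rfl
  have hsurj2 : Function.Surjective Ξ := by
    intro g
    refine ⟨(⟨g - sec (Ψr g), ?_⟩, Ψr g), ?_⟩
    · rw [LinearMap.mem_ker, map_sub]
      have h3 : Ψr (sec (Ψr g)) = Ψr g := DFunLike.congr_fun hsec (Ψr g)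
      rw [h3, sub_self]
    · show (g - sec (Ψr g)) + sec (Ψr g) = g
      rw [sub_add_cancel]
  have e2 : (↥K × ↥N) ≃ₗ[ℤ] ↥G := LinearEquiv.ofBijective Ξ ⟨hinj, hsurj2⟩
  haveI : Module.Free ℤ ↥K := hKfree
  haveI : Module.Free ℤ ↥N := hNfree
  haveI hprod : Module.Free ℤ (↥K × ↥N) := inferInstance
  exact free_transport (Module.Free.of_equiv' hprod e2)
end

section
/- Suppose (R₁, V) and (R₂, W) are LEARS and φ : V → W is a ℚ-linear isomorphism with φ(R₁) = R₂. Then φ maps the radical of the form on V onto the radical of the form on W: φ(V⁰) = W⁰. -/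
open Submodule

/-- Arithmetic auxiliary: if `2(b - s a) = n (c - 2 s b + s² a)` with `n : ℤ`,
`a > 0`, `c ≥ 0`, positive denominator, and `|s|` large, then `b = s a`. -/
private lemma arith_aux (a b c s : ℚ) (n : ℤ) (ha : 0 < a) (hc : 0 ≤ c)
    (hden : 0 < c - 2*s*b + s^2*a)
    (heq : 2*(b - s*a) = (n : ℚ) * (c - 2*s*b + s^2*a))
    (hs : 4*|b| + 2*a + 1 ≤ a * |s|) : b = s*a := by
  rcases eq_or_ne n 0 with rfl | h
  · push_cast at heq; linarith
  · exfalso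
    have h1 : (1:ℚ) ≤ |(n:ℚ)| := by
      rw [← Int.cast_abs]
      exact_mod_cast Int.one_le_abs h
    have h2 : c - 2*s*b + s^2*a ≤ |2*(b - s*a)| := by
      calc c - 2*s*b + s^2*a = 1 * (c - 2*s*b + s^2*a) := by ring
        _ ≤ |(n:ℚ)| * (c - 2*s*b + s^2*a) := by
            exact mul_le_mul_of_nonneg_right h1 hden.le
        _ = |(n:ℚ) * (c - 2*s*b + s^2*a)| := by
            rw [abs_mul, abs_of_pos hden]
        _ = |2*(b - s*a)| := by rw [heq]
    have hb1 : |2*(b - s*a)| ≤ 2 * |b| + 2 * (|s| * a) := by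
      have h0 : |2*(b - s*a)| = 2 * |b - s*a| := by
        rw [abs_mul]; norm_num
      have h0' : |b - s*a| ≤ |b| + |s*a| := abs_sub b (s*a)
      have h0'' : |s*a| = |s| * a := by rw [abs_mul, abs_of_pos ha]
      rw [h0]
      rw [h0''] at h0'
      linarith
    have hsb : s*b ≤ |s| * |b| := le_trans (le_abs_self _) (le_of_eq (abs_mul s b))
    have hss : s^2 = |s|^2 := (sq_abs s).symm
    have habs : (0:ℚ) ≤ |b| := abs_nonneg b
    have habs' : (0:ℚ) ≤ |s| := abs_nonneg s
    rw [hss] at h2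
    have hA := mul_le_mul_of_nonneg_left hs habs'
    have hC : 2*(|s| * |b|) + |s| ≤ 2 * |b| := by linarith
    have hD := mul_le_mul_of_nonneg_left hs habs
    have hE := mul_le_mul_of_nonneg_left hC ha.le
    have hbb := mul_nonneg habs habs
    have hab := mul_nonneg ha.le habs
    linarith

/-- If a LEARS-like set contains the infinite string `α - j d β` for all `j : ℕ`,
with `d ≠ 0`, we get a contradiction. -/
private lemma no_infinite_string {V : Type*} [AddCommGroup V] [Module ℚ V]
    (B : LinearMap.BilinForm ℚ V)
    (hsymB : ∀ x y : V, B x y = B y x) (hposB : ∀ x : V, 0 ≤ B x x)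
    (R : Set V) (hA1 : ∀ α ∈ R, B α α ≠ 0)
    (hA2 : ∀ α ∈ R, ∀ β ∈ R, ∃ n : ℤ, 2 * B α β / B β β = (n : ℚ))
    (α β : V) (hβ : β ∈ R) (d : ℤ) (hd : d ≠ 0)
    (hmem : ∀ j : ℕ, α - ((j : ℚ) * (d:ℚ)) • β ∈ R) : False := by
  set a := B β β with ha_def
  have ha : 0 < a := lt_of_le_of_ne (hposB β) (Ne.symm (hA1 β hβ))
  set b := B β α with hb_def
  set c := B α α with hc_def
  have hc : 0 ≤ c := hposB α
  have key : ∀ j : ℕ, (4*|b| + 2*a + 1)/a ≤ (j:ℚ) → b = ((j:ℚ)*(d:ℚ)) * a := by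
    intro j hj
    set s : ℚ := (j:ℚ)*(d:ℚ) with hs_def
    have hγ := hmem j
    obtain ⟨n, hn⟩ := hA2 β hβ _ hγ
    have e1 : B β (α - s • β) = b - s*a := by
      simp [map_sub, map_smul, smul_eq_mul, ← hb_def, ← ha_def]
    have e2 : B (α - s•β) (α - s•β) = c - 2*s*b + s^2*a := by
      simp only [map_sub, map_smul, LinearMap.sub_apply, LinearMap.smul_apply,
        smul_eq_mul, ← ha_def, ← hb_def, ← hc_def]
      rw [hsymB α β, ← hb_def]
      ring
    have hdenpos : 0 < c - 2*s*b + s^2*a := by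
      rw [← e2]
      exact lt_of_le_of_ne (hposB _) (Ne.symm (hA1 _ hγ))
    rw [e1, e2] at hn
    have heq : 2*(b - s*a) = (n:ℚ) * (c - 2*s*b + s^2*a) := by
      rw [mul_comm ((n:ℚ)) _, ← hn]
      field_simp
      rw [mul_div_assoc, div_self (by intro h0; linarith), mul_one]
    have hds : (1:ℚ) ≤ |(d:ℚ)| := by
      rw [← Int.cast_abs]
      exact_mod_cast Int.one_le_abs hd
    have hsabs : (j:ℚ) ≤ |s| := by
      rw [hs_def, abs_mul, Nat.abs_cast]
      nlinarith [Nat.cast_nonneg (α := ℚ) j]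
    have hs' : 4*|b| + 2*a + 1 ≤ a * |s| := by
      have h3 : (4*|b| + 2*a + 1) ≤ a * (j:ℚ) := by
        rw [div_le_iff₀ ha] at hj; linarith
      calc 4*|b| + 2*a + 1 ≤ a * (j:ℚ) := h3
        _ ≤ a * |s| := mul_le_mul_of_nonneg_left hsabs ha.le
    exact arith_aux a b c s n ha hc hdenpos heq hs'
  set J := ⌈(4*|b| + 2*a + 1)/a⌉₊ with hJ_def
  have h1 := key J (Nat.le_ceil _)
  have h2 := key (J+1) (by push_cast; linarith [Nat.le_ceil ((4*|b| + 2*a + 1)/a)])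
  have hda : (d:ℚ) * a = 0 := by push_cast at h1 h2 ⊢; linarith
  rcases mul_eq_zero.mp hda with h | h
  · exact hd (by exact_mod_cast h)
  · exact ha.ne' h

/-- Cartan integers are preserved by an isomorphism of LEARS. -/
private lemma cartan_eq {V W : Type*} [AddCommGroup V] [Module ℚ V]
    [AddCommGroup W] [Module ℚ W]
    (B : LinearMap.BilinForm ℚ V) (C : LinearMap.BilinForm ℚ W)
    (hsymB : ∀ x y : V, B x y = B y x) (hposB : ∀ x : V, 0 ≤ B x x)
    (R₁ : Set V) (R₂ : Set W)
    (h₁ : IsLEARS B R₁) (h₂ : IsLEARS C R₂)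
    (φ : V ≃ₗ[ℚ] W) (hφ : ⇑φ '' R₁ = R₂)
    (α : V) (hα : α ∈ R₁) (β : V) (hβ : β ∈ R₁) :
    2 * B α β / B β β = 2 * C (φ α) (φ β) / C (φ β) (φ β) := by
  obtain ⟨hA1, hspan, hA2, hA3, -⟩ := h₁
  obtain ⟨hA1', hspan', hA2', hA3', -⟩ := h₂
  have hmem2 : ∀ x, x ∈ R₁ → φ x ∈ R₂ := fun x hx => hφ ▸ ⟨x, hx, rfl⟩
  have hmem1 : ∀ x, φ x ∈ R₂ → x ∈ R₁ := by
    intro x hx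
    rw [← hφ] at hx
    obtain ⟨y, hy, hyx⟩ := hx
    rwa [← φ.injective hyx]
  obtain ⟨n, hn⟩ := hA2 α hα β hβ
  obtain ⟨m, hm⟩ := hA2' (φ α) (hmem2 α hα) (φ β) (hmem2 β hβ)
  rcases eq_or_ne n m with rfl | hnm
  · rw [hn, hm]
  exfalso
  have hbb : B β β ≠ 0 := hA1 β hβ
  have hcc : C (φ β) (φ β) ≠ 0 := hA1' _ (hmem2 β hβ)
  have hn' : 2 * B α β = (n:ℚ) * B β β := (div_eq_iff hbb).mp hn
  have hm' : 2 * C (φ α) (φ β) = (m:ℚ) * C (φ β) (φ β) := (div_eq_iff hcc).mp hm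
  set d : ℤ := n - m with hd_def
  have hdnm : (d:ℚ) = (n:ℚ) - (m:ℚ) := by push_cast [hd_def]; ring
  have hmem : ∀ j : ℕ, α - ((j : ℚ) * (d:ℚ)) • β ∈ R₁ := by
    intro j
    induction j with
    | zero => simpa using hα
    | succ j ih =>
      -- Step 1: reflect φ(γ_j) in φβ on the W side
      have hq : 2 * C (φ (α - ((j:ℚ)*(d:ℚ))•β)) (φ β) / C (φ β) (φ β)
          = (m:ℚ) - 2*((j:ℚ)*(d:ℚ)) := by
        rw [div_eq_iff hcc]
        simp only [map_sub, map_smul, LinearMap.sub_apply, LinearMap.smul_apply,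
          smul_eq_mul]
        linear_combination hm'
      have s1 : α - ((m:ℚ) - (j:ℚ)*(d:ℚ)) • β ∈ R₁ := by
        apply hmem1
        have h3 := hA3' (φ β) (hmem2 β hβ) _ (hmem2 _ ih)
        simp only [rroot] at h3
        rw [hq] at h3
        have e : φ (α - ((m:ℚ) - (j:ℚ)*(d:ℚ)) • β)
            = φ (α - ((j:ℚ)*(d:ℚ))•β) - ((m:ℚ) - 2*((j:ℚ)*(d:ℚ))) • φ β := by
          simp only [map_sub, map_smul]
          module
        rw [e]
        exact h3
      -- Step 2: reflect back in β on the V side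
      have hq' : 2 * B (α - ((m:ℚ) - (j:ℚ)*(d:ℚ))•β) β / B β β
          = (n:ℚ) - 2*((m:ℚ) - (j:ℚ)*(d:ℚ)) := by
        rw [div_eq_iff hbb]
        simp only [map_sub, map_smul, LinearMap.sub_apply, LinearMap.smul_apply,
          smul_eq_mul]
        linear_combination hn'
      have h4 := hA3 β hβ _ s1
      simp only [rroot] at h4
      rw [hq'] at h4
      have e2 : (α - ((m:ℚ) - (j:ℚ)*(d:ℚ))•β)
          - ((n:ℚ) - 2*((m:ℚ) - (j:ℚ)*(d:ℚ)))•β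
          = α - (((j:ℕ)+1 : ℚ)*(d:ℚ))•β := by
        rw [hdnm]
        module
      rw [e2] at h4
      have : ((j+1 : ℕ) : ℚ) = (j:ℚ) + 1 := by push_cast; ring
      rw [this]
      exact h4
  exact no_infinite_string B hsymB hposB R₁ hA1 hA2 α β hβ d
    (sub_ne_zero.mpr hnm) hmem

/-- An isomorphism of LEARS maps radical onto radical. -/
theorem isomorphism_of_LEARS_maps_radical_onto_radical
    {V W : Type*} [AddCommGroup V] [Module ℚ V] [AddCommGroup W] [Module ℚ W]
    (B : LinearMap.BilinForm ℚ V) (C : LinearMap.BilinForm ℚ W)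
    (hsymB : ∀ x y : V, B x y = B y x) (hposB : ∀ x : V, 0 ≤ B x x)
    (hsymC : ∀ x y : W, C x y = C y x) (hposC : ∀ x : W, 0 ≤ C x x)
    (R₁ : Set V) (R₂ : Set W)
    (h₁ : IsLEARS B R₁) (h₂ : IsLEARS C R₂)
    (φ : V ≃ₗ[ℚ] W) (hφ : ⇑φ '' R₁ = R₂) :
    Submodule.map (φ : V →ₗ[ℚ] W) (LinearMap.ker B) = LinearMap.ker C := by
  have hmem2 : ∀ x, x ∈ R₁ → φ x ∈ R₂ := fun x hx => hφ ▸ ⟨x, hx, rfl⟩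
  have key : ∀ v : V, ∀ β ∈ R₁,
      C (φ v) (φ β) * B β β = B v β * C (φ β) (φ β) := by
    intro v β hβ
    have hv : v ∈ Submodule.span ℚ R₁ := h₁.2.1 ▸ Submodule.mem_top
    induction hv using Submodule.span_induction with
    | mem x hx =>
        have hc := cartan_eq B C hsymB hposB R₁ R₂ h₁ h₂ φ hφ x hx β hβ
        have hbb := h₁.1 β hβ
        have hcc := h₂.1 (φ β) (hmem2 β hβ)
        have := (div_eq_div_iff hbb hcc).mp hc
        linarith
    | zero => simp
    | add x y hx hy ihx ihy =>
        simp only [map_add, LinearMap.add_apply]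
        linarith
    | smul a x hx ih =>
        simp only [map_smul, LinearMap.smul_apply, smul_eq_mul]
        linear_combination a * ih
  refine le_antisymm ?_ ?_
  · rintro w ⟨v, hv, rfl⟩
    simp only [SetLike.mem_coe, LinearMap.mem_ker] at hv
    rw [LinearMap.mem_ker]
    apply LinearMap.ext_on h₂.2.1
    intro w hw
    rw [← hφ] at hw
    obtain ⟨β, hβ, rfl⟩ := hw
    have hk := key v β hβ
    rw [hv] at hk
    simp only [LinearMap.zero_apply, zero_mul] at hk
    have hbb := h₁.1 β hβ
    simpa using (mul_eq_zero.mp hk).resolve_right hbb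
  · intro w hw
    rw [LinearMap.mem_ker] at hw
    refine ⟨φ.symm w, ?_, by simp⟩
    simp only [SetLike.mem_coe, LinearMap.mem_ker]
    apply LinearMap.ext_on h₁.2.1
    intro β hβ
    have hk := key (φ.symm w) β hβ
    rw [φ.apply_symm_apply w, hw] at hk
    simp only [LinearMap.zero_apply, zero_mul] at hk
    have hcc := h₂.1 (φ β) (hmem2 β hβ)
    simpa using (mul_eq_zero.mp hk.symm).resolve_right hcc
end
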